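/- arXiv:1804.06097 — 6 statements merged into one kernel-verified Lean document; each statement's English description precedes it below -/
import Mathlib

section
/- Let E ⊂ ℝⁿ be Lebesgue measurable with 0 < |E| < ∞, let κ ≥ 0, and let q : E → (1,∞) be measurable with 1 < q⁻ := ess inf q ≤ ess sup q =: q⁺ < ∞. Then the map λ : ℝ^{N×n} → ℝ^{N×n} defined by λ(Q) := (⨍_E (κ + |Q|)^{(q(x)−2)/2} dx) · Q is surjective; that is, for every G ∈ ℝ^{N×n} there exists Q ∈ ℝ^{N×n} with ⨍_E (κ + |Q|)^{(q(x)−2)/2} Q dx = G. -/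
open MeasureTheory Set Filter Topology

private lemma rpow_le_max' {x el eu e : ℝ} (hx : 0 < x) (h1 : el ≤ e) (h2 : e ≤ eu) :
    x ^ e ≤ max (x ^ el) (x ^ eu) := by
  rcases le_total x 1 with h | h
  · exact le_max_of_le_left (Real.rpow_le_rpow_of_exponent_ge hx h h1)
  · exact le_max_of_le_right (Real.rpow_le_rpow_of_exponent_le h h2)

private lemma min_le_rpow' {x el eu e : ℝ} (hx : 0 < x) (h1 : el ≤ e) (h2 : e ≤ eu) :
    min (x ^ el) (x ^ eu) ≤ x ^ e := by
  rcases le_total x 1 with h | h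
  · exact min_le_of_right_le (Real.rpow_le_rpow_of_exponent_ge hx h h2)
  · exact min_le_of_left_le (Real.rpow_le_rpow_of_exponent_le h h1)

private lemma rpow_base_le_max' {a b x p : ℝ} (ha : 0 < a) (h1 : a ≤ x) (h2 : x ≤ b) :
    x ^ p ≤ max (a ^ p) (b ^ p) := by
  rcases le_total 0 p with hp | hp
  · exact le_max_of_le_right (Real.rpow_le_rpow (le_trans ha.le h1) h2 hp)
  · exact le_max_of_le_left (Real.rpow_le_rpow_of_nonpos ha h1 hp)

private lemma aux_small' {κ p : ℝ} (hκ : 0 ≤ κ) (hp : -1 < p) :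
    Tendsto (fun t : ℝ => t * (κ + t) ^ p) (𝓝[>] (0:ℝ)) (𝓝 0) := by
  rcases hκ.eq_or_lt with h | h
  · have heq : ∀ t ∈ Set.Ioi (0:ℝ), t ^ (1 + p) = t * (κ + t) ^ p := by
      intro t ht
      rw [← h, zero_add, Real.rpow_add ht, Real.rpow_one]
    have hc : ContinuousAt (fun t : ℝ => t ^ (1+p)) 0 :=
      Real.continuousAt_rpow_const 0 (1+p) (Or.inr (by linarith))
    have htend : Tendsto (fun t : ℝ => t ^ (1+p)) (𝓝[>] (0:ℝ)) (𝓝 0) := by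
      have h2 : Tendsto (fun t : ℝ => t ^ (1+p)) (𝓝[>] (0:ℝ)) (𝓝 ((0:ℝ) ^ (1+p))) :=
        hc.tendsto.mono_left (nhdsWithin_le_nhds)
      rwa [Real.zero_rpow (by linarith : 1 + p ≠ 0)] at h2
    exact htend.congr' (eventually_nhdsWithin_of_forall heq)
  · have hc : ContinuousAt (fun t : ℝ => t * (κ + t) ^ p) 0 := by
      apply continuousAt_id.mul
      exact ((continuousAt_const.add continuousAt_id).rpow_const
        (Or.inl (by linarith : (0:ℝ) < κ + 0).ne'))
    have h2 : Tendsto (fun t : ℝ => t * (κ + t) ^ p) (𝓝[>] (0:ℝ)) (𝓝 ((0:ℝ) * (κ + 0) ^ p)) :=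
      hc.tendsto.mono_left (nhdsWithin_le_nhds)
    simpa using h2


/-- (Surjectivity of the averaged map `λ(Q) = (⨍_E (κ+|Q|)^{(q−2)/2}) Q`.)
Let `E ⊂ ℝⁿ` be measurable with `0 < |E| < ∞`, `κ ≥ 0`, and `q : E → (1,∞)` measurable
with `1 < q⁻ ≤ q⁺ < ∞`. Then for every `G ∈ ℝ^{N×n}` there exists `Q ∈ ℝ^{N×n}` with
`(⨍_E (κ + |Q|)^{(q(x)−2)/2} dx) • Q = G`. -/
theorem stmt10 (N n : ℕ) (E : Set (EuclideanSpace ℝ (Fin n)))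
    (hE : MeasurableSet E) (h0 : 0 < volume E) (hfin : volume E < ⊤)
    (κ : ℝ) (hκ : 0 ≤ κ)
    (q : EuclideanSpace ℝ (Fin n) → ℝ) (hq : Measurable q)
    (qminus qplus : ℝ) (h1 : 1 < qminus) (h2 : qminus ≤ qplus)
    (hb : ∀ᵐ x ∂(volume.restrict E), qminus ≤ q x ∧ q x ≤ qplus) :
    ∀ G : EuclideanSpace ℝ (Fin N × Fin n),
      ∃ Q : EuclideanSpace ℝ (Fin N × Fin n),
        (⨍ x in E, (κ + ‖Q‖) ^ ((q x - 2) / 2)) • Q = G := by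
  intro G
  by_cases hG : G = 0
  · exact ⟨0, by simp [hG]⟩
  have hGn : 0 < ‖G‖ := norm_pos_iff.mpr hG
  set el : ℝ := (qminus - 2)/2 with hel_def
  set eu : ℝ := (qplus - 2)/2 with heu_def
  have hel : -1 < el := by rw [hel_def]; linarith
  have hele : el ≤ eu := by rw [hel_def, heu_def]; linarith
  have heu : -1 < eu := lt_of_lt_of_le hel hele
  set μ := volume.restrict E with hμ_def
  haveI : IsFiniteMeasure μ := ⟨by rw [hμ_def, Measure.restrict_apply_univ]; exact hfin⟩
  set C := (volume E).toReal with hC_def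
  have hC : 0 < C := ENNReal.toReal_pos h0.ne' hfin.ne
  have hbe : ∀ᵐ x ∂μ, el ≤ (q x - 2)/2 ∧ (q x - 2)/2 ≤ eu := by
    filter_upwards [hb] with x hx
    constructor
    · rw [hel_def]; linarith [hx.1]
    · rw [heu_def]; linarith [hx.2]
  -- measurability of the integrand for t with κ + t > 0
  have hmeas : ∀ t : ℝ, 0 < κ + t →
      AEStronglyMeasurable (fun x => (κ + t) ^ ((q x - 2)/2)) μ := by
    intro t ht
    have : (fun x => (κ + t) ^ ((q x - 2)/2)) =
        fun x => Real.exp (Real.log (κ + t) * ((q x - 2)/2)) := by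
      funext x; rw [Real.rpow_def_of_pos ht]
    rw [this]
    exact ((measurable_const.mul ((hq.sub measurable_const).div_const 2)).exp).aestronglyMeasurable
  -- integrability
  have hInt : ∀ t : ℝ, 0 < t → Integrable (fun x => (κ + t) ^ ((q x - 2)/2)) μ := by
    intro t ht
    have hκt : 0 < κ + t := by linarith
    refine (integrable_const (max ((κ+t)^el) ((κ+t)^eu))).mono' (hmeas t hκt) ?_
    filter_upwards [hbe] with x hx
    rw [Real.norm_eq_abs, abs_of_nonneg (Real.rpow_nonneg hκt.le _)]
    exact rpow_le_max' hκt hx.1 hx.2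
  set A : ℝ → ℝ := fun t => ⨍ x in E, (κ + t) ^ ((q x - 2)/2) with hA_def
  have hA_eq : ∀ t : ℝ, A t = C⁻¹ * ∫ x in E, (κ + t) ^ ((q x - 2)/2) := by
    intro t
    show (⨍ x in E, (κ + t) ^ ((q x - 2)/2)) = C⁻¹ * ∫ x in E, (κ + t) ^ ((q x - 2)/2)
    rw [setAverage_eq]
    simp [hC_def, smul_eq_mul]
    exact Or.inl rfl
  -- bounds on A
  have hA_ub : ∀ t : ℝ, 0 < t → A t ≤ max ((κ+t)^el) ((κ+t)^eu) := by
    intro t ht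
    have hκt : 0 < κ + t := by linarith
    rw [hA_eq]
    have hint : (∫ x, (κ+t)^((q x - 2)/2) ∂μ) ≤ ∫ _x, max ((κ+t)^el) ((κ+t)^eu) ∂μ := by
      refine integral_mono_ae (hInt t ht) (integrable_const _) ?_
      filter_upwards [hbe] with x hx
      exact rpow_le_max' hκt hx.1 hx.2
    rw [integral_const] at hint
    have hμuniv : μ.real Set.univ = C := by
      show (μ Set.univ).toReal = C
      rw [hμ_def, Measure.restrict_apply_univ, hC_def]
    rw [hμuniv, smul_eq_mul] at hint
    calc C⁻¹ * ∫ x in E, (κ+t)^((q x - 2)/2) ≤ C⁻¹ * (C * max ((κ+t)^el) ((κ+t)^eu)) := by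
          apply mul_le_mul_of_nonneg_left hint (inv_nonneg.mpr hC.le)
      _ = max ((κ+t)^el) ((κ+t)^eu) := by field_simp
  have hA_lb : ∀ t : ℝ, 0 < t → min ((κ+t)^el) ((κ+t)^eu) ≤ A t := by
    intro t ht
    have hκt : 0 < κ + t := by linarith
    rw [hA_eq]
    have hint : (∫ _x, min ((κ+t)^el) ((κ+t)^eu) ∂μ) ≤ ∫ x, (κ+t)^((q x - 2)/2) ∂μ := by
      refine integral_mono_ae (integrable_const _) (hInt t ht) ?_
      filter_upwards [hbe] with x hx
      exact min_le_rpow' hκt hx.1 hx.2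
    rw [integral_const] at hint
    have hμuniv : μ.real Set.univ = C := by
      show (μ Set.univ).toReal = C
      rw [hμ_def, Measure.restrict_apply_univ, hC_def]
    rw [hμuniv, smul_eq_mul] at hint
    calc min ((κ+t)^el) ((κ+t)^eu) = C⁻¹ * (C * min ((κ+t)^el) ((κ+t)^eu)) := by field_simp
      _ ≤ C⁻¹ * ∫ x in E, (κ+t)^((q x - 2)/2) :=
          mul_le_mul_of_nonneg_left hint (inv_nonneg.mpr hC.le)
  -- continuity of A on (0, ∞)
  have hA_cont : ∀ t₀ : ℝ, 0 < t₀ → ContinuousAt A t₀ := by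
    intro t₀ ht₀
    have ha : 0 < κ + t₀/2 := by linarith
    set a := κ + t₀/2 with ha_def
    set b := κ + (t₀+1) with hb_def
    set M : ℝ := max (max (a^el) (b^el)) (max (a^eu) (b^eu)) with hM_def
    have hnbhd : Set.Ioo (t₀/2) (t₀+1) ∈ 𝓝 t₀ :=
      Ioo_mem_nhds (by linarith) (by linarith)
    have key : ContinuousAt (fun t => ∫ x, (κ+t)^((q x - 2)/2) ∂μ) t₀ := by
      apply continuousAt_of_dominated (bound := fun _ => M)
      · filter_upwards [hnbhd] with t ht
        exact hmeas t (by have := ht.1; linarith)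
      · filter_upwards [hnbhd] with t ht
        filter_upwards [hbe] with x hx
        have h1 : 0 < κ + t := by have := ht.1; linarith
        rw [Real.norm_eq_abs, abs_of_nonneg (Real.rpow_nonneg h1.le _)]
        have hax : a ≤ κ + t := by rw [ha_def]; linarith [ht.1]
        have hxb : κ + t ≤ b := by rw [hb_def]; linarith [ht.2]
        calc (κ+t)^((q x - 2)/2) ≤ max ((κ+t)^el) ((κ+t)^eu) := rpow_le_max' h1 hx.1 hx.2
          _ ≤ M := by
              rw [hM_def]
              exact max_le_max (rpow_base_le_max' ha hax hxb) (rpow_base_le_max' ha hax hxb)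
      · exact integrable_const M
      · refine Eventually.of_forall fun x => ?_
        exact (continuousAt_const.add continuousAt_id).rpow_const
          (Or.inl (by linarith : (0:ℝ) < κ + t₀).ne')
    have hfun : A = fun t => C⁻¹ * ∫ x, (κ+t)^((q x - 2)/2) ∂μ := funext hA_eq
    rw [hfun]
    exact continuousAt_const.mul key
  set F : ℝ → ℝ := fun t => t * A t with hF_def
  -- small values
  obtain ⟨ε, hεsm, hε0, hε1⟩ :
      ∃ ε : ℝ, ε * ((κ+ε)^el + (κ+ε)^eu) < ‖G‖ ∧ 0 < ε ∧ ε < 1 := by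
    have hsum : Tendsto (fun t : ℝ => t * ((κ+t)^el + (κ+t)^eu)) (𝓝[>] (0:ℝ)) (𝓝 0) := by
      have h1 := aux_small' hκ hel
      have h2 := aux_small' hκ heu
      have := h1.add h2
      simp only [add_zero] at this
      refine this.congr fun t => by ring
    have h3 : ∀ᶠ t in 𝓝[>] (0:ℝ), t * ((κ+t)^el + (κ+t)^eu) < ‖G‖ :=
      hsum.eventually_lt_const hGn
    have h4 : ∀ᶠ t in 𝓝[>] (0:ℝ), 0 < t ∧ t < 1 := by
      have : Set.Ioo (0:ℝ) 1 ∈ 𝓝[>] (0:ℝ) := Ioo_mem_nhdsGT_of_mem ⟨le_refl _, one_pos⟩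
      filter_upwards [this] with t ht; exact ⟨ht.1, ht.2⟩
    obtain ⟨ε, hε1', hε2'⟩ := (h3.and h4).exists
    exact ⟨ε, hε1', hε2'.1, hε2'.2⟩
  have hFε : F ε < ‖G‖ := by
    rw [hF_def]
    have hκε : 0 < κ + ε := by linarith
    have := hA_ub ε hε0
    have hmaxsum : max ((κ+ε)^el) ((κ+ε)^eu) ≤ (κ+ε)^el + (κ+ε)^eu :=
      max_le (le_add_of_nonneg_right (Real.rpow_nonneg hκε.le _))
        (le_add_of_nonneg_left (Real.rpow_nonneg hκε.le _))
    calc ε * A ε ≤ ε * ((κ+ε)^el + (κ+ε)^eu) :=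
          mul_le_mul_of_nonneg_left (le_trans this hmaxsum) hε0.le
      _ < ‖G‖ := hεsm
  -- large values : F tends to atTop
  have hFtop : Tendsto F atTop atTop := by
    have hlow : ∀ t : ℝ, 1 ≤ t → t * (κ+t)^el ≤ F t := by
      intro t ht
      have ht0 : 0 < t := by linarith
      have hκt : 0 < κ + t := by linarith
      have h1t : (1:ℝ) ≤ κ + t := by linarith
      have hmin : min ((κ+t)^el) ((κ+t)^eu) = (κ+t)^el :=
        min_eq_left (Real.rpow_le_rpow_of_exponent_le h1t hele)
      have := hA_lb t ht0
      rw [hmin] at this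
      rw [hF_def]
      exact mul_le_mul_of_nonneg_left this ht0.le
    rcases le_or_gt el 0 with hsign | hsign
    · -- F t ≥ (κ+1)^el * t^(1+el)
      have hlow2 : ∀ t : ℝ, 1 ≤ t → (κ+1)^el * t^(1+el) ≤ F t := by
        intro t ht
        have ht0 : 0 < t := by linarith
        refine le_trans ?_ (hlow t ht)
        have hle : κ + t ≤ (κ+1) * t := by nlinarith
        have h3 : ((κ+1)*t)^el ≤ (κ+t)^el :=
          Real.rpow_le_rpow_of_nonpos (by linarith) hle hsign
        have h4 : ((κ+1)*t)^el = (κ+1)^el * t^el :=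
          Real.mul_rpow (by linarith) ht0.le
        have h5 : t^(1+el) = t * t^el := by
          rw [Real.rpow_add ht0, Real.rpow_one]
        rw [h5]
        calc (κ+1)^el * (t * t^el) = t * ((κ+1)^el * t^el) := by ring
          _ ≤ t * (κ+t)^el := by
              rw [← h4]
              exact mul_le_mul_of_nonneg_left h3 ht0.le
      have htt : Tendsto (fun t : ℝ => (κ+1)^el * t^(1+el)) atTop atTop :=
        (tendsto_rpow_atTop (by linarith : (0:ℝ) < 1+el)).const_mul_atTop
          (Real.rpow_pos_of_pos (by linarith) el)
      exact tendsto_atTop_mono' atTop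
        (eventually_atTop.mpr ⟨1, fun t ht => hlow2 t ht⟩) htt
    · -- F t ≥ t
      have hlow2 : ∀ t : ℝ, 1 ≤ t → t ≤ F t := by
        intro t ht
        refine le_trans ?_ (hlow t ht)
        have h1t : (1:ℝ) ≤ κ + t := by linarith
        have : (1:ℝ) ≤ (κ+t)^el := by
          calc (1:ℝ) = 1 ^ el := (Real.one_rpow el).symm
            _ ≤ (κ+t)^el := Real.rpow_le_rpow zero_le_one h1t hsign.le
        nlinarith
      exact tendsto_atTop_mono' atTop
        (eventually_atTop.mpr ⟨1, fun t ht => hlow2 t ht⟩) tendsto_id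
  obtain ⟨T, hT1, hT2⟩ := ((hFtop.eventually_ge_atTop ‖G‖).and (eventually_ge_atTop ε)).exists
  -- intermediate value theorem
  have hFcont : ContinuousOn F (Set.Icc ε T) := by
    intro t ht
    have ht0 : 0 < t := lt_of_lt_of_le hε0 ht.1
    exact (continuousAt_id.mul (hA_cont t ht0)).continuousWithinAt
  have hmem : ‖G‖ ∈ Set.Icc (F ε) (F T) := ⟨hFε.le, hT1⟩
  obtain ⟨r, hrmem, hFr⟩ := intermediate_value_Icc hT2 hFcont hmem
  have hr0 : 0 < r := lt_of_lt_of_le hε0 hrmem.1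
  refine ⟨(r / ‖G‖) • G, ?_⟩
  have hnorm : ‖(r / ‖G‖) • G‖ = r := by
    rw [norm_smul, Real.norm_eq_abs, abs_of_pos (div_pos hr0 hGn),
      div_mul_cancel₀ _ hGn.ne']
  rw [hnorm]
  have hAr : (⨍ x in E, (κ + r) ^ ((q x - 2) / 2)) = A r := by rw [hA_def]
  rw [hAr, smul_smul]
  have hscal : A r * (r / ‖G‖) = 1 := by
    have hFr' : r * A r = ‖G‖ := hFr
    field_simp
    linarith [hFr']
  rw [hscal, one_smul]
end

section
/- Let q ∈ (1,∞) and κ ≥ 0. There are constants 0 < c ≤ C < ∞ depending only on q such that for all P, Q ∈ ℝ^{N×n} with κ + |P| + |Q| > 0: c (κ+|P|+|Q|)^{q−2} |P−Q|² ≤ (S(P) − S(Q)) : (P − Q) ≤ C (κ+|P|+|Q|)^{q−2} |P−Q|², and likewise c (κ+|P|+|Q|)^{q−2} |P−Q|² ≤ |F(P) − F(Q)|² ≤ C (κ+|P|+|Q|)^{q−2} |P−Q|². -/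
open scoped RealInnerProductSpace

namespace Stmt11Aux

/-- Lower bound: `min 1 (p+1) * a^p * (x-y) ≤ a^p x - b^p y`. -/
lemma lemA {p κ x y : ℝ} (hp : -1 < p) (hκ : 0 ≤ κ) (hy : 0 ≤ y)
    (hyx : y ≤ x) (ha : 0 < κ + x) :
    min 1 (p+1) * ((κ+x)^p * (x-y)) ≤ (κ+x)^p * x - (κ+y)^p * y := by
  have hx : 0 ≤ x := hy.trans hyx
  have hb : (0:ℝ) ≤ κ + y := by linarith
  have hba : κ + y ≤ κ + x := by linarith
  have hA : 0 < (κ+x)^p := Real.rpow_pos_of_pos ha p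
  have hmin1 : min 1 (p+1) ≤ 1 := min_le_left _ _
  rcases le_or_gt 0 p with h0 | h0
  · have hts : (κ+y)^p ≤ (κ+x)^p := Real.rpow_le_rpow hb hba h0
    have h1 : (κ+y)^p * y ≤ (κ+x)^p * y := mul_le_mul_of_nonneg_right hts hy
    nlinarith [mul_nonneg hA.le (sub_nonneg.2 hyx), mul_nonneg hA.le hy]
  · rcases eq_or_lt_of_le hb with hb0 | hb0
    · have hy0 : y = 0 := by linarith
      have ht0 : (κ+y)^p * y = 0 := by rw [hy0, mul_zero]
      rw [ht0]
      nlinarith [mul_nonneg hA.le hx, mul_nonneg hA.le (sub_nonneg.2 hyx)]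
    · set a := κ + x with hadef
      set b := κ + y with hbdef
      have hmin : min 1 (p+1) = p + 1 := min_eq_right (by linarith)
      have hr0 : 0 < b / a := div_pos hb0 ha
      have hr1 : b / a ≤ 1 := (div_le_one ha).2 hba
      -- Bernoulli (concave version): (b/a)^(p+1) ≤ 1 + (p+1)*(b/a - 1)
      have hbern : (b/a)^(p+1) ≤ (p+1) * (b/a) - p := by
        have h := rpow_one_add_le_one_add_mul_self (s := b/a - 1)
          (by linarith) (p := p+1) (by linarith) (by linarith)
        have e : (1 : ℝ) + (b/a - 1) = b/a := by ring
        rw [e] at h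
        nlinarith [h]
      have hbp : b^p = a^p * (b/a)^p := by
        have e : b = a * (b/a) := by field_simp
        rw [e, Real.mul_rpow ha.le hr0.le]
        rw [← e]
      have hsplit : (b/a)^(p+1) = (b/a)^p * (b/a) := by
        rw [Real.rpow_add hr0, Real.rpow_one]
      have hR1 : 1 ≤ (b/a)^p :=
        Real.one_le_rpow_of_pos_of_le_one_of_nonpos hr0 hr1 h0.le
      -- chain: b^p*y - a^p*y ≤ (-p) * a^p * (x - y)
      have hyb : y ≤ b := by rw [hbdef]; linarith
      have hab : a - b = x - y := by rw [hadef, hbdef]; ring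
      have hbmul : a * (b/a) = b := by field_simp
      have key : b^p * y - a^p * y ≤ (-p) * (a^p * (x-y)) := by
        have h1 : b^p * y - a^p * y ≤ (b^p - a^p) * b := by
          nlinarith [hbp, hR1, hA, mul_nonneg hA.le (sub_nonneg.2 hR1)]
        have h2 : (b^p - a^p) * b ≤ (-p) * (a^p * (a - b)) := by
          have e1 : (b^p - a^p) * b = a^p * a * ((b/a)^p * (b/a) - (b/a)) := by
            rw [hbp]; field_simp
          have e2 : (-p) * (a^p * (a-b)) = a^p * a * ((-p) * (1 - b/a)) := by
            field_simp
          rw [e1, e2]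
          have h3 : (b/a)^p * (b/a) - (b/a) ≤ (-p) * (1 - b/a) := by
            rw [← hsplit]; nlinarith [hbern]
          exact mul_le_mul_of_nonneg_left h3 (by positivity)
        rw [hab] at h2; linarith
      rw [hmin]
      nlinarith [key]
  

/-- Lower bound: `(1/2) * a^p * (x+y) ≤ a^p x + b^p y`. -/
lemma lemB {p κ x y : ℝ} (hκ : 0 ≤ κ) (hy : 0 ≤ y)
    (hyx : y ≤ x) (ha : 0 < κ + x) :
    (1/2) * ((κ+x)^p * (x+y)) ≤ (κ+x)^p * x + (κ+y)^p * y := by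
  have hb : (0:ℝ) ≤ κ + y := by linarith
  have hA : 0 < (κ+x)^p := Real.rpow_pos_of_pos ha p
  have hty : 0 ≤ (κ+y)^p * y := mul_nonneg (Real.rpow_nonneg hb p) hy
  nlinarith [mul_nonneg hA.le (sub_nonneg.2 hyx)]

/-- Upper bound: `a^p x - b^p y ≤ (1 + max 1 p) * a^p * (x-y)`. -/
lemma lemC {p κ x y : ℝ} (hκ : 0 ≤ κ) (hy : 0 ≤ y)
    (hyx : y ≤ x) (ha : 0 < κ + x) :
    (κ+x)^p * x - (κ+y)^p * y ≤ (1 + max 1 p) * ((κ+x)^p * (x-y)) := by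
  have hx : 0 ≤ x := hy.trans hyx
  have hb : (0:ℝ) ≤ κ + y := by linarith
  have hba : κ + y ≤ κ + x := by linarith
  have hA : 0 < (κ+x)^p := Real.rpow_pos_of_pos ha p
  have hmax : 1 ≤ max 1 p := le_max_left _ _
  rcases le_or_gt p 0 with h0 | h0
  · rcases eq_or_lt_of_le hb with hb0 | hb0
    · have hy0 : y = 0 := by linarith
      subst hy0
      simp only [mul_zero, sub_zero, sub_self]
      nlinarith [mul_nonneg hA.le hx, mul_nonneg (sub_nonneg.2 hmax) (mul_nonneg hA.le hx)]
    · have hst : (κ+x)^p ≤ (κ+y)^p := Real.rpow_le_rpow_of_nonpos hb0 hba h0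
      have h1 : (κ+x)^p * y ≤ (κ+y)^p * y := mul_le_mul_of_nonneg_right hst hy
      nlinarith [mul_nonneg hA.le (sub_nonneg.2 hyx)]
  · -- p > 0 : key: a*(a^p - b^p) ≤ max 1 p * (a^p * (a-b))
    set a := κ + x with hadef
    set b := κ + y with hbdef
    have hyb : y ≤ b := by rw [hbdef]; linarith
    have hab : a - b = x - y := by rw [hadef, hbdef]; ring
    have hst : b^p ≤ a^p := Real.rpow_le_rpow hb hba h0.le
    have key : a * (a^p - b^p) ≤ max 1 p * (a^p * (a-b)) := by
      rcases le_or_gt p 1 with hp1 | hp1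
      · -- a^p * b ≤ a * b^p
        have hm : max 1 p = 1 := max_eq_left hp1
        have h1 : a^p * b ≤ a * b^p := by
          rcases eq_or_lt_of_le hb with hb0 | hb0
          · have hb0' : b = 0 := hb0.symm
            rw [hb0', Real.zero_rpow h0.ne', mul_zero, mul_zero]
          · have hab1 : 1 ≤ a / b := (one_le_div hb0).2 hba
            have h2 : (a/b)^p ≤ (a/b)^(1:ℝ) :=
              Real.rpow_le_rpow_of_exponent_le hab1 hp1
            rw [Real.rpow_one, Real.div_rpow ha.le hb0.le] at h2
            rw [div_le_div_iff₀ (Real.rpow_pos_of_pos hb0 p) hb0] at h2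
            linarith [h2]
        rw [hm]; nlinarith [h1]
      · -- Bernoulli: 1 + p*(b/a - 1) ≤ (b/a)^p
        have hm : max 1 p = p := max_eq_right hp1.le
        have hbern := one_add_mul_self_le_rpow_one_add (s := b/a - 1)
          (by have : (0:ℝ) ≤ b/a := by positivity
              linarith) hp1.le
        have e : (1 : ℝ) + (b/a - 1) = b/a := by ring
        rw [e] at hbern
        have hbp : b^p = a^p * (b/a)^p := by
          rw [← Real.mul_rpow ha.le (by positivity)]
          congr 1
          field_simp
        rw [hm, hbp]
        have : a * (1 + p * (b/a - 1)) ≤ a * (b/a)^p :=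
          mul_le_mul_of_nonneg_left hbern ha.le
        have e3 : a * (1 + p * (b/a-1)) = a + p * (b - a) := by field_simp
        rw [e3] at this
        nlinarith [this, hA]
    have h2 : (a^p - b^p) * y ≤ (a^p - b^p) * a := by
      apply mul_le_mul_of_nonneg_left _ (sub_nonneg.2 hst)
      rw [hadef]; linarith
    have h3 : a * (a^p - b^p) ≤ max 1 p * (a^p * (x-y)) := by rw [← hab]; exact key
    nlinarith [mul_nonneg hA.le (sub_nonneg.2 hyx)]

/-- Upper bound: `a^p x + b^p y ≤ 2 * a^p * (x+y)`. -/
lemma lemD {p κ x y : ℝ} (hp : -1 < p) (hκ : 0 ≤ κ) (hy : 0 ≤ y)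
    (hyx : y ≤ x) (ha : 0 < κ + x) :
    (κ+x)^p * x + (κ+y)^p * y ≤ 2 * ((κ+x)^p * (x+y)) := by
  have hx : 0 ≤ x := hy.trans hyx
  have hb : (0:ℝ) ≤ κ + y := by linarith
  have hba : κ + y ≤ κ + x := by linarith
  have hA : 0 < (κ+x)^p := Real.rpow_pos_of_pos ha p
  rcases le_or_gt 0 p with h0 | h0
  · have hst : (κ+y)^p ≤ (κ+x)^p := Real.rpow_le_rpow hb hba h0
    have h1 : (κ+y)^p * y ≤ (κ+x)^p * y := mul_le_mul_of_nonneg_right hst hy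
    nlinarith [mul_nonneg hA.le hx, mul_nonneg hA.le hy]
  · -- p < 0: key: b^p * y ≤ a^p * x
    rcases eq_or_lt_of_le hy with hy0 | hy0
    · rw [← hy0, mul_zero]
      nlinarith [mul_nonneg hA.le hx]
    · set a := κ + x with hadef
      set b := κ + y with hbdef
      have hb0 : 0 < b := by rw [hbdef]; linarith
      have hx0 : 0 < x := lt_of_lt_of_le hy0 hyx
      have key : b^p * y ≤ a^p * x := by
        have h1 : a / b ≤ x / y := by
          rw [div_le_div_iff₀ hb0 hy0, hadef, hbdef]; nlinarith
        have h2 : (a/b)^(-p) ≤ (x/y)^(-p) :=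
          Real.rpow_le_rpow (by positivity) h1 (by linarith)
        have h3 : (x/y)^(-p) ≤ (x/y)^(1:ℝ) := by
          apply Real.rpow_le_rpow_of_exponent_le ((one_le_div hy0).2 hyx)
          linarith
        rw [Real.rpow_one] at h3
        have h4 : (b/a)^p = (a/b)^(-p) := by
          rw [Real.rpow_neg (by positivity : (0:ℝ) ≤ a/b),
            ← Real.inv_rpow (by positivity : (0:ℝ) ≤ a/b), inv_div]
        have hbp : b^p = a^p * (b/a)^p := by
          have e2 : b = a * (b/a) := by field_simp
          rw [e2, Real.mul_rpow ha.le (by positivity)]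
          rw [← e2]
        have h5 : (b/a)^p ≤ x / y := by rw [h4]; linarith
        calc b^p * y = a^p * (b/a)^p * y := by rw [hbp]
          _ ≤ a^p * (x/y) * y := by
              apply mul_le_mul_of_nonneg_right _ hy
              exact mul_le_mul_of_nonneg_left h5 hA.le
          _ = a^p * x := by field_simp
      nlinarith [mul_nonneg hA.le hx, mul_nonneg hA.le hy]


/-- An affine function nonnegative at both endpoints is nonnegative in between. -/
lemma affine {A B z w : ℝ} (h1 : -w ≤ z) (h2 : z ≤ w)
    (e1 : 0 ≤ A + B*w) (e2 : 0 ≤ A - B*w) : 0 ≤ A + B*z := by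
  rcases le_total 0 B with h | h <;> nlinarith

/-- Quadratic assembly for the `S` part. -/
lemma quadS {s t S x y z cL CU : ℝ} (hy : 0 ≤ y) (hyx : y ≤ x) (hS : 0 ≤ S)
    (hz1 : -(x*y) ≤ z) (hz2 : z ≤ x*y)
    (hA : cL * (S*(x-y)) ≤ s*x - t*y) (hB : cL * (S*(x+y)) ≤ s*x + t*y)
    (hC : s*x - t*y ≤ CU * (S*(x-y))) (hD : s*x + t*y ≤ CU * (S*(x+y))) :
    cL * (S * (x^2+y^2-2*z)) ≤ s*x^2 + t*y^2 - (s+t)*z ∧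
      s*x^2 + t*y^2 - (s+t)*z ≤ CU * (S * (x^2+y^2-2*z)) := by
  have hxy1 : (0:ℝ) ≤ x - y := by linarith
  have hxy2 : (0:ℝ) ≤ x + y := by linarith
  constructor
  · have e1 : 0 ≤ (s*x^2 + t*y^2 - cL*(S*(x^2+y^2))) + (2*cL*S - (s+t))*(x*y) := by
      have := mul_le_mul_of_nonneg_right hA hxy1
      linarith [this]
    have e2 : 0 ≤ (s*x^2 + t*y^2 - cL*(S*(x^2+y^2))) - (2*cL*S - (s+t))*(x*y) := by
      have := mul_le_mul_of_nonneg_right hB hxy2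
      linarith [this]
    have := affine hz1 hz2 e1 e2
    linarith [this]
  · have e1 : 0 ≤ (CU*(S*(x^2+y^2)) - s*x^2 - t*y^2) + ((s+t) - 2*CU*S)*(x*y) := by
      have := mul_le_mul_of_nonneg_right hC hxy1
      linarith [this]
    have e2 : 0 ≤ (CU*(S*(x^2+y^2)) - s*x^2 - t*y^2) - ((s+t) - 2*CU*S)*(x*y) := by
      have := mul_le_mul_of_nonneg_right hD hxy2
      linarith [this]
    have := affine hz1 hz2 e1 e2
    linarith [this]

/-- Quadratic assembly for the `F` part. -/
lemma quadF {σ τ S x y z cL CU : ℝ} (hy : 0 ≤ y) (hyx : y ≤ x) (hS : 0 ≤ S)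
    (hcL : 0 ≤ cL)
    (hz1 : -(x*y) ≤ z) (hz2 : z ≤ x*y)
    (hA : cL * (S*(x-y)) ≤ σ*x - τ*y) (hB : cL * (S*(x+y)) ≤ σ*x + τ*y)
    (hC : σ*x - τ*y ≤ CU * (S*(x-y))) (hD : σ*x + τ*y ≤ CU * (S*(x+y))) :
    cL^2 * (S^2 * (x^2+y^2-2*z)) ≤ σ^2*x^2 + τ^2*y^2 - 2*(σ*τ)*z ∧
      σ^2*x^2 + τ^2*y^2 - 2*(σ*τ)*z ≤ CU^2 * (S^2 * (x^2+y^2-2*z)) := by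
  have hxy1 : (0:ℝ) ≤ x - y := by linarith
  have hxy2 : (0:ℝ) ≤ x + y := by linarith
  have hn1 : 0 ≤ cL * (S*(x-y)) := by positivity
  have hn2 : 0 ≤ cL * (S*(x+y)) := by positivity
  -- squared endpoint bounds
  have sqA : (cL*(S*(x-y)))^2 ≤ (σ*x - τ*y)^2 := pow_le_pow_left₀ hn1 hA 2
  have sqB : (cL*(S*(x+y)))^2 ≤ (σ*x + τ*y)^2 := pow_le_pow_left₀ hn2 hB 2
  have sqC : (σ*x - τ*y)^2 ≤ (CU*(S*(x-y)))^2 := pow_le_pow_left₀ (hn1.trans hA) hC 2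
  have sqD : (σ*x + τ*y)^2 ≤ (CU*(S*(x+y)))^2 := pow_le_pow_left₀ (hn2.trans hB) hD 2
  constructor
  · have e1 : 0 ≤ (σ^2*x^2 + τ^2*y^2 - cL^2*(S^2*(x^2+y^2))) + (2*cL^2*S^2 - 2*(σ*τ))*(x*y) := by
      nlinarith [sqA]
    have e2 : 0 ≤ (σ^2*x^2 + τ^2*y^2 - cL^2*(S^2*(x^2+y^2))) - (2*cL^2*S^2 - 2*(σ*τ))*(x*y) := by
      nlinarith [sqB]
    have := affine hz1 hz2 e1 e2
    linarith [this]
  · have e1 : 0 ≤ (CU^2*(S^2*(x^2+y^2)) - σ^2*x^2 - τ^2*y^2) + (2*(σ*τ) - 2*CU^2*S^2)*(x*y) := by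
      nlinarith [sqC]
    have e2 : 0 ≤ (CU^2*(S^2*(x^2+y^2)) - σ^2*x^2 - τ^2*y^2) - (2*(σ*τ) - 2*CU^2*S^2)*(x*y) := by
      nlinarith [sqD]
    have := affine hz1 hz2 e1 e2
    linarith [this]


/-- Main vector estimate, with the larger of the two norms on the right. -/
lemma vecMain {E : Type*} [NormedAddCommGroup E] [InnerProductSpace ℝ E]
    {p κ : ℝ} (hp : -1 < p) (hκ : 0 ≤ κ) (P Q : E) (hyx : ‖Q‖ ≤ ‖P‖)
    (ha : 0 < κ + ‖P‖) :
    (min (min 1 (p+1)) (1/2) * ((κ+‖P‖)^p * ‖P-Q‖^2) ≤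
        ⟪(κ+‖P‖)^p • P - (κ+‖Q‖)^p • Q, P - Q⟫ ∧
      ⟪(κ+‖P‖)^p • P - (κ+‖Q‖)^p • Q, P - Q⟫ ≤
        max (1 + max 1 p) 2 * ((κ+‖P‖)^p * ‖P-Q‖^2)) ∧
    ((min (min 1 (p/2+1)) (1/2))^2 * ((κ+‖P‖)^p * ‖P-Q‖^2) ≤
        ‖(κ+‖P‖)^(p/2) • P - (κ+‖Q‖)^(p/2) • Q‖^2 ∧
      ‖(κ+‖P‖)^(p/2) • P - (κ+‖Q‖)^(p/2) • Q‖^2 ≤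
        (max (1 + max 1 (p/2)) 2)^2 * ((κ+‖P‖)^p * ‖P-Q‖^2)) := by
  set x := ‖P‖ with hxdef
  set y := ‖Q‖ with hydef
  have hy : 0 ≤ y := norm_nonneg Q
  have hx : 0 ≤ x := norm_nonneg P
  have hz := abs_real_inner_le_norm P Q
  rw [← hxdef, ← hydef] at hz
  have hz1 : -(x*y) ≤ ⟪P, Q⟫ := by
    rcases abs_le.1 hz with ⟨h, _⟩; linarith
  have hz2 : ⟪P, Q⟫ ≤ x*y := (abs_le.1 hz).2
  have hA0 : 0 < (κ+x)^p := Real.rpow_pos_of_pos ha p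
  have expD : ‖P-Q‖^2 = x^2 + y^2 - 2*⟪P, Q⟫ := by
    rw [norm_sub_sq_real, ← hxdef, ← hydef]; ring
  constructor
  · -- S part
    set s := (κ+x)^p with hsdef
    set t := (κ+y)^p with htdef
    have expI : ⟪s • P - t • Q, P - Q⟫ = s*x^2 + t*y^2 - (s+t)*⟪P, Q⟫ := by
      simp only [inner_sub_left, inner_sub_right, real_inner_smul_left,
        real_inner_self_eq_norm_sq]
      rw [real_inner_comm Q P, ← hxdef, ← hydef]; ring
    rw [expI, expD]
    have h2 : p + 1 > 0 := by linarith
    have wA := lemA hp hκ hy hyx ha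
    have wB := lemB (p := p) hκ hy hyx ha
    have wC := lemC (p := p) hκ hy hyx ha
    have wD := lemD hp hκ hy hyx ha
    have hSxy1 : 0 ≤ (κ+x)^p * (x-y) := mul_nonneg hA0.le (by linarith)
    have hSxy2 : 0 ≤ (κ+x)^p * (x+y) := mul_nonneg hA0.le (by linarith)
    refine quadS hy hyx hA0.le hz1 hz2 ?_ ?_ ?_ ?_
    · exact le_trans (mul_le_mul_of_nonneg_right (min_le_left _ _) hSxy1) wA
    · exact le_trans (mul_le_mul_of_nonneg_right (min_le_right _ _) hSxy2) wB
    · exact le_trans wC (mul_le_mul_of_nonneg_right (le_max_left _ _) hSxy1)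
    · exact le_trans wD (mul_le_mul_of_nonneg_right (le_max_right _ _) hSxy2)
  · -- F part
    have hp2 : (-1:ℝ) < p/2 := by linarith
    set σ := (κ+x)^(p/2) with hσdef
    set τ := (κ+y)^(p/2) with hτdef
    have hσ0 : 0 ≤ σ := Real.rpow_nonneg (by linarith) _
    have hτ0 : 0 ≤ τ := Real.rpow_nonneg (by linarith) _
    have hS0 : 0 < (κ+x)^(p/2) := Real.rpow_pos_of_pos ha _
    have hS2 : ((κ+x)^(p/2))^2 = (κ+x)^p := by
      rw [← Real.rpow_natCast ((κ+x)^(p/2)) 2, ← Real.rpow_mul ha.le]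
      norm_num
    have expF : ‖σ • P - τ • Q‖^2 = σ^2*x^2 + τ^2*y^2 - 2*(σ*τ)*⟪P, Q⟫ := by
      rw [norm_sub_sq_real, real_inner_smul_left, real_inner_smul_right,
        norm_smul, norm_smul, Real.norm_eq_abs, Real.norm_eq_abs,
        abs_of_nonneg hσ0, abs_of_nonneg hτ0, mul_pow, mul_pow]
      rw [← hxdef, ← hydef]; ring
    rw [expF, expD]
    have wA := lemA hp2 hκ hy hyx ha
    have wB := lemB (p := p/2) hκ hy hyx ha
    have wC := lemC (p := p/2) hκ hy hyx ha
    have wD := lemD hp2 hκ hy hyx ha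
    have hSxy1 : 0 ≤ (κ+x)^(p/2) * (x-y) := mul_nonneg hS0.le (by linarith)
    have hSxy2 : 0 ≤ (κ+x)^(p/2) * (x+y) := mul_nonneg hS0.le (by linarith)
    have hmincl : (0:ℝ) ≤ min (min 1 (p/2+1)) (1/2) := by
      have : (0:ℝ) < p/2 + 1 := by linarith
      simp only [le_min_iff]
      refine ⟨⟨by norm_num, by linarith⟩, by norm_num⟩
    have main := quadF (σ := σ) (τ := τ) (S := (κ+x)^(p/2))
      hy hyx hS0.le hmincl hz1 hz2
      (le_trans (mul_le_mul_of_nonneg_right (min_le_left _ _) hSxy1) wA)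
      (le_trans (mul_le_mul_of_nonneg_right (min_le_right _ _) hSxy2) wB)
      (le_trans wC (mul_le_mul_of_nonneg_right (le_max_left _ _) hSxy1))
      (le_trans wD (mul_le_mul_of_nonneg_right (le_max_right _ _) hSxy2))
    rw [← hS2]
    exact main

/-- Comparison of `(κ+x)^p` with `(κ+x+y)^p` when `0 ≤ y ≤ x`. -/
lemma conv {p κ x y : ℝ} (hκ : 0 ≤ κ) (hy : 0 ≤ y) (hyx : y ≤ x) (ha : 0 < κ + x) :
    (κ+x+y)^p ≤ (1+(2:ℝ)^p) * (κ+x)^p ∧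
      (κ+x)^p ≤ (1+(2:ℝ)^(-p)) * (κ+x+y)^p := by
  have hM : 0 < κ+x+y := by linarith
  have hMa : κ+x+y ≤ 2*(κ+x) := by linarith
  have haM : κ+x ≤ κ+x+y := by linarith
  have h2p : 0 < (2:ℝ)^p := Real.rpow_pos_of_pos two_pos p
  have h2p' : 0 < (2:ℝ)^(-p) := Real.rpow_pos_of_pos two_pos (-p)
  have hA : 0 < (κ+x)^p := Real.rpow_pos_of_pos ha p
  have hMp : 0 < (κ+x+y)^p := Real.rpow_pos_of_pos hM p
  constructor
  · rcases le_or_gt 0 p with h0 | h0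
    · have h1 : (κ+x+y)^p ≤ (2*(κ+x))^p := Real.rpow_le_rpow hM.le hMa h0
      rw [Real.mul_rpow (by norm_num) ha.le] at h1
      nlinarith [h1, hA]
    · have h1 : (κ+x+y)^p ≤ (κ+x)^p := Real.rpow_le_rpow_of_nonpos ha haM h0.le
      nlinarith [h1, hA]
  · rcases le_or_gt 0 p with h0 | h0
    · have h1 : (κ+x)^p ≤ (κ+x+y)^p := Real.rpow_le_rpow ha.le haM h0
      nlinarith [h1, hMp]
    · have h1 : (κ+x)^p ≤ ((κ+x+y)/2)^p :=
        Real.rpow_le_rpow_of_nonpos (by linarith) (by linarith) h0.le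
      have h2 : ((κ+x+y)/2)^p = (κ+x+y)^p * (2:ℝ)^(-p) := by
        rw [div_eq_mul_inv, Real.mul_rpow hM.le (by norm_num),
          Real.inv_rpow (by norm_num), ← Real.rpow_neg (by norm_num)]
      rw [h2] at h1
      nlinarith [h1, hMp]

/-- Final lower-bound glue. -/
lemma glueLower {c₀ cS ap Mp d2 I K : ℝ} (hK : 0 < K) (hc₀ : 0 ≤ c₀) (hcs : c₀ ≤ cS)
    (hconv : Mp ≤ K * ap) (hd2 : 0 ≤ d2) (hap : 0 ≤ ap) (hI : cS * (ap * d2) ≤ I) :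
    c₀/K * Mp * d2 ≤ I := by
  have h1 : c₀/K * Mp * d2 ≤ c₀/K * (K*ap) * d2 := by
    apply mul_le_mul_of_nonneg_right _ hd2
    exact mul_le_mul_of_nonneg_left hconv (by positivity)
  have h2 : c₀/K*(K*ap)*d2 = c₀*(ap*d2) := by field_simp
  have h3 : c₀*(ap*d2) ≤ cS*(ap*d2) :=
    mul_le_mul_of_nonneg_right hcs (mul_nonneg hap hd2)
  linarith

/-- Final upper-bound glue. -/
lemma glueUpper {C₁ CS ap Mp d2 I K : ℝ} (hK : 0 ≤ K) (hCS : 0 ≤ CS)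
    (hCC : CS * K ≤ C₁)
    (hconv : ap ≤ K * Mp) (hd2 : 0 ≤ d2) (hMp : 0 ≤ Mp) (hI : I ≤ CS*(ap*d2)) :
    I ≤ C₁ * Mp * d2 := by
  have h1 : CS*(ap*d2) ≤ CS*((K*Mp)*d2) := by
    apply mul_le_mul_of_nonneg_left _ hCS
    exact mul_le_mul_of_nonneg_right hconv hd2
  have h2 : CS*((K*Mp)*d2) = (CS*K)*Mp*d2 := by ring
  have h3 : (CS*K)*Mp*d2 ≤ C₁*Mp*d2 := by
    apply mul_le_mul_of_nonneg_right _ hd2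
    exact mul_le_mul_of_nonneg_right hCC hMp
  linarith

end Stmt11Aux

open Stmt11Aux in
/-- (Hammer lemma for constant exponent `q`.)
Let `q ∈ (1,∞)` and `κ ≥ 0`. There are constants `0 < c ≤ C < ∞` depending only on `q`
such that for all matrices `P, Q` with `κ + |P| + |Q| > 0`:
`(S(P)−S(Q)):(P−Q) ∼ (κ+|P|+|Q|)^{q−2}|P−Q|²` and
`|F(P)−F(Q)|² ∼ (κ+|P|+|Q|)^{q−2}|P−Q|²`. -/
theorem stmt11 (N n : ℕ) (q : ℝ) (hq : 1 < q) :
    ∃ c C : ℝ, 0 < c ∧ c ≤ C ∧ ∀ κ : ℝ, 0 ≤ κ →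
      ∀ P Q : EuclideanSpace ℝ (Fin N × Fin n), 0 < κ + ‖P‖ + ‖Q‖ →
        (c * (κ + ‖P‖ + ‖Q‖) ^ (q - 2) * ‖P - Q‖ ^ 2 ≤
            ⟪(κ + ‖P‖) ^ (q - 2) • P - (κ + ‖Q‖) ^ (q - 2) • Q, P - Q⟫ ∧
          ⟪(κ + ‖P‖) ^ (q - 2) • P - (κ + ‖Q‖) ^ (q - 2) • Q, P - Q⟫ ≤
            C * (κ + ‖P‖ + ‖Q‖) ^ (q - 2) * ‖P - Q‖ ^ 2) ∧
        (c * (κ + ‖P‖ + ‖Q‖) ^ (q - 2) * ‖P - Q‖ ^ 2 ≤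
            ‖(κ + ‖P‖) ^ ((q - 2) / 2) • P - (κ + ‖Q‖) ^ ((q - 2) / 2) • Q‖ ^ 2 ∧
          ‖(κ + ‖P‖) ^ ((q - 2) / 2) • P - (κ + ‖Q‖) ^ ((q - 2) / 2) • Q‖ ^ 2 ≤
            C * (κ + ‖P‖ + ‖Q‖) ^ (q - 2) * ‖P - Q‖ ^ 2) := by
  set p := q - 2 with hpdef
  have hp : -1 < p := by rw [hpdef]; linarith
  set cS := min (min 1 (p+1)) (1/2) with hcSdef
  set CS := max (1 + max 1 p) 2 with hCSdef
  set cF := (min (min 1 (p/2+1)) (1/2))^2 with hcFdef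
  set CF := (max (1 + max 1 (p/2)) 2)^2 with hCFdef
  have hcS : 0 < cS := lt_min (lt_min one_pos (by linarith)) (by norm_num)
  have hcF : 0 < cF := pow_pos (lt_min (lt_min one_pos (by linarith)) (by norm_num)) 2
  set c0 := min cS cF with hc0def
  set C0 := max CS CF with hC0def
  have hc0 : 0 < c0 := lt_min hcS hcF
  set K1 := 1 + (2:ℝ)^p with hK1def
  set K2 := 1 + (2:ℝ)^(-p) with hK2def
  have hK1 : 0 < K1 := by
    have := Real.rpow_pos_of_pos (two_pos (α := ℝ)) p
    rw [hK1def]; linarith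
  have hK2 : 0 ≤ K2 := by
    have := Real.rpow_pos_of_pos (two_pos (α := ℝ)) (-p)
    rw [hK2def]; linarith
  refine ⟨c0/K1, max (C0*K2) (c0/K1), by positivity, le_max_right _ _, ?_⟩
  intro κ hκ P Q hpos
  have hCCs : CS * K2 ≤ max (C0*K2) (c0/K1) :=
    le_trans (mul_le_mul_of_nonneg_right (le_max_left CS CF) hK2) (le_max_left _ _)
  have hCCf : CF * K2 ≤ max (C0*K2) (c0/K1) :=
    le_trans (mul_le_mul_of_nonneg_right (le_max_right CS CF) hK2) (le_max_left _ _)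
  have hd2 : (0:ℝ) ≤ ‖P - Q‖^2 := by positivity
  rcases le_total ‖Q‖ ‖P‖ with hyx | hyx
  · have ha : 0 < κ + ‖P‖ := by linarith [norm_nonneg Q, norm_nonneg P]
    have hMp : (0:ℝ) ≤ (κ + ‖P‖ + ‖Q‖)^p := Real.rpow_nonneg (by linarith) p
    have hap : (0:ℝ) ≤ (κ + ‖P‖)^p := Real.rpow_nonneg ha.le p
    obtain ⟨⟨l1, u1⟩, ⟨l2, u2⟩⟩ := vecMain hp hκ P Q hyx ha
    obtain ⟨cv1, cv2⟩ := conv (p := p) hκ (norm_nonneg Q) hyx ha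
    have hCS0 : (0:ℝ) ≤ CS := le_trans (by norm_num) (le_max_right (1 + max 1 p) 2)
    have hCF0 : (0:ℝ) ≤ CF := by rw [hCFdef]; positivity
    exact ⟨⟨glueLower hK1 hc0.le (min_le_left _ _) cv1 hd2 hap l1,
        glueUpper hK2 hCS0 hCCs cv2 hd2 hMp u1⟩,
      ⟨glueLower hK1 hc0.le (min_le_right _ _) cv1 hd2 hap l2,
        glueUpper hK2 hCF0 hCCf cv2 hd2 hMp u2⟩⟩
  · have ha : 0 < κ + ‖Q‖ := by linarith [norm_nonneg Q, norm_nonneg P]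
    have hMp : (0:ℝ) ≤ (κ + ‖P‖ + ‖Q‖)^p := Real.rpow_nonneg (by linarith [norm_nonneg P]) p
    have hap : (0:ℝ) ≤ (κ + ‖Q‖)^p := Real.rpow_nonneg ha.le p
    obtain ⟨⟨l1, u1⟩, ⟨l2, u2⟩⟩ := vecMain hp hκ Q P hyx ha
    obtain ⟨cv1, cv2⟩ := conv (p := p) hκ (norm_nonneg P) hyx ha
    have e1 : (⟪(κ+‖Q‖)^p • Q - (κ+‖P‖)^p • P, Q - P⟫ : ℝ)
        = ⟪(κ+‖P‖)^p • P - (κ+‖Q‖)^p • Q, P - Q⟫ := by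
      rw [← neg_sub ((κ+‖P‖)^p • P) ((κ+‖Q‖)^p • Q), ← neg_sub P Q, inner_neg_neg]
    have e2 : ‖Q - P‖ = ‖P - Q‖ := norm_sub_rev Q P
    have e3 : ‖(κ+‖Q‖)^(p/2) • Q - (κ+‖P‖)^(p/2) • P‖
        = ‖(κ+‖P‖)^(p/2) • P - (κ+‖Q‖)^(p/2) • Q‖ := norm_sub_rev _ _
    have e4 : κ + ‖Q‖ + ‖P‖ = κ + ‖P‖ + ‖Q‖ := by ring
    rw [e1, e2] at l1 u1
    rw [e2, e3] at l2 u2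
    rw [e4] at cv1 cv2
    have hCS0 : (0:ℝ) ≤ CS := le_trans (by norm_num) (le_max_right (1 + max 1 p) 2)
    have hCF0 : (0:ℝ) ≤ CF := by rw [hCFdef]; positivity
    exact ⟨⟨glueLower hK1 hc0.le (min_le_left _ _) cv1 hd2 hap l1,
        glueUpper hK2 hCS0 hCCs cv2 hd2 hMp u1⟩,
      ⟨glueLower hK1 hc0.le (min_le_right _ _) cv1 hd2 hap l2,
        glueUpper hK2 hCF0 hCCf cv2 hd2 hMp u2⟩⟩
end

section
/- Let q ∈ (1,∞) and κ ≥ 0. For every δ > 0 there is a constant C_δ ≥ 1, depending only on δ and q, such that for all P, Q, R ∈ ℝ^{N×n}: (S(P) − S(Q)) : (R − Q) ≤ δ |F(P) − F(Q)|² + C_δ |F(R) − F(Q)|². -/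
open Real
open scoped RealInnerProductSpace

namespace Stmt12Aux


/-- Monotonicity of `x ↦ (κ+x)^t * x` for `t ≥ -1`. -/
lemma gmono {t : ℝ} (ht : -1 ≤ t) {κ x y : ℝ} (hκ : 0 ≤ κ) (hx : 0 ≤ x) (hxy : x ≤ y) :
    (κ + x) ^ t * x ≤ (κ + y) ^ t * y := by
  rcases eq_or_lt_of_le hx with rfl | hx0
  · simpa using mul_nonneg (Real.rpow_nonneg (by linarith) _) (by linarith)
  · have hy0 : 0 < y := lt_of_lt_of_le hx0 hxy
    have hkx : 0 < κ + x := by linarith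
    have hky : 0 < κ + y := by linarith
    set R : ℝ := (κ + y) / (κ + x) with hR
    have hR1 : 1 ≤ R := (one_le_div hkx).mpr (by linarith)
    have hRt : R ^ (-1 : ℝ) ≤ R ^ t := Real.rpow_le_rpow_of_exponent_le hR1 ht
    have hRinv : R ^ (-1 : ℝ) = (κ + x) / (κ + y) := by
      rw [Real.rpow_neg_one, hR, inv_div]
    have hxy2 : x * (κ + y) ≤ y * (κ + x) := by nlinarith
    have hkey : x ≤ R ^ t * y := by
      calc x ≤ (κ + x) / (κ + y) * y := by
              rw [div_mul_eq_mul_div, le_div_iff₀ hky]; nlinarith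
        _ = R ^ (-1 : ℝ) * y := by rw [hRinv]
        _ ≤ R ^ t * y := by gcongr
    have hsplit : (κ + y) ^ t = (κ + x) ^ t * R ^ t := by
      rw [← Real.mul_rpow hkx.le (by positivity)]
      congr 1
      rw [hR, mul_div_cancel₀ _ hkx.ne']
    calc (κ + x) ^ t * x ≤ (κ + x) ^ t * (R ^ t * y) := by
          have := Real.rpow_nonneg hkx.le t
          nlinarith
      _ = (κ + y) ^ t * y := by rw [hsplit]; ring


/-- `u^t - v^t ≤ max 1 t * u^(t-1) * (u - v)` for `0 ≤ v ≤ u`, `0 < u`, `0 ≤ t`. -/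
lemma pow_diff_le {t u v : ℝ} (ht : 0 ≤ t) (hu : 0 < u) (hv : 0 ≤ v) (hvu : v ≤ u) :
    u ^ t - v ^ t ≤ max 1 t * (u ^ (t - 1) * (u - v)) := by
  rcases le_or_gt t 1 with h1 | h1
  · -- t ≤ 1 : u^t - v^t ≤ u^(t-1) (u - v), i.e. v^t ≥ u^(t-1) v
    have hmax : max 1 t = 1 := max_eq_left h1
    rw [hmax, one_mul]
    have key : u ^ (t - 1) * v ≤ v ^ t := by
      rcases eq_or_lt_of_le hv with rfl | hv0
      · simpa using Real.rpow_nonneg le_rfl t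
      · have : u ^ (t - 1) ≤ v ^ (t - 1) :=
          Real.rpow_le_rpow_of_nonpos hv0 hvu (by linarith)
        calc u ^ (t - 1) * v ≤ v ^ (t - 1) * v := by nlinarith
          _ = v ^ t := by
              rw [← Real.rpow_add_one hv0.ne' (t - 1)]; ring_nf
    have huu : u ^ (t - 1) * u = u ^ t := by
      rw [← Real.rpow_add_one hu.ne' (t - 1)]; ring_nf
    nlinarith
  · -- 1 < t : Bernoulli
    have hmax : max 1 t = t := max_eq_right h1.le
    rw [hmax]
    have hs : (-1 : ℝ) ≤ v / u - 1 := by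
      have : 0 ≤ v / u := div_nonneg hv hu.le
      linarith
    have bern : 1 + t * (v / u - 1) ≤ (1 + (v / u - 1)) ^ t :=
      one_add_mul_self_le_rpow_one_add hs h1.le
    have hvu' : (1 + (v / u - 1)) = v / u := by ring
    rw [hvu'] at bern
    have hut : 0 < u ^ t := Real.rpow_pos_of_pos hu t
    have hdiv : (v / u) ^ t = v ^ t / u ^ t := Real.div_rpow hv hu.le t
    rw [hdiv] at bern
    -- multiply by u^t
    have key : u ^ t + t * (u ^ t * (v / u - 1)) ≤ v ^ t := by
      have := mul_le_mul_of_nonneg_left bern hut.le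
      calc u ^ t + t * (u ^ t * (v / u - 1)) = u ^ t * (1 + t * (v / u - 1)) := by ring
        _ ≤ u ^ t * (v ^ t / u ^ t) := this
        _ = v ^ t := by field_simp
    have huu : u ^ t * (v / u - 1) = u ^ (t - 1) * (v - u) := by
      have h1 : u ^ (t - 1) * u = u ^ t := by
        rw [← Real.rpow_add_one hu.ne' (t - 1)]; ring_nf
      field_simp
      nlinarith [h1]
    rw [huu] at key
    nlinarith


lemma supper {t : ℝ} (ht : -1 < t) :
    ∃ C : ℝ, 0 < C ∧ ∀ κ x y : ℝ, 0 ≤ κ → 0 ≤ y → y ≤ x →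
      (κ + x) ^ t * x - (κ + y) ^ t * y ≤ C * ((κ + x + y) ^ t * (x - y)) := by
  rcases le_or_gt 0 t with h0 | h0
  · refine ⟨1 + max 1 t, by positivity, fun κ x y hκ hy hyx => ?_⟩
    have hx : 0 ≤ x := hy.trans hyx
    rcases eq_or_lt_of_le (by linarith : (0:ℝ) ≤ κ + x) with h | hkx
    · -- κ + x = 0 hence κ = x = y = 0
      have hκ0 : κ = 0 := by linarith
      have hx0 : x = 0 := by linarith
      have hy0 : y = 0 := by linarith
      simp [hκ0, hx0, hy0]
    · have hky : 0 ≤ κ + y := by linarith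
      have hA : 0 ≤ κ + x + y := by linarith
      have hd : 0 ≤ x - y := by linarith
      have e1 : (κ + x) ^ t ≤ (κ + x + y) ^ t :=
        Real.rpow_le_rpow hkx.le (by linarith) h0
      have e2 : (κ + x) ^ t - (κ + y) ^ t ≤ max 1 t * ((κ + x) ^ (t - 1) * (x - y)) := by
        have := pow_diff_le h0 hkx hky (by linarith)
        convert this using 3 <;> ring
      have e3 : (κ + x) ^ (t - 1) * (x - y) * y ≤ (κ + x) ^ t * (x - y) := by
        have h4 : (κ + x) ^ (t - 1) * (κ + x) = (κ + x) ^ t := by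
          rw [← Real.rpow_add_one hkx.ne' (t - 1)]; ring_nf
        have h5 : 0 ≤ (κ + x) ^ (t - 1) := Real.rpow_nonneg hkx.le _
        nlinarith [mul_nonneg (mul_nonneg h5 hd) (by linarith : (0:ℝ) ≤ κ + x - y)]
      have hmax : 0 ≤ max 1 t := by positivity
      have hAt : 0 ≤ (κ + x + y) ^ t := Real.rpow_nonneg hA t
      nlinarith [mul_le_mul_of_nonneg_right e2 hy, Real.rpow_nonneg hkx.le t,
        mul_le_mul_of_nonneg_right e1 hd]
  · refine ⟨2 ^ (-t), by positivity, fun κ x y hκ hy hyx => ?_⟩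
    have hx : 0 ≤ x := hy.trans hyx
    rcases eq_or_lt_of_le (by linarith : (0:ℝ) ≤ κ + y) with h | hky
    · -- κ + y = 0 : κ = y = 0
      have hκ0 : κ = 0 := by linarith
      have hy0 : y = 0 := by linarith
      subst hκ0; subst hy0
      simp only [add_zero, zero_add, sub_zero, mul_zero]
      have h2 : (1:ℝ) ≤ 2 ^ (-t) := by
        rw [show (1:ℝ) = 2 ^ (0:ℝ) by simp]
        exact Real.rpow_le_rpow_of_exponent_le one_le_two (by linarith)
      nlinarith [mul_nonneg (Real.rpow_nonneg hx t) hx]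
    · have hkx : 0 < κ + x := by linarith
      have hd : 0 ≤ x - y := by linarith
      have e0 : (κ + x) ^ t ≤ (κ + y) ^ t :=
        Real.rpow_le_rpow_of_nonpos hky (by linarith) h0.le
      have e1 : (κ + x) ^ t ≤ 2 ^ (-t) * (κ + x + y) ^ t := by
        have h2 : (κ + x + y) ^ t ≥ (2 * (κ + x)) ^ t :=
          Real.rpow_le_rpow_of_nonpos (by linarith) (by linarith) h0.le
        have h3 : (2 * (κ + x)) ^ t = 2 ^ t * (κ + x) ^ t :=
          Real.mul_rpow (by norm_num) hkx.le
        have h4 : (2:ℝ) ^ (-t) * 2 ^ t = 1 := by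
          rw [← Real.rpow_add (by norm_num)]; simp
        have h5 : (0:ℝ) < 2 ^ (-t) := Real.rpow_pos_of_pos (by norm_num) _
        have h6 : 2 ^ (-t) * ((2 * (κ + x)) ^ t) = (κ + x) ^ t := by
          rw [h3, ← mul_assoc, h4, one_mul]
        nlinarith [mul_le_mul_of_nonneg_left h2 h5.le]
      calc (κ + x) ^ t * x - (κ + y) ^ t * y
          ≤ (κ + x) ^ t * x - (κ + x) ^ t * y := by nlinarith
        _ = (κ + x) ^ t * (x - y) := by ring
        _ ≤ 2 ^ (-t) * (κ + x + y) ^ t * (x - y) := by nlinarith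
        _ = 2 ^ (-t) * ((κ + x + y) ^ t * (x - y)) := by ring


lemma slower {t : ℝ} (ht : -1 < t) :
    ∃ c : ℝ, 0 < c ∧ ∀ κ x y : ℝ, 0 ≤ κ → 0 ≤ y → y ≤ x →
      c * ((κ + x + y) ^ t * (x - y)) ≤ (κ + x) ^ t * x - (κ + y) ^ t * y := by
  rcases le_or_gt 0 t with h0 | h0
  · refine ⟨2 ^ (-t), Real.rpow_pos_of_pos (by norm_num) _, fun κ x y hκ hy hyx => ?_⟩
    have hx : 0 ≤ x := hy.trans hyx
    have hky : 0 ≤ κ + y := by linarith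
    have hkx : 0 ≤ κ + x := by linarith
    have hA : 0 ≤ κ + x + y := by linarith
    have hd : 0 ≤ x - y := by linarith
    -- (κ+x+y)^t ≤ 2^t (κ+x)^t
    have e1 : (κ + x + y) ^ t ≤ 2 ^ t * (κ + x) ^ t := by
      have h2 : (κ + x + y) ^ t ≤ (2 * (κ + x)) ^ t :=
        Real.rpow_le_rpow hA (by linarith) h0
      rwa [Real.mul_rpow (by norm_num) hkx] at h2
    have e2 : (κ + y) ^ t ≤ (κ + x) ^ t := Real.rpow_le_rpow hky (by linarith) h0
    have h4 : (2:ℝ) ^ (-t) * 2 ^ t = 1 := by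
      rw [← Real.rpow_add (by norm_num)]; simp
    have h5 : (0:ℝ) < 2 ^ (-t) := Real.rpow_pos_of_pos (by norm_num) _
    have key : 2 ^ (-t) * ((κ + x + y) ^ t * (x - y)) ≤ (κ + x) ^ t * (x - y) := by
      have h6 := mul_le_mul_of_nonneg_right e1 hd
      have h7 := mul_le_mul_of_nonneg_left h6 h5.le
      calc 2 ^ (-t) * ((κ + x + y) ^ t * (x - y)) ≤ 2 ^ (-t) * (2 ^ t * (κ + x) ^ t * (x - y)) := h7
        _ = (2 ^ (-t) * 2 ^ t) * ((κ + x) ^ t * (x - y)) := by ring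
        _ = (κ + x) ^ t * (x - y) := by rw [h4, one_mul]
    nlinarith [mul_le_mul_of_nonneg_right e2 hy]
  · refine ⟨1 + t, by linarith, fun κ x y hκ hy hyx => ?_⟩
    have hx : 0 ≤ x := hy.trans hyx
    rcases eq_or_lt_of_le (by linarith : (0:ℝ) ≤ κ + x) with h | hkx
    · have hκ0 : κ = 0 := by linarith
      have hx0 : x = 0 := by linarith
      have hy0 : y = 0 := by linarith
      simp [hκ0, hx0, hy0]
    · have hd : 0 ≤ x - y := by linarith
      -- step 1 : (κ+x+y)^t ≤ (κ+x)^t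
      have e1 : (κ + x + y) ^ t ≤ (κ + x) ^ t :=
        Real.rpow_le_rpow_of_nonpos hkx (by linarith) h0.le
      -- step 2 : (κ+y)^t * y ≤ (κ+x)^t * ((-t)*x + (1+t)*y)
      have key : (κ + y) ^ t * y ≤ (κ + x) ^ t * ((-t) * x + (1 + t) * y) := by
        rcases eq_or_lt_of_le hy with rfl | hy0
        · simp only [mul_zero, add_zero, mul_zero, zero_mul]
          have : 0 ≤ (κ + x) ^ t * ((-t) * x) := by
            apply mul_nonneg (Real.rpow_nonneg hkx.le _)
            nlinarith
          nlinarith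
        · -- y > 0, so all bases positive
          have hky : 0 < κ + y := by linarith
          have hx0 : 0 < x := lt_of_lt_of_le hy0 hyx
          set p : ℝ := -t with hp
          have hp0 : 0 < p := by simp [hp]; linarith
          have hp1 : p < 1 := by simp [hp]; linarith
          -- AM-GM : x^p * y^(1-p) ≤ p*x + (1-p)*y
          have amgm : x ^ p * y ^ (1 - p) ≤ p * x + (1 - p) * y :=
            Real.geom_mean_le_arith_mean2_weighted hp0.le (by linarith) hx hy (by ring)
          -- (y*(κ+x))^p ≤ (x*(κ+y))^p
          have cross : (y * (κ + x)) ^ p ≤ (x * (κ + y)) ^ p := by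
            apply Real.rpow_le_rpow (by positivity) _ hp0.le
            nlinarith
          rw [Real.mul_rpow hy hkx.le, Real.mul_rpow hx0.le hky.le] at cross
          -- multiply : y^p * (κ+x)^p * y^(1-p) ≤ x^p * (κ+y)^p * y^(1-p)
          have hy1p : (0:ℝ) < y ^ (1 - p) := Real.rpow_pos_of_pos hy0 _
          have c2 := mul_le_mul_of_nonneg_right cross hy1p.le
          have hyy : y ^ p * y ^ (1 - p) = y := by
            rw [← Real.rpow_add hy0]; simp
          -- so y * (κ+x)^p ≤ (x^p * y^(1-p)) * (κ+y)^p ≤ (p*x+(1-p)*y) * (κ+y)^p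
          have hkyp : (0:ℝ) ≤ (κ + y) ^ p := Real.rpow_nonneg hky.le _
          have c3 : y * (κ + x) ^ p ≤ (p * x + (1 - p) * y) * (κ + y) ^ p := by
            calc y * (κ + x) ^ p = y ^ p * (κ + x) ^ p * y ^ (1 - p) := by
                  linear_combination (-((κ + x) ^ p)) * hyy
              _ ≤ x ^ p * (κ + y) ^ p * y ^ (1 - p) := c2
              _ = (x ^ p * y ^ (1 - p)) * (κ + y) ^ p := by ring
              _ ≤ (p * x + (1 - p) * y) * (κ + y) ^ p := by
                  exact mul_le_mul_of_nonneg_right amgm hkyp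
          -- now convert to negative powers
          have hxt : (κ + x) ^ t = ((κ + x) ^ p)⁻¹ := by
            rw [hp, Real.rpow_neg hkx.le, inv_inv]
          have hyt : (κ + y) ^ t = ((κ + y) ^ p)⁻¹ := by
            rw [hp, Real.rpow_neg hky.le, inv_inv]
          have hkxp : (0:ℝ) < (κ + x) ^ p := Real.rpow_pos_of_pos hkx _
          have hkyp' : (0:ℝ) < (κ + y) ^ p := Real.rpow_pos_of_pos hky _
          rw [hxt, hyt, inv_mul_eq_div, inv_mul_eq_div, div_le_div_iff₀ hkyp' hkxp]
          have hq : (-t) * x + (1 + t) * y = p * x + (1 - p) * y := by rw [hp]; ring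
          rw [hq]
          exact c3
      have e2 := mul_le_mul_of_nonneg_right e1 (by nlinarith : (0:ℝ) ≤ (1+t)*(x-y))
      nlinarith [key, e2]



lemma santilow_half {t : ℝ} (ht : -1 < t) :
    ∃ c : ℝ, 0 < c ∧ ∀ κ x y : ℝ, 0 ≤ κ → 0 ≤ x → 0 ≤ y → x ≤ y →
      c * ((κ + x + y) ^ t * (x + y)) ≤ (κ + x) ^ t * x + (κ + y) ^ t * y := by
  have hgx : ∀ κ x : ℝ, 0 ≤ κ → 0 ≤ x → 0 ≤ (κ + x) ^ t * x := fun κ x hκ hx =>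
    mul_nonneg (Real.rpow_nonneg (by linarith) _) hx
  rcases le_or_gt 0 t with h0 | h0
  · refine ⟨2 ^ (-t-1), Real.rpow_pos_of_pos (by norm_num) _, fun κ x y hκ hx hy hxy => ?_⟩
    have hky : 0 ≤ κ + y := by linarith
    have e1 : (κ + x + y) ^ t ≤ 2 ^ t * (κ + y) ^ t := by
      have h2 : (κ + x + y) ^ t ≤ (2 * (κ + y)) ^ t :=
        Real.rpow_le_rpow (by linarith) (by linarith) h0
      rwa [Real.mul_rpow (by norm_num) hky] at h2
    have h4 : (2:ℝ) ^ (-t-1) * (2 ^ t * 2) = 1 := by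
      rw [show (2:ℝ) ^ t * 2 = 2 ^ t * 2 ^ (1:ℝ) by norm_num,
        ← Real.rpow_add (by norm_num), ← Real.rpow_add (by norm_num)]
      norm_num
    have h5 : (0:ℝ) < 2 ^ (-t-1) := Real.rpow_pos_of_pos (by norm_num) _
    have hAt : 0 ≤ (κ + x + y) ^ t := Real.rpow_nonneg (by linarith) _
    have hyt : 0 ≤ (κ + y) ^ t := Real.rpow_nonneg hky _
    -- (κ+x+y)^t * (x+y) ≤ 2^t (κ+y)^t * 2y
    have e2 : (κ + x + y) ^ t * (x + y) ≤ 2 ^ t * (κ + y) ^ t * (2 * y) := by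
      have := mul_le_mul e1 (by linarith : x + y ≤ 2 * y) (by linarith) (by positivity)
      linarith
    have e3 := mul_le_mul_of_nonneg_left e2 h5.le
    calc 2 ^ (-t-1) * ((κ + x + y) ^ t * (x + y))
        ≤ 2 ^ (-t-1) * (2 ^ t * (κ + y) ^ t * (2 * y)) := e3
      _ = (2 ^ (-t-1) * (2 ^ t * 2)) * ((κ + y) ^ t * y) := by ring
      _ = (κ + y) ^ t * y := by rw [h4, one_mul]
      _ ≤ (κ + x) ^ t * x + (κ + y) ^ t * y := by nlinarith [hgx κ x hκ hx]
  · refine ⟨1/2, by norm_num, fun κ x y hκ hx hy hxy => ?_⟩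
    rcases eq_or_lt_of_le (by linarith : (0:ℝ) ≤ κ + y) with h | hky
    · have hκ0 : κ = 0 := by linarith
      have hy0 : y = 0 := by linarith
      have hx0 : x = 0 := by linarith
      simp [hκ0, hy0, hx0]
    · have e1 : (κ + x + y) ^ t ≤ (κ + y) ^ t :=
        Real.rpow_le_rpow_of_nonpos hky (by linarith) h0.le
      have hyt : 0 ≤ (κ + y) ^ t := Real.rpow_nonneg hky.le _
      have e2 : (κ + x + y) ^ t * (x + y) ≤ (κ + y) ^ t * (2 * y) := by
        have hAt : 0 ≤ (κ + x + y) ^ t := Real.rpow_nonneg (by linarith) _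
        have := mul_le_mul e1 (by linarith : x + y ≤ 2 * y) (by linarith) hyt
        linarith
      nlinarith [hgx κ x hκ hx]

lemma santilow {t : ℝ} (ht : -1 < t) :
    ∃ c : ℝ, 0 < c ∧ ∀ κ x y : ℝ, 0 ≤ κ → 0 ≤ x → 0 ≤ y →
      c * ((κ + x + y) ^ t * (x + y)) ≤ (κ + x) ^ t * x + (κ + y) ^ t * y := by
  obtain ⟨c, hc, H⟩ := santilow_half ht
  refine ⟨c, hc, fun κ x y hκ hx hy => ?_⟩
  rcases le_total x y with h | h
  · exact H κ x y hκ hx hy h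
  · have := H κ y x hκ hy hx h
    have e : κ + y + x = κ + x + y := by ring
    rw [e] at this
    linarith

lemma santiup {t : ℝ} (ht : -1 < t) :
    ∃ C : ℝ, 0 < C ∧ ∀ κ x y : ℝ, 0 ≤ κ → 0 ≤ x → 0 ≤ y →
      (κ + x) ^ t * x + (κ + y) ^ t * y ≤ C * ((κ + x + y) ^ t * (x + y)) := by
  have key : ∀ C : ℝ, 0 < C →
      (∀ κ x y : ℝ, 0 ≤ κ → 0 ≤ x → 0 ≤ y → x ≤ y →
        (κ + x) ^ t * x + (κ + y) ^ t * y ≤ C * ((κ + x + y) ^ t * (x + y))) →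
      ∃ C : ℝ, 0 < C ∧ ∀ κ x y : ℝ, 0 ≤ κ → 0 ≤ x → 0 ≤ y →
        (κ + x) ^ t * x + (κ + y) ^ t * y ≤ C * ((κ + x + y) ^ t * (x + y)) := by
    intro C hC H
    refine ⟨C, hC, fun κ x y hκ hx hy => ?_⟩
    rcases le_total x y with h | h
    · exact H κ x y hκ hx hy h
    · have := H κ y x hκ hy hx h
      have e : κ + y + x = κ + x + y := by ring
      rw [e] at this; linarith
  rcases le_or_gt 0 t with h0 | h0
  · refine key 1 one_pos fun κ x y hκ hx hy hxy => ?_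
    have hxt : (κ + x) ^ t ≤ (κ + x + y) ^ t := Real.rpow_le_rpow (by linarith) (by linarith) h0
    have hyt : (κ + y) ^ t ≤ (κ + x + y) ^ t := Real.rpow_le_rpow (by linarith) (by linarith) h0
    have := add_le_add (mul_le_mul_of_nonneg_right hxt hx) (mul_le_mul_of_nonneg_right hyt hy)
    nlinarith
  · refine key (2 ^ (1-t)) (Real.rpow_pos_of_pos (by norm_num) _) fun κ x y hκ hx hy hxy => ?_
    rcases eq_or_lt_of_le (by linarith : (0:ℝ) ≤ κ + y) with h | hky
    · have hκ0 : κ = 0 := by linarith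
      have hy0 : y = 0 := by linarith
      have hx0 : x = 0 := by linarith
      simp [hκ0, hy0, hx0]
    · -- g x ≤ g y ≤ 2^{-t} A^t y
      have e0 : (κ + x) ^ t * x ≤ (κ + y) ^ t * y := gmono (by linarith) hκ hx hxy
      have e1 : (κ + y) ^ t ≤ 2 ^ (1-t) / 2 * (κ + x + y) ^ t := by
        have h2 : (κ + x + y) ^ t ≥ (2 * (κ + y)) ^ t :=
          Real.rpow_le_rpow_of_nonpos (by linarith) (by linarith) h0.le
        have h3 : (2 * (κ + y)) ^ t = 2 ^ t * (κ + y) ^ t :=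
          Real.mul_rpow (by norm_num) hky.le
        have h4 : (2:ℝ) ^ (1-t) / 2 * 2 ^ t = 1 := by
          rw [div_mul_eq_mul_div, ← Real.rpow_add (by norm_num)]
          norm_num
        have h5 : (0:ℝ) < 2 ^ (1-t) / 2 := by positivity
        have h6 : 2 ^ (1-t) / 2 * ((2 * (κ + y)) ^ t) = (κ + y) ^ t := by
          rw [h3, ← mul_assoc, h4, one_mul]
        nlinarith [mul_le_mul_of_nonneg_left h2 h5.le]
      have e2 : (κ + y) ^ t * y ≤ 2 ^ (1-t) / 2 * ((κ + x + y) ^ t * y) := by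
        have := mul_le_mul_of_nonneg_right e1 hy
        linarith [this]
      have hAt : 0 ≤ (κ + x + y) ^ t := Real.rpow_nonneg (by linarith) _
      have h5 : (0:ℝ) < 2 ^ (1-t) / 2 := by positivity
      have e3 : 2 ^ (1-t) / 2 * ((κ + x + y) ^ t * y) ≤ 2 ^ (1-t) / 2 * ((κ + x + y) ^ t * (x+y)) := by
        have : (κ + x + y) ^ t * y ≤ (κ + x + y) ^ t * (x + y) := by nlinarith
        nlinarith
      have final : (κ + y) ^ t * y ≤ 2 ^ (1-t) / 2 * ((κ + x + y) ^ t * (x + y)) := le_trans e2 e3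
      nlinarith [final, e0]



/-- comparability of rpow for comparable bases -/
lemma rpow_comparable {s u v : ℝ} (hu : 0 ≤ u) (hv : 0 ≤ v) (h1 : u ≤ 2 * v) (h2 : v ≤ 2 * u) :
    u ^ s ≤ 2 ^ |s| * v ^ s := by
  have h2s : (1:ℝ) ≤ 2 ^ |s| := by
    rw [show (1:ℝ) = 2 ^ (0:ℝ) by simp]
    exact Real.rpow_le_rpow_of_exponent_le one_le_two (abs_nonneg s)
  rcases eq_or_lt_of_le hv with rfl | hv0
  · -- v = 0 forces u = 0
    have hu0 : u = 0 := le_antisymm (by linarith) hu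
    subst hu0
    nlinarith [Real.rpow_nonneg (le_refl (0:ℝ)) s]
  rcases eq_or_lt_of_le hu with rfl | hu0
  · -- u = 0
    rcases eq_or_ne s 0 with rfl | hs
    · simp
    · rw [Real.zero_rpow hs]
      positivity
  rcases le_or_gt 0 s with h0 | h0
  · have : u ^ s ≤ (2 * v) ^ s := Real.rpow_le_rpow hu h1 h0
    rw [Real.mul_rpow (by norm_num) hv] at this
    have : u ^ s ≤ 2 ^ s * v ^ s := this
    have habs : (2:ℝ) ^ s ≤ 2 ^ |s| :=
      Real.rpow_le_rpow_of_exponent_le one_le_two (le_abs_self s)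
    nlinarith [Real.rpow_nonneg hv s]
  · have h3 : v / 2 ≤ u := by linarith
    have : u ^ s ≤ (v / 2) ^ s := Real.rpow_le_rpow_of_nonpos (by positivity) h3 h0.le
    rw [Real.div_rpow hv (by norm_num)] at this
    have hinv : v ^ s / 2 ^ s = 2 ^ (-s) * v ^ s := by
      rw [Real.rpow_neg (by norm_num)]
      field_simp
    rw [hinv] at this
    have habs : (2:ℝ) ^ (-s) ≤ 2 ^ |s| :=
      Real.rpow_le_rpow_of_exponent_le one_le_two (neg_le_abs s)
    nlinarith [Real.rpow_nonneg hv s]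

/-- Young-type shift inequality -/
lemma young_shift {s : ℝ} (hs : -1 < s) {ε : ℝ} (hε0 : 0 < ε) (hε1 : ε ≤ 1)
    (σ d e : ℝ) (hσ : 0 ≤ σ) (hd : 0 ≤ d) (he : 0 ≤ e) :
    (σ + d) ^ s * d * e ≤ ε * ((σ + d) ^ s * d ^ 2) + ε ^ (-(1 + |s|)) * ((σ + e) ^ s * e ^ 2) := by
  have hσd : 0 ≤ (σ + d) ^ s := Real.rpow_nonneg (by linarith) _
  have hσe : 0 ≤ (σ + e) ^ s := Real.rpow_nonneg (by linarith) _
  have hεinv : ε⁻¹ ≤ ε ^ (-(1 + |s|)) := by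
    rw [show ε⁻¹ = ε ^ (-1 : ℝ) by rw [Real.rpow_neg_one]]
    exact Real.rpow_le_rpow_of_exponent_ge hε0 hε1 (by nlinarith [abs_nonneg s])
  have hεinv0 : (0:ℝ) < ε⁻¹ := by positivity
  rcases le_or_gt e (ε * d) with hc | hc
  · have : (σ + d) ^ s * d * e ≤ (σ + d) ^ s * d * (ε * d) := by
      apply mul_le_mul_of_nonneg_left hc (by positivity)
    nlinarith [mul_nonneg hσe (sq_nonneg e), Real.rpow_pos_of_pos hε0 (-(1 + |s|))]
  · -- e > ε d, so d < e / ε  and e > 0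
    have he0 : 0 < e := lt_of_le_of_lt (by positivity) hc
    have hde : d ≤ e / ε := by
      rw [le_div_iff₀ hε0]; nlinarith
    have key : (σ + d) ^ s * d ≤ ε ^ (-(1 + |s|)) * ((σ + e) ^ s * e) := by
      rcases le_or_gt 0 s with h0 | h0
      · -- s ≥ 0
        have h1 : σ + e / ε ≤ (σ + e) / ε := by
          rw [le_div_iff₀ hε0]
          have : e / ε * ε = e := div_mul_cancel₀ e hε0.ne'
          nlinarith
        have h2 : (σ + d) ^ s ≤ ((σ + e) / ε) ^ s := by
          apply Real.rpow_le_rpow (by linarith) _ h0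
          calc σ + d ≤ σ + e / ε := by linarith
            _ ≤ (σ + e) / ε := h1
        rw [Real.div_rpow (by linarith) hε0.le] at h2
        have h3 : (σ + e) ^ s / ε ^ s = ε ^ (-s) * (σ + e) ^ s := by
          rw [Real.rpow_neg hε0.le]; field_simp
        rw [h3] at h2
        have h4 : ε ^ (-s) * ε⁻¹ = ε ^ (-(1+s)) := by
          rw [show ε⁻¹ = ε ^ (-1 : ℝ) by rw [Real.rpow_neg_one],
            ← Real.rpow_add hε0]
          ring_nf
        have h5 : ε ^ (-(1+s)) ≤ ε ^ (-(1+|s|)) :=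
          Real.rpow_le_rpow_of_exponent_ge hε0 hε1 (by nlinarith [le_abs_self s])
        calc (σ + d) ^ s * d ≤ (ε ^ (-s) * (σ + e) ^ s) * (e / ε) := by
              apply mul_le_mul h2 hde hd (by positivity)
          _ = (ε ^ (-s) * ε⁻¹) * ((σ + e) ^ s * e) := by ring
          _ = ε ^ (-(1+s)) * ((σ + e) ^ s * e) := by rw [h4]
          _ ≤ ε ^ (-(1+|s|)) * ((σ + e) ^ s * e) := by
              apply mul_le_mul_of_nonneg_right h5 (by positivity)
      · -- s < 0 : use monotonicity of z ↦ (σ+z)^s z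
        have h1 : (σ + d) ^ s * d ≤ (σ + e / ε) ^ s * (e / ε) :=
          gmono (by linarith) hσ hd hde
        have h2 : (σ + e / ε) ^ s ≤ (σ + e) ^ s := by
          apply Real.rpow_le_rpow_of_nonpos (by linarith) _ h0.le
          have : e ≤ e / ε := by
            rw [le_div_iff₀ hε0]; nlinarith
          linarith
        calc (σ + d) ^ s * d ≤ (σ + e / ε) ^ s * (e / ε) := h1
          _ ≤ (σ + e) ^ s * (e / ε) := by
              apply mul_le_mul_of_nonneg_right h2 (by positivity)
          _ = ε⁻¹ * ((σ + e) ^ s * e) := by ring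
          _ ≤ ε ^ (-(1+|s|)) * ((σ + e) ^ s * e) := by
              apply mul_le_mul_of_nonneg_right hεinv (by positivity)
    calc (σ + d) ^ s * d * e ≤ ε ^ (-(1 + |s|)) * ((σ + e) ^ s * e) * e := by
          apply mul_le_mul_of_nonneg_right key he
      _ = ε ^ (-(1 + |s|)) * ((σ + e) ^ s * e ^ 2) := by ring
      _ ≤ ε * ((σ + d) ^ s * d ^ 2) + ε ^ (-(1 + |s|)) * ((σ + e) ^ s * e ^ 2) := by
          nlinarith [mul_nonneg hσd (sq_nonneg d)]


section VectorLemmas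

variable {E : Type*} [NormedAddCommGroup E] [InnerProductSpace ℝ E]

open scoped RealInnerProductSpace



lemma expand_norm_smul_sub (α β : ℝ) (hα : 0 ≤ α) (hβ : 0 ≤ β) (P Q : E) :
    ‖α • P - β • Q‖ ^ 2
      = (α * ‖P‖) ^ 2 + (β * ‖Q‖) ^ 2 - 2 * (α * β) * ⟪P, Q⟫ := by
  rw [norm_sub_sq_real, norm_smul, norm_smul, real_inner_smul_left, real_inner_smul_right]
  simp only [Real.norm_eq_abs, abs_of_nonneg hα, abs_of_nonneg hβ]
  ring

lemma endpoint_combine_ge {fa fb a b u K : ℝ} (ha : 0 ≤ a) (hb : 0 ≤ b) (hu : |u| ≤ a * b)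
    (e1 : K * (a - b) ^ 2 ≤ (fa * a - fb * b) ^ 2)
    (e2 : K * (a + b) ^ 2 ≤ (fa * a + fb * b) ^ 2) :
    K * (a ^ 2 + b ^ 2 - 2 * u) ≤ (fa * a) ^ 2 + (fb * b) ^ 2 - 2 * (fa * fb) * u := by
  obtain ⟨h1, h2⟩ := abs_le.mp hu
  rcases eq_or_lt_of_le (mul_nonneg ha hb) with h | hab
  · have hu0 : u = 0 := by
      have := abs_nonneg u
      have h2' : |u| ≤ 0 := by linarith [hu, h.symm]
      have : |u| = 0 := le_antisymm h2' (abs_nonneg u)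
      exact abs_eq_zero.mp this
    subst hu0
    nlinarith
  · nlinarith [mul_nonneg (by linarith : (0:ℝ) ≤ a * b - u) (sub_nonneg.2 e2),
      mul_nonneg (by linarith : (0:ℝ) ≤ a * b + u) (sub_nonneg.2 e1), hab]

lemma endpoint_combine_le {fa fb a b u K : ℝ} (ha : 0 ≤ a) (hb : 0 ≤ b) (hu : |u| ≤ a * b)
    (e1 : (fa * a - fb * b) ^ 2 ≤ K * (a - b) ^ 2)
    (e2 : (fa * a + fb * b) ^ 2 ≤ K * (a + b) ^ 2) :
    (fa * a) ^ 2 + (fb * b) ^ 2 - 2 * (fa * fb) * u ≤ K * (a ^ 2 + b ^ 2 - 2 * u) := by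
  obtain ⟨h1, h2⟩ := abs_le.mp hu
  rcases eq_or_lt_of_le (mul_nonneg ha hb) with h | hab
  · have hu0 : u = 0 := by
      have := abs_nonneg u
      have h2' : |u| ≤ 0 := by linarith [hu, h.symm]
      have : |u| = 0 := le_antisymm h2' (abs_nonneg u)
      exact abs_eq_zero.mp this
    subst hu0
    nlinarith
  · nlinarith [mul_nonneg (by linarith : (0:ℝ) ≤ a * b - u) (sub_nonneg.2 e2),
      mul_nonneg (by linarith : (0:ℝ) ≤ a * b + u) (sub_nonneg.2 e1), hab]

open scoped RealInnerProductSpace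




lemma rpow_sq (A : ℝ) (hA : 0 ≤ A) (t : ℝ) : (A ^ t) ^ 2 = A ^ (2 * t) := by
  rw [← Real.rpow_natCast (A ^ t) 2, ← Real.rpow_mul hA]
  norm_num
  rw [mul_comm]

/-- Lower bound: `c * A^s * ‖P-Q‖² ≤ ‖F(P)-F(Q)‖²`. -/
lemma vlower {s : ℝ} (hs : -1 < s) :
    ∃ c : ℝ, 0 < c ∧ ∀ κ : ℝ, 0 ≤ κ → ∀ P Q : E,
      c * ((κ + ‖P‖ + ‖Q‖) ^ s * ‖P - Q‖ ^ 2)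
        ≤ ‖(κ + ‖P‖) ^ (s / 2) • P - (κ + ‖Q‖) ^ (s / 2) • Q‖ ^ 2 := by
  have ht : -1 < s / 2 := by linarith
  obtain ⟨c1, hc1, H1⟩ := slower ht
  obtain ⟨c2, hc2, H2⟩ := santilow ht
  set c : ℝ := min c1 c2 with hc
  have hc0 : 0 < c := lt_min hc1 hc2
  refine ⟨c ^ 2, by positivity, fun κ hκ P Q => ?_⟩
  set a : ℝ := ‖P‖ with ha'
  set b : ℝ := ‖Q‖ with hb'
  have ha : 0 ≤ a := norm_nonneg _
  have hb : 0 ≤ b := norm_nonneg _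
  set A : ℝ := κ + a + b with hA'
  have hA : 0 ≤ A := by positivity
  set t : ℝ := s / 2 with ht'
  set fa : ℝ := (κ + a) ^ t with hfa
  set fb : ℝ := (κ + b) ^ t with hfb
  have hfa0 : 0 ≤ fa := Real.rpow_nonneg (by linarith) _
  have hfb0 : 0 ≤ fb := Real.rpow_nonneg (by linarith) _
  have hAt : 0 ≤ A ^ t := Real.rpow_nonneg hA _
  -- endpoint 1 : squared difference
  have e1 : (c * A ^ t) ^ 2 * (a - b) ^ 2 ≤ (fa * a - fb * b) ^ 2 := by
    rcases le_total b a with h | h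
    · have h1 := H1 κ a b hκ hb h
      have h2 : c * (A ^ t * (a - b)) ≤ fa * a - fb * b := by
        calc c * (A ^ t * (a - b)) ≤ c1 * (A ^ t * (a - b)) := by
              apply mul_le_mul_of_nonneg_right (min_le_left _ _)
              exact mul_nonneg hAt (by linarith)
          _ ≤ fa * a - fb * b := h1
      have h3 : 0 ≤ c * (A ^ t * (a - b)) := by
        apply mul_nonneg hc0.le (mul_nonneg hAt (by linarith))
      calc (c * A ^ t) ^ 2 * (a - b) ^ 2 = (c * (A ^ t * (a - b))) ^ 2 := by ring
        _ ≤ (fa * a - fb * b) ^ 2 := by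
            have := pow_le_pow_left₀ h3 h2 2
            nlinarith [this]
    · have hA2 : κ + b + a = A := by rw [hA']; ring
      have h1 := H1 κ b a hκ ha h
      rw [hA2] at h1
      have h2 : c * (A ^ t * (b - a)) ≤ fb * b - fa * a := by
        calc c * (A ^ t * (b - a)) ≤ c1 * (A ^ t * (b - a)) := by
              apply mul_le_mul_of_nonneg_right (min_le_left _ _)
              exact mul_nonneg hAt (by linarith)
          _ ≤ fb * b - fa * a := h1
      have h3 : 0 ≤ c * (A ^ t * (b - a)) := by
        apply mul_nonneg hc0.le (mul_nonneg hAt (by linarith))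
      have h4 := pow_le_pow_left₀ h3 h2 2
      calc (c * A ^ t) ^ 2 * (a - b) ^ 2 = (c * (A ^ t * (b - a))) ^ 2 := by ring
        _ ≤ (fb * b - fa * a) ^ 2 := h4
        _ = (fa * a - fb * b) ^ 2 := by ring
  -- endpoint 2 : squared sum
  have e2 : (c * A ^ t) ^ 2 * (a + b) ^ 2 ≤ (fa * a + fb * b) ^ 2 := by
    have h1 := H2 κ a b hκ ha hb
    have h2 : c * (A ^ t * (a + b)) ≤ fa * a + fb * b := by
      calc c * (A ^ t * (a + b)) ≤ c2 * (A ^ t * (a + b)) := by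
            apply mul_le_mul_of_nonneg_right (min_le_right _ _)
            exact mul_nonneg hAt (by linarith)
        _ ≤ fa * a + fb * b := h1
    have h3 : 0 ≤ c * (A ^ t * (a + b)) := by
      apply mul_nonneg hc0.le (mul_nonneg hAt (by linarith))
    have h4 := pow_le_pow_left₀ h3 h2 2
    calc (c * A ^ t) ^ 2 * (a + b) ^ 2 = (c * (A ^ t * (a + b))) ^ 2 := by ring
      _ ≤ (fa * a + fb * b) ^ 2 := h4
  -- combine
  have hu : |⟪P, Q⟫| ≤ a * b := abs_real_inner_le_norm P Q
  have key := endpoint_combine_ge (fa := fa) (fb := fb) (u := ⟪P, Q⟫)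
    (K := (c * A ^ t) ^ 2) ha hb hu e1 e2
  have expand1 : ‖fa • P - fb • Q‖ ^ 2
      = (fa * a) ^ 2 + (fb * b) ^ 2 - 2 * (fa * fb) * ⟪P, Q⟫ :=
    expand_norm_smul_sub fa fb hfa0 hfb0 P Q
  have expand2 : ‖P - Q‖ ^ 2 = a ^ 2 + b ^ 2 - 2 * ⟪P, Q⟫ := by
    rw [norm_sub_sq_real]; ring
  have hAs : A ^ s = (A ^ t) ^ 2 := by
    rw [rpow_sq A hA t]
    congr 1
    rw [ht']; ring
  rw [expand1, expand2, hAs]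
  calc c ^ 2 * ((A ^ t) ^ 2 * (a ^ 2 + b ^ 2 - 2 * ⟪P, Q⟫))
      = (c * A ^ t) ^ 2 * (a ^ 2 + b ^ 2 - 2 * ⟪P, Q⟫) := by ring
    _ ≤ _ := key

open scoped RealInnerProductSpace



/-- Upper bound: `‖S(P)-S(Q)‖ ≤ C * A^s * ‖P-Q‖`. -/
lemma vupperS {s : ℝ} (hs : -1 < s) :
    ∃ C : ℝ, 0 < C ∧ ∀ κ : ℝ, 0 ≤ κ → ∀ P Q : E,
      ‖(κ + ‖P‖) ^ s • P - (κ + ‖Q‖) ^ s • Q‖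
        ≤ C * ((κ + ‖P‖ + ‖Q‖) ^ s * ‖P - Q‖) := by
  obtain ⟨C1, hC1, H1⟩ := supper hs
  obtain ⟨C2, hC2, H2⟩ := santiup hs
  set C : ℝ := max C1 C2 with hC
  have hC0 : 0 < C := lt_max_of_lt_left hC1
  refine ⟨C, hC0, fun κ hκ P Q => ?_⟩
  set a : ℝ := ‖P‖ with ha'
  set b : ℝ := ‖Q‖ with hb'
  have ha : 0 ≤ a := norm_nonneg _
  have hb : 0 ≤ b := norm_nonneg _
  set A : ℝ := κ + a + b with hA'
  have hA : 0 ≤ A := by positivity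
  set fa : ℝ := (κ + a) ^ s with hfa
  set fb : ℝ := (κ + b) ^ s with hfb
  have hfa0 : 0 ≤ fa := Real.rpow_nonneg (by linarith) _
  have hfb0 : 0 ≤ fb := Real.rpow_nonneg (by linarith) _
  have hAt : 0 ≤ A ^ s := Real.rpow_nonneg hA _
  have e1 : (fa * a - fb * b) ^ 2 ≤ (C * A ^ s) ^ 2 * (a - b) ^ 2 := by
    rcases le_total b a with h | h
    · have h1 := H1 κ a b hκ hb h
      have hmono : fb * b ≤ fa * a := gmono (by linarith) hκ hb h
      have h2 : fa * a - fb * b ≤ C * (A ^ s * (a - b)) := by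
        calc fa * a - fb * b ≤ C1 * (A ^ s * (a - b)) := h1
          _ ≤ C * (A ^ s * (a - b)) := by
              apply mul_le_mul_of_nonneg_right (le_max_left _ _)
              exact mul_nonneg hAt (by linarith)
      have h4 := pow_le_pow_left₀ (by linarith : (0:ℝ) ≤ fa * a - fb * b) h2 2
      calc (fa * a - fb * b) ^ 2 ≤ (C * (A ^ s * (a - b))) ^ 2 := h4
        _ = (C * A ^ s) ^ 2 * (a - b) ^ 2 := by ring
    · have hA2 : κ + b + a = A := by rw [hA']; ring
      have h1 := H1 κ b a hκ ha h
      rw [hA2] at h1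
      have hmono : fa * a ≤ fb * b := gmono (by linarith) hκ ha h
      have h2 : fb * b - fa * a ≤ C * (A ^ s * (b - a)) := by
        calc fb * b - fa * a ≤ C1 * (A ^ s * (b - a)) := h1
          _ ≤ C * (A ^ s * (b - a)) := by
              apply mul_le_mul_of_nonneg_right (le_max_left _ _)
              exact mul_nonneg hAt (by linarith)
      have h4 := pow_le_pow_left₀ (by linarith : (0:ℝ) ≤ fb * b - fa * a) h2 2
      calc (fa * a - fb * b) ^ 2 = (fb * b - fa * a) ^ 2 := by ring
        _ ≤ (C * (A ^ s * (b - a))) ^ 2 := h4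
        _ = (C * A ^ s) ^ 2 * (a - b) ^ 2 := by ring
  have e2 : (fa * a + fb * b) ^ 2 ≤ (C * A ^ s) ^ 2 * (a + b) ^ 2 := by
    have h1 := H2 κ a b hκ ha hb
    have h2 : fa * a + fb * b ≤ C * (A ^ s * (a + b)) := by
      calc fa * a + fb * b ≤ C2 * (A ^ s * (a + b)) := h1
        _ ≤ C * (A ^ s * (a + b)) := by
            apply mul_le_mul_of_nonneg_right (le_max_right _ _)
            exact mul_nonneg hAt (by linarith)
    have h4 := pow_le_pow_left₀ (by positivity : (0:ℝ) ≤ fa * a + fb * b) h2 2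
    calc (fa * a + fb * b) ^ 2 ≤ (C * (A ^ s * (a + b))) ^ 2 := h4
      _ = (C * A ^ s) ^ 2 * (a + b) ^ 2 := by ring
  have hu : |⟪P, Q⟫| ≤ a * b := abs_real_inner_le_norm P Q
  have key := endpoint_combine_le (fa := fa) (fb := fb) (u := ⟪P, Q⟫)
    (K := (C * A ^ s) ^ 2) ha hb hu e1 e2
  have expand1 : ‖fa • P - fb • Q‖ ^ 2
      = (fa * a) ^ 2 + (fb * b) ^ 2 - 2 * (fa * fb) * ⟪P, Q⟫ :=
    expand_norm_smul_sub fa fb hfa0 hfb0 P Q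
  have expand2 : ‖P - Q‖ ^ 2 = a ^ 2 + b ^ 2 - 2 * ⟪P, Q⟫ := by
    rw [norm_sub_sq_real]; ring
  have sq_ineq : ‖fa • P - fb • Q‖ ^ 2 ≤ (C * (A ^ s * ‖P - Q‖)) ^ 2 := by
    rw [expand1]
    calc (fa * a) ^ 2 + (fb * b) ^ 2 - 2 * (fa * fb) * ⟪P, Q⟫
        ≤ (C * A ^ s) ^ 2 * (a ^ 2 + b ^ 2 - 2 * ⟪P, Q⟫) := key
      _ = (C * A ^ s) ^ 2 * ‖P - Q‖ ^ 2 := by rw [expand2]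
      _ = (C * (A ^ s * ‖P - Q‖)) ^ 2 := by ring
  have hrhs : 0 ≤ C * (A ^ s * ‖P - Q‖) := by positivity
  exact (pow_le_pow_iff_left₀ (norm_nonneg _) hrhs two_ne_zero).mp sq_ineq


end VectorLemmas

end Stmt12Aux

/-- (Young-type inequality, Lemma `lem:young2`, for constant exponent `q`.)
Let `q ∈ (1,∞)` and `κ ≥ 0`. For every `δ > 0` there is `C_δ ≥ 1`, depending only on `δ`
and `q`, such that for all matrices `P, Q, R`:
`(S(P) − S(Q)) : (R − Q) ≤ δ |F(P) − F(Q)|² + C_δ |F(R) − F(Q)|²`. -/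
theorem stmt12 (N n : ℕ) (q : ℝ) (hq : 1 < q) (δ : ℝ) (hδ : 0 < δ) :
    ∃ C : ℝ, 1 ≤ C ∧ ∀ κ : ℝ, 0 ≤ κ →
      ∀ P Q R : EuclideanSpace ℝ (Fin N × Fin n),
        ⟪(κ + ‖P‖) ^ (q - 2) • P - (κ + ‖Q‖) ^ (q - 2) • Q, R - Q⟫ ≤
          δ * ‖(κ + ‖P‖) ^ ((q - 2) / 2) • P - (κ + ‖Q‖) ^ ((q - 2) / 2) • Q‖ ^ 2 +
            C * ‖(κ + ‖R‖) ^ ((q - 2) / 2) • R - (κ + ‖Q‖) ^ ((q - 2) / 2) • Q‖ ^ 2 := by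
  set s : ℝ := q - 2 with hs'
  have hs : -1 < s := by rw [hs']; linarith
  obtain ⟨cF, hcF, HF⟩ := Stmt12Aux.vlower (E := EuclideanSpace ℝ (Fin N × Fin n)) hs
  obtain ⟨CS, hCS, HS⟩ := Stmt12Aux.vupperS (E := EuclideanSpace ℝ (Fin N × Fin n)) hs
  set B : ℝ := 2 ^ |s| with hB'
  have hB : 0 < B := Real.rpow_pos_of_pos (by norm_num) _
  set K : ℝ := CS * B with hK'
  have hK : 0 < K := by positivity
  set M : ℝ := B / cF with hM'
  have hM : 0 < M := by positivity
  set ε : ℝ := min 1 (δ / (K * M)) with hε'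
  have hε0 : 0 < ε := lt_min one_pos (by positivity)
  have hε1 : ε ≤ 1 := min_le_left _ _
  have hεpow : (0:ℝ) < ε ^ (-(1 + |s|)) := Real.rpow_pos_of_pos hε0 _
  refine ⟨max 1 (K * M * ε ^ (-(1 + |s|))), le_max_left _ _, fun κ hκ P Q R => ?_⟩
  set a : ℝ := ‖P‖
  set b : ℝ := ‖Q‖
  set r : ℝ := ‖R‖
  set d : ℝ := ‖P - Q‖ with hd'
  set e : ℝ := ‖R - Q‖ with he'
  have ha : 0 ≤ a := norm_nonneg _
  have hb : 0 ≤ b := norm_nonneg _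
  have hr : 0 ≤ r := norm_nonneg _
  have hd : 0 ≤ d := norm_nonneg _
  have he : 0 ≤ e := norm_nonneg _
  have habd : a ≤ b + d := norm_le_norm_add_norm_sub' P Q
  have hdab : d ≤ a + b := norm_sub_le P Q
  have hrbe : r ≤ b + e := norm_le_norm_add_norm_sub' R Q
  have herb : e ≤ r + b := norm_sub_le R Q
  set σ : ℝ := κ + b with hσ'
  have hσ : 0 ≤ σ := by positivity
  -- comparisons
  have comp1 : (κ + a + b) ^ s ≤ B * (σ + d) ^ s := by
    apply Stmt12Aux.rpow_comparable (by positivity) (by positivity) (by linarith) (by linarith)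
  have comp1' : (σ + d) ^ s ≤ B * (κ + a + b) ^ s := by
    apply Stmt12Aux.rpow_comparable (by positivity) (by positivity) (by linarith) (by linarith)
  have comp2 : (σ + e) ^ s ≤ B * (κ + r + b) ^ s := by
    apply Stmt12Aux.rpow_comparable (by positivity) (by positivity) (by linarith) (by linarith)
  -- Cauchy-Schwarz
  have step1 : ⟪(κ + a) ^ s • P - (κ + b) ^ s • Q, R - Q⟫
      ≤ ‖(κ + a) ^ s • P - (κ + b) ^ s • Q‖ * e := real_inner_le_norm _ _
  have step2 : ‖(κ + a) ^ s • P - (κ + b) ^ s • Q‖ ≤ CS * ((κ + a + b) ^ s * d) :=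
    HS κ hκ P Q
  have step3 : ‖(κ + a) ^ s • P - (κ + b) ^ s • Q‖ ≤ K * ((σ + d) ^ s * d) := by
    calc ‖(κ + a) ^ s • P - (κ + b) ^ s • Q‖ ≤ CS * ((κ + a + b) ^ s * d) := step2
      _ ≤ CS * (B * (σ + d) ^ s * d) := by
          apply mul_le_mul_of_nonneg_left _ hCS.le
          exact mul_le_mul_of_nonneg_right comp1 hd
      _ = K * ((σ + d) ^ s * d) := by rw [hK']; ring
  have step4 : ⟪(κ + a) ^ s • P - (κ + b) ^ s • Q, R - Q⟫ ≤ K * ((σ + d) ^ s * d * e) := by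
    calc ⟪(κ + a) ^ s • P - (κ + b) ^ s • Q, R - Q⟫
        ≤ ‖(κ + a) ^ s • P - (κ + b) ^ s • Q‖ * e := step1
      _ ≤ K * ((σ + d) ^ s * d) * e := mul_le_mul_of_nonneg_right step3 he
      _ = K * ((σ + d) ^ s * d * e) := by ring
  have step5 := Stmt12Aux.young_shift hs hε0 hε1 σ d e hσ hd he
  -- bound the two shifted quantities by the F-differences
  have hFP := HF κ hκ P Q
  have hFR := HF κ hκ R Q
  have step6 : (σ + d) ^ s * d ^ 2
      ≤ M * ‖(κ + a) ^ (s/2) • P - (κ + b) ^ (s/2) • Q‖ ^ 2 := by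
    calc (σ + d) ^ s * d ^ 2 ≤ B * (κ + a + b) ^ s * d ^ 2 :=
          mul_le_mul_of_nonneg_right comp1' (sq_nonneg d)
      _ = (B / cF) * (cF * ((κ + a + b) ^ s * d ^ 2)) := by field_simp
      _ ≤ M * ‖(κ + a) ^ (s/2) • P - (κ + b) ^ (s/2) • Q‖ ^ 2 := by
          rw [hM']
          exact mul_le_mul_of_nonneg_left hFP (by positivity)
  have step7 : (σ + e) ^ s * e ^ 2
      ≤ M * ‖(κ + r) ^ (s/2) • R - (κ + b) ^ (s/2) • Q‖ ^ 2 := by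
    calc (σ + e) ^ s * e ^ 2 ≤ B * (κ + r + b) ^ s * e ^ 2 :=
          mul_le_mul_of_nonneg_right comp2 (sq_nonneg e)
      _ = (B / cF) * (cF * ((κ + r + b) ^ s * e ^ 2)) := by field_simp
      _ ≤ M * ‖(κ + r) ^ (s/2) • R - (κ + b) ^ (s/2) • Q‖ ^ 2 := by
          rw [hM']
          exact mul_le_mul_of_nonneg_left hFR (by positivity)
  -- put everything together
  have hKεδ : K * ε * M ≤ δ := by
    have h1 : ε ≤ δ / (K * M) := min_le_right _ _
    have h2 : K * M > 0 := by positivity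
    calc K * ε * M = (K * M) * ε := by ring
      _ ≤ (K * M) * (δ / (K * M)) := mul_le_mul_of_nonneg_left h1 h2.le
      _ = δ := by field_simp
  have hN1 : 0 ≤ ‖(κ + a) ^ (s/2) • P - (κ + b) ^ (s/2) • Q‖ ^ 2 := sq_nonneg _
  have hN2 : 0 ≤ ‖(κ + r) ^ (s/2) • R - (κ + b) ^ (s/2) • Q‖ ^ 2 := sq_nonneg _
  calc ⟪(κ + a) ^ s • P - (κ + b) ^ s • Q, R - Q⟫
      ≤ K * ((σ + d) ^ s * d * e) := step4
    _ ≤ K * (ε * ((σ + d) ^ s * d ^ 2) + ε ^ (-(1 + |s|)) * ((σ + e) ^ s * e ^ 2)) :=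
        mul_le_mul_of_nonneg_left step5 hK.le
    _ ≤ K * (ε * (M * ‖(κ + a) ^ (s/2) • P - (κ + b) ^ (s/2) • Q‖ ^ 2)
          + ε ^ (-(1 + |s|)) * (M * ‖(κ + r) ^ (s/2) • R - (κ + b) ^ (s/2) • Q‖ ^ 2)) := by
        apply mul_le_mul_of_nonneg_left _ hK.le
        apply add_le_add
        · exact mul_le_mul_of_nonneg_left step6 hε0.le
        · exact mul_le_mul_of_nonneg_left step7 hεpow.le
    _ = (K * ε * M) * ‖(κ + a) ^ (s/2) • P - (κ + b) ^ (s/2) • Q‖ ^ 2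
          + (K * M * ε ^ (-(1 + |s|))) * ‖(κ + r) ^ (s/2) • R - (κ + b) ^ (s/2) • Q‖ ^ 2 := by
        ring
    _ ≤ δ * ‖(κ + a) ^ (s/2) • P - (κ + b) ^ (s/2) • Q‖ ^ 2
          + max 1 (K * M * ε ^ (-(1 + |s|))) * ‖(κ + r) ^ (s/2) • R - (κ + b) ^ (s/2) • Q‖ ^ 2 := by
        apply add_le_add
        · exact mul_le_mul_of_nonneg_right hKεδ hN1
        · exact mul_le_mul_of_nonneg_right (le_max_right _ _) hN2
end

section
/- Let q ∈ (1,∞) and κ ≥ 0. There are constants 0 < c ≤ C < ∞ depending only on q such that for all a, t ≥ 0 with κ + a + t > 0: c (κ + a + t)^{q−2} t² ≤ ρ_a(t) ≤ C (κ + a + t)^{q−2} t². -/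
/-- The shifted `N`-function `ρ_a(t) = ∫₀ᵗ (κ+a+τ)^{q−2} τ dτ` associated with
`ρ(t) = ∫₀ᵗ (κ+s)^{q−2} s ds`. -/
noncomputable def rhoShift (κ q a t : ℝ) : ℝ :=
  ∫ τ in (0:ℝ)..t, (κ + a + τ) ^ (q - 2) * τ

lemma g_mono (b q : ℝ) (hb : 0 ≤ b) (hq : 1 < q) :
    MonotoneOn (fun τ => (b + τ) ^ (q - 2) * τ) (Set.Ici (0:ℝ)) := by
  intro x hx y hy hxy
  simp only [Set.mem_Ici] at hx hy
  by_cases hx0 : b + x = 0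
  · have hxx : x = 0 := by linarith [(by linarith : b + x = 0)]
    simp only [hxx, mul_zero]
    exact mul_nonneg (Real.rpow_nonneg (by linarith) _) hy
  · have hpx : 0 < b + x := lt_of_le_of_ne (by linarith) (Ne.symm hx0)
    have hpy : 0 < b + y := by linarith
    have key : ∀ z : ℝ, 0 < b + z → (b + z) ^ (q - 2) * z = (b + z) ^ (q - 1) * (z / (b + z)) := by
      intro z hz
      rw [show q - 1 = (q - 2) + 1 by ring, Real.rpow_add hz, Real.rpow_one]
      field_simp
    simp only []
    rw [key x hpx, key y hpy]
    apply mul_le_mul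
    · exact Real.rpow_le_rpow hpx.le (by linarith) (by linarith)
    · rw [div_le_div_iff₀ hpx hpy]
      nlinarith
    · exact div_nonneg hx hpx.le
    · exact Real.rpow_nonneg hpy.le _

/-- (Lemma `lem:shift_sim`: `ρ_a(t) ∼ (κ+a+t)^{q−2} t²`.)
Let `q ∈ (1,∞)` and `κ ≥ 0`. There are constants `0 < c ≤ C < ∞` depending only on `q`
such that for all `a, t ≥ 0` with `κ + a + t > 0`:
`c (κ+a+t)^{q−2} t² ≤ ρ_a(t) ≤ C (κ+a+t)^{q−2} t²`. -/
theorem stmt13 (q : ℝ) (hq : 1 < q) :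
    ∃ c C : ℝ, 0 < c ∧ c ≤ C ∧ ∀ κ a t : ℝ, 0 ≤ κ → 0 ≤ a → 0 ≤ t → 0 < κ + a + t →
      c * (κ + a + t) ^ (q - 2) * t ^ 2 ≤ rhoShift κ q a t ∧
      rhoShift κ q a t ≤ C * (κ + a + t) ^ (q - 2) * t ^ 2 := by
  set m : ℝ := min 1 ((2:ℝ) ^ (2 - q)) with hm
  have hm0 : 0 < m := lt_min one_pos (Real.rpow_pos_of_pos two_pos _)
  have hm1 : m ≤ 1 := min_le_left _ _
  refine ⟨m / 4, 1, by positivity, by linarith, ?_⟩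
  intro κ a t hκ ha ht hpos
  set b : ℝ := κ + a with hbdef
  have hb : 0 ≤ b := by positivity
  rcases eq_or_lt_of_le ht with h0 | htpos
  · simp [rhoShift, ← h0]
  -- t > 0
  have hbt : 0 < b + t := hpos
  have hmono : MonotoneOn (fun τ => (b + τ) ^ (q - 2) * τ) (Set.Icc (0:ℝ) t) :=
    (g_mono b q hb hq).mono Set.Icc_subset_Ici_self
  have hint : IntervalIntegrable (fun τ => (b + τ) ^ (q - 2) * τ) MeasureTheory.volume 0 t := by
    apply MonotoneOn.intervalIntegrable
    rwa [Set.uIcc_of_le ht]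
  have hrho : rhoShift κ q a t = ∫ τ in (0:ℝ)..t, (b + τ) ^ (q - 2) * τ := rfl
  constructor
  · -- lower bound
    have hint1 : IntervalIntegrable (fun τ => (b + τ) ^ (q - 2) * τ) MeasureTheory.volume 0 (t/2) :=
      hint.mono_set (Set.uIcc_subset_uIcc (by rw [Set.uIcc_of_le ht]; exact ⟨le_refl _, ht⟩)
        (by rw [Set.uIcc_of_le ht]; constructor <;> linarith))
    have hint2 : IntervalIntegrable (fun τ => (b + τ) ^ (q - 2) * τ) MeasureTheory.volume (t/2) t :=
      hint.mono_set (Set.uIcc_subset_uIcc (by rw [Set.uIcc_of_le ht]; constructor <;> linarith)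
        (by rw [Set.uIcc_of_le ht]; exact ⟨ht, le_refl _⟩))
    have hsplit : rhoShift κ q a t =
        (∫ τ in (0:ℝ)..(t/2), (b + τ) ^ (q - 2) * τ) +
        ∫ τ in (t/2)..t, (b + τ) ^ (q - 2) * τ := by
      rw [hrho, ← intervalIntegral.integral_add_adjacent_intervals hint1 hint2]
    have h1 : (0:ℝ) ≤ ∫ τ in (0:ℝ)..(t/2), (b + τ) ^ (q - 2) * τ := by
      apply intervalIntegral.integral_nonneg (by linarith)
      intro x hx
      exact mul_nonneg (Real.rpow_nonneg (by linarith [hx.1]) _) hx.1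
    have h2 : (t/2) * ((b + t/2) ^ (q - 2) * (t/2)) ≤
        ∫ τ in (t/2)..t, (b + τ) ^ (q - 2) * τ := by
      have hconst : (∫ _ in (t/2)..t, (b + t/2) ^ (q - 2) * (t/2) : ℝ)
          = (t - t/2) * ((b + t/2) ^ (q - 2) * (t/2)) := by
        rw [intervalIntegral.integral_const, smul_eq_mul]
      have hle : ∫ _ in (t/2)..t, (b + t/2) ^ (q - 2) * (t/2) ≤
          ∫ τ in (t/2)..t, (b + τ) ^ (q - 2) * τ := by
        apply intervalIntegral.integral_mono_on (by linarith) intervalIntegrable_const hint2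
        intro x hx
        exact hmono ⟨by linarith, by linarith⟩ ⟨by linarith [hx.1], hx.2⟩ hx.1
      calc (t/2) * ((b + t/2) ^ (q - 2) * (t/2))
          = (t - t/2) * ((b + t/2) ^ (q - 2) * (t/2)) := by ring_nf
        _ = ∫ _ in (t/2)..t, (b + t/2) ^ (q - 2) * (t/2) := hconst.symm
        _ ≤ _ := hle
    have hclaim : m * (b + t) ^ (q - 2) ≤ (b + t/2) ^ (q - 2) := by
      rcases le_or_gt 2 q with hq2 | hq2
      · have e1 : (2:ℝ) ^ (2 - q) * (b + t) ^ (q - 2) = ((b + t) / 2) ^ (q - 2) := by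
          rw [Real.div_rpow hbt.le (by norm_num), show (2:ℝ) - q = -(q - 2) by ring,
            Real.rpow_neg (by norm_num)]
          field_simp
        have e2 : ((b + t) / 2) ^ (q - 2) ≤ (b + t/2) ^ (q - 2) :=
          Real.rpow_le_rpow (by positivity) (by linarith) (by linarith)
        calc m * (b + t) ^ (q - 2) ≤ (2:ℝ) ^ (2 - q) * (b + t) ^ (q - 2) :=
              mul_le_mul_of_nonneg_right (min_le_right _ _) (Real.rpow_nonneg hbt.le _)
          _ = ((b + t) / 2) ^ (q - 2) := e1
          _ ≤ _ := e2
      · have e2 : (b + t) ^ (q - 2) ≤ (b + t/2) ^ (q - 2) :=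
          Real.rpow_le_rpow_of_nonpos (by linarith) (by linarith) (by linarith)
        calc m * (b + t) ^ (q - 2) ≤ 1 * (b + t) ^ (q - 2) :=
              mul_le_mul_of_nonneg_right hm1 (Real.rpow_nonneg hbt.le _)
          _ = (b + t) ^ (q - 2) := one_mul _
          _ ≤ _ := e2
    have : m / 4 * (b + t) ^ (q - 2) * t ^ 2 ≤ (t/2) * ((b + t/2) ^ (q - 2) * (t/2)) := by
      nlinarith [sq_nonneg t]
    calc m / 4 * (κ + a + t) ^ (q - 2) * t ^ 2
        = m / 4 * (b + t) ^ (q - 2) * t ^ 2 := rfl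
      _ ≤ (t/2) * ((b + t/2) ^ (q - 2) * (t/2)) := this
      _ ≤ ∫ τ in (t/2)..t, (b + τ) ^ (q - 2) * τ := h2
      _ ≤ rhoShift κ q a t := by rw [hsplit]; linarith
  · -- upper bound
    have hle : rhoShift κ q a t ≤ ∫ _ in (0:ℝ)..t, (b + t) ^ (q - 2) * t := by
      rw [hrho]
      apply intervalIntegral.integral_mono_on ht hint intervalIntegrable_const
      intro x hx
      exact hmono ⟨hx.1, hx.2⟩ ⟨ht, le_refl _⟩ hx.2
    calc rhoShift κ q a t ≤ ∫ _ in (0:ℝ)..t, (b + t) ^ (q - 2) * t := hle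
      _ = (t - 0) * ((b + t) ^ (q - 2) * t) := by
          rw [intervalIntegral.integral_const, smul_eq_mul]
      _ = 1 * (κ + a + t) ^ (q - 2) * t ^ 2 := by ring
end

section
/- Let q ∈ (1,∞) and κ ≥ 0. For every δ > 0 there is a constant C_δ ≥ 1, depending only on δ and q, such that for all P, Q ∈ ℝ^{N×n} and all t ≥ 0: ρ_{|P|}(t) ≤ C_δ ρ_{|Q|}(t) + δ ρ_{|P|}(|P − Q|), and (ρ_{|P|})*(t) ≤ C_δ (ρ_{|Q|})*(t) + δ ρ_{|P|}(|P − Q|). (|P| denotes the Frobenius norm.) -/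
/-- The convex conjugate `(ρ_a)*(t) = sup_{s ≥ 0} (s t − ρ_a(s))`. -/
noncomputable def rhoShiftConj (κ q a t : ℝ) : ℝ :=
  sSup {v : ℝ | ∃ s : ℝ, 0 ≤ s ∧ v = s * t - rhoShift κ q a s}

open MeasureTheory intervalIntegral Set

namespace S14

noncomputable def R (q c t : ℝ) : ℝ := ∫ τ in (0:ℝ)..t, (c + τ) ^ (q - 2) * τ

noncomputable def Rc (q c t : ℝ) : ℝ := sSup {v : ℝ | ∃ s, 0 ≤ s ∧ v = s * t - R q c s}

variable {q c t s : ℝ}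

lemma integrable (hq : 1 < q) (hc : 0 ≤ c) (ht : 0 ≤ t) :
    IntervalIntegrable (fun τ => (c + τ) ^ (q - 2) * τ) volume 0 t := by
  rcases hc.eq_or_lt with h0 | h0
  · -- c = 0
    have hi : IntervalIntegrable (fun τ : ℝ => τ ^ (q - 1)) volume 0 t :=
      intervalIntegral.intervalIntegrable_rpow' (by linarith)
    refine hi.congr ?_
    intro τ hτ
    rw [uIoc_of_le ht] at hτ
    have hτ0 : 0 < τ := hτ.1
    show τ ^ (q-1) = (c + τ) ^ (q - 2) * τ
    rw [← h0, zero_add, ← Real.rpow_add_one hτ0.ne']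
    ring_nf
  · refine (ContinuousOn.mul ?_ continuousOn_id).intervalIntegrable
    refine ContinuousOn.rpow_const (by fun_prop) fun τ hτ => Or.inl ?_
    rw [uIcc_of_le ht] at hτ
    have := hτ.1
    positivity

lemma R_nonneg (hq : 1 < q) (hc : 0 ≤ c) (ht : 0 ≤ t) : 0 ≤ R q c t := by
  refine intervalIntegral.integral_nonneg ht fun τ hτ => ?_
  have h1 : 0 ≤ c + τ := by linarith [hτ.1]
  have h2 : 0 ≤ τ := hτ.1
  exact mul_nonneg (Real.rpow_nonneg h1 _) h2

lemma R_zero (hq : 1 < q) (hc : 0 ≤ c) : R q c 0 = 0 := by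
  simp [R]


variable {q c t s τ : ℝ}

noncomputable def phi (q c t : ℝ) : ℝ := (c + t) ^ (q - 2) * t ^ 2

lemma phi_nonneg (hc : 0 ≤ c) (ht : 0 ≤ t) : 0 ≤ phi q c t := by
  have : (0:ℝ) ≤ c + t := by linarith
  unfold phi; positivity

lemma phi_zero : phi q c 0 = 0 := by simp [phi]

-- pointwise key
lemma key_ratio (hc : 0 ≤ c) (htpos : 0 < t) (h0 : 0 ≤ τ) (h1 : τ ≤ t) :
    τ / t * (c + t) ≤ c + τ := by
  rw [div_mul_eq_mul_div, div_le_iff₀ htpos]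
  nlinarith

lemma rpow_ratio (hc : 0 ≤ c) (htpos : 0 < t) (hτpos : 0 < τ) (h1 : τ ≤ t) (hq2 : q ≤ 2) :
    (c + τ) ^ (q - 2) ≤ (c + t) ^ (q - 2) * t ^ (2 - q) * τ ^ (q - 2) := by
  have hr : (0:ℝ) < τ / t * (c + t) := by
    have : (0:ℝ) < c + t := by linarith
    positivity
  have h2 := Real.rpow_le_rpow_of_nonpos hr (key_ratio hc htpos hτpos.le h1) (by linarith : q - 2 ≤ 0)
  refine h2.trans (le_of_eq ?_)
  rw [Real.mul_rpow (by positivity) (by linarith : (0:ℝ) ≤ c + t),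
    Real.div_rpow hτpos.le htpos.le]
  rw [show (2:ℝ) - q = -(q-2) by ring, Real.rpow_neg htpos.le]
  field_simp



lemma R_le_phi (hq : 1 < q) (hc : 0 ≤ c) (ht : 0 ≤ t) : R q c t ≤ phi q c t := by
  rcases ht.eq_or_lt with h0 | htpos
  · rw [← h0, R_zero hq hc, phi_zero]
  rcases le_or_gt 2 q with hq2 | hq2
  · -- q ≥ 2 : integrand ≤ (c+t)^(q-2) * τ
    have hmono : ∀ τ ∈ Icc (0:ℝ) t, (c + τ) ^ (q - 2) * τ ≤ (c + t) ^ (q - 2) * τ := by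
      intro τ hτ
      have h1 : (0:ℝ) ≤ c + τ := by linarith [hτ.1]
      exact mul_le_mul_of_nonneg_right
        (Real.rpow_le_rpow h1 (by linarith [hτ.2]) (by linarith)) hτ.1
    have hInt2 : IntervalIntegrable (fun τ : ℝ => (c + t) ^ (q - 2) * τ) volume 0 t :=
      (continuous_const.mul continuous_id).intervalIntegrable 0 t
    calc R q c t ≤ ∫ τ in (0:ℝ)..t, (c + t) ^ (q - 2) * τ :=
          intervalIntegral.integral_mono_on htpos.le (integrable hq hc ht) hInt2 hmono
      _ = (c + t) ^ (q - 2) * (t^2/2) := by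
          rw [intervalIntegral.integral_const_mul, integral_id]; ring_nf
      _ ≤ phi q c t := by
          have : (0:ℝ) ≤ (c+t)^(q-2) := Real.rpow_nonneg (by linarith) _
          unfold phi; nlinarith [sq_nonneg t]
  · -- q < 2
    have hg : IntervalIntegrable (fun τ : ℝ => (c + t) ^ (q - 2) * t ^ (2 - q) * τ ^ (q - 1))
        volume 0 t :=
      (intervalIntegral.intervalIntegrable_rpow' (by linarith)).const_mul _
    have hmono : ∀ τ ∈ Icc (0:ℝ) t,
        (c + τ) ^ (q - 2) * τ ≤ (c + t) ^ (q - 2) * t ^ (2 - q) * τ ^ (q - 1) := by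
      intro τ hτ
      rcases hτ.1.eq_or_lt with h0' | hτpos
      · rw [← h0', Real.zero_rpow (by linarith : q - 1 ≠ 0)]
        simp
      have h2 := rpow_ratio hc htpos hτpos hτ.2 hq2.le
      calc (c + τ) ^ (q - 2) * τ
          ≤ ((c + t) ^ (q - 2) * t ^ (2 - q) * τ ^ (q - 2)) * τ :=
            mul_le_mul_of_nonneg_right h2 hτ.1
        _ = (c + t) ^ (q - 2) * t ^ (2 - q) * τ ^ (q - 1) := by
            rw [mul_assoc, ← Real.rpow_add_one hτpos.ne']; ring_nf
    calc R q c t ≤ ∫ τ in (0:ℝ)..t, (c + t) ^ (q - 2) * t ^ (2 - q) * τ ^ (q - 1) :=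
          intervalIntegral.integral_mono_on htpos.le (integrable hq hc ht) hg hmono
      _ = (c + t) ^ (q - 2) * t ^ (2 - q) * (t ^ q / q) := by
          rw [intervalIntegral.integral_const_mul, integral_rpow (Or.inl (by linarith))]
          rw [Real.zero_rpow (by linarith : q - 1 + 1 ≠ 0)]
          ring_nf
      _ ≤ phi q c t := by
          rw [mul_assoc]
          unfold phi
          refine mul_le_mul_of_nonneg_left ?_ (Real.rpow_nonneg (by linarith) _)
          have h2' : t ^ (2 - q) * t ^ q = t ^ (2:ℕ) := by
            rw [← Real.rpow_natCast t 2, ← Real.rpow_add htpos]; norm_num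
          rw [mul_div_assoc', h2', div_le_iff₀ (by linarith : (0:ℝ) < q)]
          nlinarith [sq_nonneg t]


lemma phi_le_R (hq : 1 < q) (hc : 0 ≤ c) (ht : 0 ≤ t) : phi q c t ≤ max q 2 * R q c t := by
  rcases ht.eq_or_lt with h0 | htpos
  · rw [← h0, R_zero hq hc, phi_zero, mul_zero]
  rcases le_or_gt 2 q with hq2 | hq2
  · -- q ≥ 2 : φ/q ≤ R
    have hg : IntervalIntegrable (fun τ : ℝ => (c + t) ^ (q - 2) * t ^ (2 - q) * τ ^ (q - 1))
        volume 0 t :=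
      (intervalIntegral.intervalIntegrable_rpow' (by linarith)).const_mul _
    have hmono : ∀ τ ∈ Icc (0:ℝ) t,
        (c + t) ^ (q - 2) * t ^ (2 - q) * τ ^ (q - 1) ≤ (c + τ) ^ (q - 2) * τ := by
      intro τ hτ
      rcases hτ.1.eq_or_lt with h0' | hτpos
      · rw [← h0', Real.zero_rpow (by linarith : q - 1 ≠ 0)]
        simp
      have hbase : (0:ℝ) ≤ τ / t * (c + t) := by
        have : (0:ℝ) ≤ c + t := by linarith
        positivity
      have h2 : (τ / t * (c + t)) ^ (q - 2) ≤ (c + τ) ^ (q - 2) :=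
        Real.rpow_le_rpow hbase (key_ratio hc htpos hτ.1 hτ.2) (by linarith)
      have h3 : (τ / t * (c + t)) ^ (q - 2)
          = (c + t) ^ (q - 2) * t ^ (2 - q) * τ ^ (q - 2) := by
        rw [Real.mul_rpow (by positivity) (by linarith : (0:ℝ) ≤ c + t),
          Real.div_rpow hτpos.le htpos.le,
          show (2:ℝ) - q = -(q-2) by ring, Real.rpow_neg htpos.le]
        field_simp
      calc (c + t) ^ (q - 2) * t ^ (2 - q) * τ ^ (q - 1)
          = ((c + t) ^ (q - 2) * t ^ (2 - q) * τ ^ (q - 2)) * τ := by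
            rw [mul_assoc ((c + t) ^ (q - 2) * t ^ (2 - q)), ← Real.rpow_add_one hτpos.ne']
            ring_nf
        _ ≤ (c + τ) ^ (q - 2) * τ := by
            rw [← h3]; exact mul_le_mul_of_nonneg_right h2 hτ.1
    have hRlow : (c + t) ^ (q - 2) * t ^ (2 - q) * (t ^ q / q) ≤ R q c t := by
      calc (c + t) ^ (q - 2) * t ^ (2 - q) * (t ^ q / q)
          = ∫ τ in (0:ℝ)..t, (c + t) ^ (q - 2) * t ^ (2 - q) * τ ^ (q - 1) := by
            rw [intervalIntegral.integral_const_mul, integral_rpow (Or.inl (by linarith)),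
              Real.zero_rpow (by linarith : q - 1 + 1 ≠ 0)]
            ring_nf
        _ ≤ R q c t := intervalIntegral.integral_mono_on htpos.le hg (integrable hq hc ht) hmono
    have hid : (c + t) ^ (q - 2) * t ^ (2 - q) * (t ^ q / q) = phi q c t / q := by
      unfold phi
      have h2' : t ^ (2 - q) * t ^ q = t ^ (2:ℕ) := by
        rw [← Real.rpow_natCast t 2, ← Real.rpow_add htpos]; norm_num
      rw [show (c + t) ^ (q - 2) * t ^ (2 - q) * (t ^ q / q)
          = ((c + t) ^ (q - 2) * (t ^ (2 - q) * t ^ q)) / q by ring, h2']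
    rw [hid] at hRlow
    have hqpos : (0:ℝ) < q := by linarith
    calc phi q c t = q * (phi q c t / q) := by field_simp
      _ ≤ q * R q c t := by exact mul_le_mul_of_nonneg_left hRlow hqpos.le
      _ ≤ max q 2 * R q c t :=
          mul_le_mul_of_nonneg_right (le_max_left _ _) (R_nonneg hq hc ht)
  · -- q < 2 : φ/2 ≤ R
    have hmono : ∀ τ ∈ Icc (0:ℝ) t,
        (c + t) ^ (q - 2) * τ ≤ (c + τ) ^ (q - 2) * τ := by
      intro τ hτ
      rcases hτ.1.eq_or_lt with h0' | hτpos
      · rw [← h0', mul_zero, mul_zero]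
      have hpos : (0:ℝ) < c + τ := by linarith
      exact mul_le_mul_of_nonneg_right
        (Real.rpow_le_rpow_of_nonpos hpos (by linarith [hτ.2]) (by linarith)) hτ.1
    have hInt2 : IntervalIntegrable (fun τ : ℝ => (c + t) ^ (q - 2) * τ) volume 0 t :=
      (continuous_const.mul continuous_id).intervalIntegrable 0 t
    have hRlow : (c + t) ^ (q - 2) * (t ^ 2 / 2) ≤ R q c t := by
      calc (c + t) ^ (q - 2) * (t ^ 2 / 2)
          = ∫ τ in (0:ℝ)..t, (c + t) ^ (q - 2) * τ := by
            rw [intervalIntegral.integral_const_mul, integral_id]; ring_nf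
        _ ≤ R q c t := intervalIntegral.integral_mono_on htpos.le hInt2 (integrable hq hc ht) hmono
    calc phi q c t = 2 * ((c + t) ^ (q - 2) * (t^2/2)) := by unfold phi; ring
      _ ≤ 2 * R q c t := by exact mul_le_mul_of_nonneg_left hRlow (by norm_num)
      _ ≤ max q 2 * R q c t :=
          mul_le_mul_of_nonneg_right (le_max_right _ _) (R_nonneg hq hc ht)


lemma rpow_base_comp {L u v : ℝ} (hq : 1 < q) (hL : 1 ≤ L) (hu : 0 < u) (hv : 0 < v)
    (h1 : u ≤ L * v) (h2 : v ≤ L * u) : u ^ (q - 2) ≤ L ^ |q - 2| * v ^ (q - 2) := by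
  have hL0 : (0:ℝ) < L := by linarith
  rcases le_or_gt 2 q with hq2 | hq2
  · rw [abs_of_nonneg (by linarith : (0:ℝ) ≤ q - 2)]
    calc u ^ (q-2) ≤ (L*v) ^ (q-2) := Real.rpow_le_rpow hu.le h1 (by linarith)
      _ = L ^ (q-2) * v ^ (q-2) := Real.mul_rpow hL0.le hv.le
  · rw [abs_of_neg (by linarith : q - 2 < 0)]
    have h3 : (L * u) ^ (q-2) ≤ v ^ (q-2) :=
      Real.rpow_le_rpow_of_nonpos hv h2 (by linarith)
    rw [Real.mul_rpow hL0.le hu.le] at h3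
    have h4 := mul_le_mul_of_nonneg_left h3 (Real.rpow_nonneg hL0.le (-(q-2)))
    calc u ^ (q-2) = L ^ (-(q-2)) * (L ^ (q-2) * u ^ (q-2)) := by
          rw [← mul_assoc, ← Real.rpow_add hL0]
          norm_num
      _ ≤ L ^ (-(q-2)) * v ^ (q-2) := h4

lemma phi_repr {x : ℝ} (hx : 0 ≤ x) (ht : 0 < t) :
    phi q x t = (t / (x + t)) ^ (2 - q) * t ^ q := by
  have hxt : (0:ℝ) < x + t := by linarith
  have e1 : (t/(x+t))^(2-q) = t^(2-q) * (x+t)^(q-2) := by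
    rw [Real.div_rpow ht.le hxt.le, show (q:ℝ)-2 = -(2-q) by ring,
      Real.rpow_neg hxt.le, div_eq_mul_inv]
  have e2 : t^(2-q)*t^q = (t:ℝ)^(2:ℕ) := by
    rw [← Real.rpow_natCast t 2, ← Real.rpow_add ht]; norm_num
  unfold phi
  rw [e1, ← e2]
  ring

lemma phi_shift {x y d θ : ℝ} (hq : 1 < q) (hx : 0 ≤ x) (hy : 0 ≤ y) (hd : 0 ≤ d)
    (ht : 0 ≤ t) (hθ0 : 0 < θ) (hθ1 : θ ≤ 1) (hxy : |x - y| ≤ d) :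
    phi q x t ≤ (1 + 1/θ) ^ |q - 2| * phi q y t + θ * phi q x d := by
  have hxd : x ≤ y + d := by cases abs_le.mp hxy; linarith
  have hyd : y ≤ x + d := by cases abs_le.mp hxy; linarith
  have hL : (1:ℝ) ≤ 1 + 1/θ := by
    have : (0:ℝ) < 1/θ := by positivity
    linarith
  rcases le_or_gt t (θ * d) with hcase | hcase
  · -- absorb into θ * phi q x d
    have key : phi q x t ≤ θ * phi q x d := by
      have htd : t ≤ d := hcase.trans (by nlinarith)
      rcases le_or_gt 2 q with hq2 | hq2
      · unfold phi
        have h1 : (x + t) ^ (q-2) ≤ (x + d) ^ (q-2) :=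
          Real.rpow_le_rpow (by linarith) (by linarith) (by linarith)
        have h2 : t ^ 2 ≤ θ * d ^ 2 := by nlinarith
        calc (x + t) ^ (q-2) * t ^ 2 ≤ (x + d) ^ (q-2) * (θ * d ^ 2) := by
              have := Real.rpow_nonneg (show (0:ℝ) ≤ x + t by linarith) (q-2)
              have := Real.rpow_nonneg (show (0:ℝ) ≤ x + d by linarith) (q-2)
              nlinarith [sq_nonneg t]
          _ = θ * ((x + d) ^ (q-2) * d ^ 2) := by ring
      · rcases ht.eq_or_lt with h0 | htpos
        · rw [← h0, phi_zero]
          exact mul_nonneg hθ0.le (phi_nonneg hx hd)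
        have hdpos : 0 < d := by nlinarith
        rw [phi_repr hx htpos, phi_repr hx hdpos]
        have h1 : (t / (x + t)) ^ (2-q) ≤ (d / (x + d)) ^ (2-q) := by
          refine Real.rpow_le_rpow (by positivity) ?_ (by linarith)
          rw [div_le_div_iff₀ (by linarith) (by linarith)]
          nlinarith
        have h2 : t ^ q ≤ θ * d ^ q := by
          calc t ^ q ≤ (θ * d) ^ q := Real.rpow_le_rpow ht hcase (by linarith)
            _ = θ ^ q * d ^ q := Real.mul_rpow hθ0.le hdpos.le
            _ ≤ θ * d ^ q := by
                refine mul_le_mul_of_nonneg_right ?_ (Real.rpow_nonneg hdpos.le q)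
                calc θ ^ q ≤ θ ^ (1:ℝ) :=
                      Real.rpow_le_rpow_of_exponent_ge hθ0 hθ1 (by linarith)
                  _ = θ := Real.rpow_one θ
        calc (t / (x+t)) ^ (2-q) * t ^ q ≤ (d / (x+d)) ^ (2-q) * (θ * d ^ q) := by
              have := Real.rpow_nonneg (show (0:ℝ) ≤ t/(x+t) by positivity) (2-q)
              have := Real.rpow_nonneg (show (0:ℝ) ≤ d/(x+d) by positivity) (2-q)
              have := Real.rpow_nonneg ht q
              nlinarith
          _ = θ * ((d / (x+d)) ^ (2-q) * d ^ q) := by ring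
    have h0 : 0 ≤ (1 + 1/θ) ^ |q-2| * phi q y t := by
      exact mul_nonneg (Real.rpow_nonneg (by linarith) _) (phi_nonneg hy ht)
    linarith
  · -- main comparison term
    have htpos : 0 < t := lt_of_le_of_lt (by positivity) hcase
    have hdt : d ≤ t / θ := by
      rw [le_div_iff₀ hθ0]; nlinarith
    have key : phi q x t ≤ (1 + 1/θ) ^ |q-2| * phi q y t := by
      unfold phi
      have hcomp : (x + t) ^ (q-2) ≤ (1 + 1/θ) ^ |q-2| * (y + t) ^ (q-2) := by
        refine rpow_base_comp hq hL (by linarith) (by linarith) ?_ ?_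
        · calc x + t ≤ y + d + t := by linarith
            _ ≤ y + t/θ + t := by linarith
            _ ≤ (1 + 1/θ) * (y + t) := by
                rw [add_mul, one_mul, mul_add]
                have : t/θ ≤ 1/θ * (y + t) := by
                  rw [div_eq_mul_inv, one_div]
                  have : t ≤ y + t := by linarith
                  have hi : (0:ℝ) ≤ θ⁻¹ := by positivity
                  nlinarith
                linarith
        · calc y + t ≤ x + d + t := by linarith
            _ ≤ x + t/θ + t := by linarith
            _ ≤ (1 + 1/θ) * (x + t) := by
                rw [add_mul, one_mul, mul_add]
                have : t/θ ≤ 1/θ * (x + t) := by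
                  rw [div_eq_mul_inv, one_div]
                  have : t ≤ x + t := by linarith
                  have hi : (0:ℝ) ≤ θ⁻¹ := by positivity
                  nlinarith
                linarith
      calc (x+t)^(q-2) * t^2 ≤ ((1 + 1/θ) ^ |q-2| * (y + t) ^ (q-2)) * t^2 :=
            mul_le_mul_of_nonneg_right hcomp (sq_nonneg t)
        _ = (1 + 1/θ) ^ |q-2| * ((y+t)^(q-2) * t^2) := by ring
    have h0 : 0 ≤ θ * phi q x d := mul_nonneg hθ0.le (phi_nonneg hx hd)
    linarith

lemma phi_comp {x y d : ℝ} (hq : 1 < q) (hx : 0 ≤ x) (hy : 0 ≤ y) (hd : 0 ≤ d)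
    (hxy : |x - y| ≤ d) : phi q y d ≤ 2 ^ |q - 2| * phi q x d := by
  rcases hd.eq_or_lt with h0 | hdpos
  · rw [← h0, phi_zero, phi_zero, mul_zero]
  have hxd : x ≤ y + d := by cases abs_le.mp hxy; linarith
  have hyd : y ≤ x + d := by cases abs_le.mp hxy; linarith
  unfold phi
  have hcomp : (y + d) ^ (q-2) ≤ 2 ^ |q-2| * (x + d) ^ (q-2) := by
    refine rpow_base_comp hq one_le_two (by linarith) (by linarith) (by linarith) (by linarith)
  calc (y+d)^(q-2) * d^2 ≤ (2 ^ |q-2| * (x + d)^(q-2)) * d^2 :=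
        mul_le_mul_of_nonneg_right hcomp (sq_nonneg d)
    _ = 2 ^ |q-2| * ((x+d)^(q-2) * d^2) := by ring

lemma phi_scale {μ : ℝ} (hq : 1 < q) (hc : 0 ≤ c) (hs : 0 ≤ s) (hμ : 1 ≤ μ) :
    μ ^ (min q 2) * phi q c s ≤ phi q c (μ * s) := by
  have hμ0 : (0:ℝ) < μ := by linarith
  rcases hs.eq_or_lt with h0 | hspos
  · rw [← h0]; simp [phi_zero]
  unfold phi
  rcases le_or_gt 2 q with hq2 | hq2
  · rw [min_eq_right (by linarith : (2:ℝ) ≤ q)]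
    have h1 : (c + s) ^ (q-2) ≤ (c + μ*s) ^ (q-2) :=
      Real.rpow_le_rpow (by linarith) (by nlinarith) (by linarith)
    have h2 : μ ^ (2:ℝ) * s ^ 2 = (μ * s) ^ 2 := by
      rw [show (2:ℝ) = ((2:ℕ):ℝ) by norm_num, Real.rpow_natCast]; ring
    calc μ ^ (2:ℝ) * ((c + s) ^ (q-2) * s^2) = (c+s)^(q-2) * (μ ^ (2:ℝ) * s^2) := by ring
      _ ≤ (c + μ*s)^(q-2) * (μ^(2:ℝ) * s^2) := by
          refine mul_le_mul_of_nonneg_right h1 (by positivity)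
      _ = (c + μ*s)^(q-2) * (μ*s)^2 := by rw [h2]
  · rw [min_eq_left (by linarith : q ≤ (2:ℝ))]
    have h1 : (μ * (c + s)) ^ (q-2) ≤ (c + μ*s) ^ (q-2) := by
      refine Real.rpow_le_rpow_of_nonpos (by positivity) (by nlinarith) (by linarith)
    rw [Real.mul_rpow hμ0.le (by linarith : (0:ℝ) ≤ c + s)] at h1
    have h2 : μ ^ q = μ ^ (q - 2) * μ ^ (2:ℝ) := by
      rw [← Real.rpow_add hμ0]; norm_num
    have h3 : μ ^ (2:ℝ) * s ^ 2 = (μ * s) ^ 2 := by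
      rw [show (2:ℝ) = ((2:ℕ):ℝ) by norm_num, Real.rpow_natCast]; ring
    calc μ ^ q * ((c + s) ^ (q-2) * s^2)
        = (μ ^ (q-2) * (c+s)^(q-2)) * (μ ^ (2:ℝ) * s^2) := by rw [h2]; ring
      _ ≤ (c + μ*s)^(q-2) * (μ ^ (2:ℝ) * s^2) := by
          refine mul_le_mul_of_nonneg_right h1 (by positivity)
      _ = (c + μ*s)^(q-2) * (μ*s)^2 := by rw [h3]


noncomputable def c0 (q : ℝ) : ℝ := min (1/q) (2 ^ (q - (3:ℝ)))

lemma c0_pos (hq : 1 < q) : 0 < c0 q := by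
  have h1 : (0:ℝ) < 1/q := by positivity
  have h2 : (0:ℝ) < 2 ^ (q - (3:ℝ)) := Real.rpow_pos_of_pos two_pos _
  exact lt_min h1 h2

lemma R_coer (hq : 1 < q) (hc : 0 ≤ c) (hs : 0 ≤ s) :
    c0 q * s ^ q - c0 q * (max c 1) ^ q ≤ R q c s := by
  have hc0 := c0_pos hq
  have hs1 : (0:ℝ) < max c 1 := lt_of_lt_of_le one_pos (le_max_right _ _)
  rcases le_or_gt 2 q with hq2 | hq2
  · -- R ≥ s^q / q ≥ c0 s^q
    have hmono : ∀ τ ∈ Icc (0:ℝ) s, τ ^ (q - 1) ≤ (c + τ) ^ (q - 2) * τ := by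
      intro τ hτ
      rcases hτ.1.eq_or_lt with h0' | hτpos
      · rw [← h0', Real.zero_rpow (by linarith : q - 1 ≠ 0), mul_zero]
      calc τ ^ (q-1) = τ ^ (q-2) * τ := by
            rw [← Real.rpow_add_one hτpos.ne']; ring_nf
        _ ≤ (c + τ) ^ (q-2) * τ :=
            mul_le_mul_of_nonneg_right
              (Real.rpow_le_rpow hτ.1 (by linarith) (by linarith)) hτ.1
    have h1 : s ^ q / q ≤ R q c s := by
      calc s ^ q / q = ∫ τ in (0:ℝ)..s, τ ^ (q - 1) := by
            rw [integral_rpow (Or.inl (by linarith)),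
              Real.zero_rpow (by linarith : q - 1 + 1 ≠ 0)]
            norm_num
        _ ≤ R q c s := intervalIntegral.integral_mono_on hs
            (intervalIntegral.intervalIntegrable_rpow' (by linarith)) (integrable hq hc hs) hmono
    have h2 : c0 q * s ^ q ≤ s ^ q / q := by
      have : c0 q ≤ 1/q := min_le_left _ _
      have hsq : (0:ℝ) ≤ s ^ q := Real.rpow_nonneg hs q
      calc c0 q * s ^ q ≤ (1/q) * s ^ q := mul_le_mul_of_nonneg_right this hsq
        _ = s ^ q / q := by ring
    have h3 : 0 ≤ c0 q * (max c 1) ^ q :=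
      mul_nonneg hc0.le (Real.rpow_nonneg hs1.le q)
    linarith
  · rcases le_or_gt s (max c 1) with hcase | hcase
    · have h1 : c0 q * s ^ q ≤ c0 q * (max c 1) ^ q :=
        mul_le_mul_of_nonneg_left (Real.rpow_le_rpow hs hcase (by linarith)) hc0.le
      have := R_nonneg hq hc hs
      linarith
    · have hspos : 0 < s := lt_trans hs1 hcase
      have hRp : phi q c s ≤ 2 * R q c s := by
        have := phi_le_R hq hc hs
        rw [max_eq_right (by linarith : q ≤ (2:ℝ))] at this
        exact this
      have hphi : 2 ^ (q - 2) * s ^ q ≤ phi q c s := by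
        unfold phi
        have hb : (c + s) ^ (q-2) ≥ (2 * s) ^ (q-2) := by
          refine Real.rpow_le_rpow_of_nonpos (by linarith) ?_ (by linarith)
          have : c ≤ max c 1 := le_max_left _ _
          linarith
        have he : (2 * s) ^ (q-2) = 2 ^ (q-2) * s ^ (q-2) :=
          Real.mul_rpow (by norm_num) hspos.le
        have he2 : s ^ (q-2) * s ^ (2:ℕ) = s ^ q := by
          rw [← Real.rpow_natCast s 2, ← Real.rpow_add hspos]; norm_num
        calc 2 ^ (q-2) * s ^ q = (2 ^ (q-2) * s ^ (q-2)) * s ^ (2:ℕ) := by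
              rw [mul_assoc, he2]
          _ = (2*s) ^ (q-2) * s ^ 2 := by rw [he]
          _ ≤ (c + s) ^ (q-2) * s ^ 2 :=
              mul_le_mul_of_nonneg_right hb (sq_nonneg s)
      have h23 : c0 q * s ^ q ≤ 2 ^ (q - 2) * s ^ q / 2 := by
        have h1 : c0 q ≤ 2 ^ (q - (3:ℝ)) := min_le_right _ _
        have h2 : (2:ℝ) ^ (q - (3:ℝ)) = 2 ^ (q-2) / 2 := by
          rw [show q - (3:ℝ) = (q - 2) - 1 by ring, Real.rpow_sub two_pos, Real.rpow_one]
        have hsq : (0:ℝ) ≤ s ^ q := Real.rpow_nonneg hs q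
        calc c0 q * s ^ q ≤ (2 ^ (q-2) / 2) * s ^ q := by
              rw [← h2]; exact mul_le_mul_of_nonneg_right h1 hsq
          _ = 2 ^ (q-2) * s ^ q / 2 := by ring
      have h3 : 0 ≤ c0 q * (max c 1) ^ q :=
        mul_nonneg hc0.le (Real.rpow_nonneg hs1.le q)
      linarith

lemma conj_mem_zero : (0:ℝ) ∈ {v : ℝ | ∃ s, 0 ≤ s ∧ v = s * t - R q c s} :=
  ⟨0, le_refl 0, by simp [R]⟩

lemma conj_bdd (hq : 1 < q) (hc : 0 ≤ c) (ht : 0 ≤ t) :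
    BddAbove {v : ℝ | ∃ s, 0 ≤ s ∧ v = s * t - R q c s} := by
  have hc0 := c0_pos hq
  set ε : ℝ := (c0 q * q) ^ (q⁻¹) with hε
  have hεpos : 0 < ε := Real.rpow_pos_of_pos (by positivity) _
  have hεq : ε ^ q = c0 q * q := by
    rw [hε, ← Real.rpow_mul (by positivity), inv_mul_cancel₀ (by linarith : q ≠ 0),
      Real.rpow_one]
  have hpq : q.HolderConjugate (q / (q - 1)) := Real.HolderConjugate.conjExponent hq
  refine ⟨(t/ε) ^ (q/(q-1)) / (q/(q-1)) + c0 q * (max c 1) ^ q, ?_⟩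
  rintro v ⟨s, hs, rfl⟩
  have hyoung : s * t ≤ c0 q * s ^ q + (t/ε) ^ (q/(q-1)) / (q/(q-1)) := by
    have h := Real.young_inequality_of_nonneg
      (mul_nonneg hεpos.le hs) (by positivity : (0:ℝ) ≤ t/ε) hpq
    have he : (ε * s) * (t / ε) = s * t := by field_simp
    have he2 : (ε * s) ^ q / q = c0 q * s ^ q := by
      rw [Real.mul_rpow hεpos.le hs, hεq]
      field_simp
    rw [he, he2] at h
    exact h
  have hcoer := R_coer hq hc hs
  linarith

lemma Rc_nonneg (hq : 1 < q) (hc : 0 ≤ c) (ht : 0 ≤ t) : 0 ≤ Rc q c t :=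
  le_csSup (conj_bdd hq hc ht) conj_mem_zero

lemma Rc_scale {l : ℝ} (hq : 1 < q) (hc : 0 ≤ c) (ht : 0 ≤ t) (hl : 1 ≤ l) :
    Rc q c (l * t) ≤ (l * (l * max q 2) ^ ((min q 2 - 1)⁻¹)) * Rc q c t := by
  set m := min q 2 with hm
  set M := max q 2 with hM
  have hm1 : 1 < m := lt_min hq one_lt_two
  have hM2 : (2:ℝ) ≤ M := le_max_right _ _
  have hMpos : (0:ℝ) < M := by linarith
  set μ : ℝ := (l * M) ^ ((m - 1)⁻¹) with hμ
  have hlM : (1:ℝ) ≤ l * M := by nlinarith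
  have hm1' : (0:ℝ) ≤ (m - 1)⁻¹ := by
    have : 0 < m - 1 := by linarith
    positivity
  have hμ1 : 1 ≤ μ := Real.one_le_rpow hlM hm1'
  have hμpos : 0 < μ := by linarith
  have hμm : μ ^ (m - 1) = l * M := by
    rw [hμ, ← Real.rpow_mul (by linarith : (0:ℝ) ≤ l * M),
      inv_mul_cancel₀ (by linarith : m - 1 ≠ 0), Real.rpow_one]
  have hμmm : μ ^ m = l * M * μ := by
    rw [show m = (m - 1) + 1 by ring, Real.rpow_add hμpos, hμm, Real.rpow_one]
  have hkey : ∀ w, 0 ≤ w → l * μ * R q c w ≤ R q c (μ * w) := by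
    intro w hw
    have h1 : phi q c (μ * w) ≤ M * R q c (μ * w) := phi_le_R hq hc (by positivity)
    have h2 : μ ^ m * phi q c w ≤ phi q c (μ * w) := phi_scale hq hc hw hμ1
    have h3 : R q c w ≤ phi q c w := R_le_phi hq hc hw
    have h4 : μ ^ m * R q c w ≤ M * R q c (μ * w) := by
      calc μ ^ m * R q c w ≤ μ ^ m * phi q c w := by
            refine mul_le_mul_of_nonneg_left h3 (Real.rpow_nonneg hμpos.le m)
        _ ≤ phi q c (μ * w) := h2
        _ ≤ M * R q c (μ * w) := h1
    rw [hμmm] at h4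
    nlinarith [R_nonneg hq hc (show (0:ℝ) ≤ μ * w by positivity)]
  refine csSup_le ⟨0, conj_mem_zero⟩ ?_
  rintro v ⟨s, hs, rfl⟩
  set w : ℝ := s / μ with hw
  have hw0 : 0 ≤ w := by positivity
  have hsw : s = μ * w := by rw [hw]; field_simp
  have h5 : w * t - R q c w ≤ Rc q c t :=
    le_csSup (conj_bdd hq hc ht) ⟨w, hw0, rfl⟩
  have hlμ : 0 < l * μ := by nlinarith
  calc s * (l * t) - R q c s = (l * μ) * (w * t) - R q c (μ * w) := by
        rw [hsw]; ring
    _ ≤ (l * μ) * (w * t) - (l * μ) * R q c w := by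
        have := hkey w hw0
        linarith
    _ = (l * μ) * (w * t - R q c w) := by ring
    _ ≤ (l * μ) * Rc q c t := mul_le_mul_of_nonneg_left h5 hlμ.le
    _ = (l * (l * M) ^ ((m - 1)⁻¹)) * Rc q c t := by rw [hμ]


lemma conj_transfer {x y A K : ℝ} (hq : 1 < q) (hx : 0 ≤ x) (hy : 0 ≤ y) (ht : 0 ≤ t)
    (hA1 : 1 ≤ A) (hK0 : 0 ≤ K) (hAd : ∀ s, 0 ≤ s → R q y s ≤ A * R q x s + K) :
    Rc q x t ≤ (A * max q 2) ^ ((min q 2 - 1)⁻¹) * Rc q y t + K := by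
  have hA0 : 0 < A := by linarith
  have hAt : 0 ≤ A * t := by positivity
  have step1 : Rc q x t ≤ Rc q y (A * t) / A + K := by
    refine csSup_le ⟨0, conj_mem_zero⟩ ?_
    rintro v ⟨s, hs, rfl⟩
    have hsup : s * (A * t) - R q y s ≤ Rc q y (A * t) :=
      le_csSup (conj_bdd hq hy hAt) ⟨s, hs, rfl⟩
    have h6 : s * t - R q x s ≤ (s * (A * t) - R q y s) / A + K / A := by
      rw [← add_div, le_div_iff₀ hA0]
      nlinarith [hAd s hs]
    have h7 : (s * (A * t) - R q y s) / A ≤ Rc q y (A * t) / A :=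
      (div_le_div_iff_of_pos_right hA0).mpr hsup
    have h8 : K / A ≤ K := div_le_self hK0 hA1
    linarith
  have hscale : Rc q y (A * t) ≤ A * ((A * max q 2) ^ ((min q 2 - 1)⁻¹)) * Rc q y t := by
    have := Rc_scale hq hy ht hA1
    calc Rc q y (A * t) ≤ (A * (A * max q 2) ^ ((min q 2 - 1)⁻¹)) * Rc q y t := this
      _ = A * ((A * max q 2) ^ ((min q 2 - 1)⁻¹)) * Rc q y t := by ring
  have step2 : Rc q y (A * t) / A ≤ (A * max q 2) ^ ((min q 2 - 1)⁻¹) * Rc q y t := by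
    have h9 := (div_le_div_iff_of_pos_right hA0).mpr hscale
    have h10 : (A * ((A * max q 2) ^ ((min q 2 - 1)⁻¹)) * Rc q y t) / A
        = (A * max q 2) ^ ((min q 2 - 1)⁻¹) * Rc q y t := by
      field_simp
    linarith
  linarith

lemma main (hq : 1 < q) {δ : ℝ} (hδ : 0 < δ) :
    ∃ C : ℝ, 1 ≤ C ∧ ∀ x y d t : ℝ, 0 ≤ x → 0 ≤ y → 0 ≤ d → 0 ≤ t → |x - y| ≤ d →
      R q x t ≤ C * R q y t + δ * R q x d ∧
      Rc q x t ≤ C * Rc q y t + δ * R q x d := by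
  set m := min q 2 with hm
  set M := max q 2 with hM
  set E := |q - 2| with hE
  have hm1 : 1 < m := lt_min hq one_lt_two
  have hM2 : (2:ℝ) ≤ M := le_max_right _ _
  have hMpos : (0:ℝ) < M := by linarith
  have hE0 : (0:ℝ) ≤ E := abs_nonneg _
  have h2E : (0:ℝ) < 2 ^ E := Real.rpow_pos_of_pos two_pos _
  set θ₁ : ℝ := min (δ/M) 1 with hθ₁
  have hθ₁0 : 0 < θ₁ := lt_min (by positivity) one_pos
  have hθ₁1 : θ₁ ≤ 1 := min_le_right _ _
  set θ₂ : ℝ := min (δ/(2^E * M)) 1 with hθ₂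
  have hθ₂0 : 0 < θ₂ := lt_min (by positivity) one_pos
  have hθ₂1 : θ₂ ≤ 1 := min_le_right _ _
  set a₁ : ℝ := (1 + 1/θ₁) ^ E with ha₁
  set a₂ : ℝ := (1 + 1/θ₂) ^ E with ha₂
  have ha₁1 : 1 ≤ a₁ := Real.one_le_rpow (by have := one_div_pos.mpr hθ₁0; linarith) hE0
  have ha₂1 : 1 ≤ a₂ := Real.one_le_rpow (by have := one_div_pos.mpr hθ₂0; linarith) hE0
  set A : ℝ := a₂ * M with hA
  have hA1 : 1 ≤ A := by nlinarith
  have hA0 : 0 < A := by linarith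
  set C₁ : ℝ := a₁ * M with hC₁
  set C₂ : ℝ := (A * M) ^ ((m - 1)⁻¹) with hC₂
  refine ⟨max 1 (max C₁ C₂), le_max_left _ _, ?_⟩
  intro x y d t hx hy hd ht hxy
  set C : ℝ := max 1 (max C₁ C₂) with hC
  have hCC₁ : C₁ ≤ C := le_trans (le_max_left _ _) (le_max_right _ _)
  have hCC₂ : C₂ ≤ C := le_trans (le_max_right _ _) (le_max_right _ _)
  have hRyt := R_nonneg hq hy ht
  have hRxd := R_nonneg hq hx hd
  constructor
  · -- first inequality
    have h1 := R_le_phi hq hx ht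
    have h2 := phi_shift hq hx hy hd ht hθ₁0 hθ₁1 hxy
    have h3 := phi_le_R hq hy ht
    have h4 := phi_le_R hq hx hd
    have e2 : a₁ * phi q y t ≤ a₁ * (M * R q y t) :=
      mul_le_mul_of_nonneg_left h3 (by linarith)
    have e3 : θ₁ * phi q x d ≤ θ₁ * (M * R q x d) :=
      mul_le_mul_of_nonneg_left h4 hθ₁0.le
    have e4 : R q x t ≤ C₁ * R q y t + (θ₁ * M) * R q x d := by
      rw [hC₁]; nlinarith
    have e5 : C₁ * R q y t ≤ C * R q y t := mul_le_mul_of_nonneg_right hCC₁ hRyt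
    have e6 : (θ₁ * M) * R q x d ≤ δ * R q x d := by
      refine mul_le_mul_of_nonneg_right ?_ hRxd
      have : θ₁ ≤ δ/M := min_le_left _ _
      calc θ₁ * M ≤ (δ/M) * M := mul_le_mul_of_nonneg_right this hMpos.le
        _ = δ := by field_simp
    linarith
  · -- conjugate inequality
    set K : ℝ := θ₂ * (2^E * M) * R q x d with hK
    have hK0 : 0 ≤ K := by positivity
    have hKδ : K ≤ δ * R q x d := by
      refine mul_le_mul_of_nonneg_right ?_ hRxd
      have : θ₂ ≤ δ/(2^E * M) := min_le_left _ _
      calc θ₂ * (2^E * M) ≤ (δ/(2^E * M)) * (2^E * M) :=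
            mul_le_mul_of_nonneg_right this (by positivity)
        _ = δ := by field_simp
    have hAd : ∀ s, 0 ≤ s → R q y s ≤ A * R q x s + K := by
      intro s hs
      have h1 := R_le_phi hq hy hs
      have h2 := phi_shift hq hy hx hd hs hθ₂0 hθ₂1 (by rwa [abs_sub_comm])
      have h3 := phi_le_R hq hx hs
      have h4 := phi_comp hq hx hy hd hxy
      have h5 := phi_le_R hq hx hd
      have e2 : a₂ * phi q x s ≤ a₂ * (M * R q x s) :=
        mul_le_mul_of_nonneg_left h3 (by linarith)
      have e3 : θ₂ * phi q y d ≤ θ₂ * (2^E * (M * R q x d)) := by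
        refine mul_le_mul_of_nonneg_left ?_ hθ₂0.le
        calc phi q y d ≤ 2^E * phi q x d := h4
          _ ≤ 2^E * (M * R q x d) := mul_le_mul_of_nonneg_left h5 h2E.le
      have e4 : a₂ * (M * R q x s) + θ₂ * (2^E * (M * R q x d)) = A * R q x s + K := by
        rw [hA, hK]; ring
      linarith
    have hct := conj_transfer hq hx hy ht hA1 hK0 hAd
    have hRcy := Rc_nonneg hq hy ht
    have hC2eq : (A * max q 2) ^ ((min q 2 - 1)⁻¹) = C₂ := by rw [hC₂, hM, hm]
    rw [hC2eq] at hct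
    have h11 : C₂ * Rc q y t ≤ C * Rc q y t := mul_le_mul_of_nonneg_right hCC₂ hRcy
    linarith

end S14

/-- (Change of shift, Lemma `lem:shift_ch` (a), for constant exponent `q`.)
Let `q ∈ (1,∞)` and `κ ≥ 0`. For every `δ > 0` there is `C_δ ≥ 1` depending only on `δ`
and `q` such that for all matrices `P, Q` and all `t ≥ 0`:
`ρ_{|P|}(t) ≤ C_δ ρ_{|Q|}(t) + δ ρ_{|P|}(|P−Q|)` and
`(ρ_{|P|})*(t) ≤ C_δ (ρ_{|Q|})*(t) + δ ρ_{|P|}(|P−Q|)`. -/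
theorem stmt14 (N n : ℕ) (q : ℝ) (hq : 1 < q) (δ : ℝ) (hδ : 0 < δ) :
    ∃ C : ℝ, 1 ≤ C ∧ ∀ κ : ℝ, 0 ≤ κ →
      ∀ P Q : EuclideanSpace ℝ (Fin N × Fin n), ∀ t : ℝ, 0 ≤ t →
        rhoShift κ q ‖P‖ t ≤ C * rhoShift κ q ‖Q‖ t + δ * rhoShift κ q ‖P‖ ‖P - Q‖ ∧
        rhoShiftConj κ q ‖P‖ t ≤
          C * rhoShiftConj κ q ‖Q‖ t + δ * rhoShift κ q ‖P‖ ‖P - Q‖ := by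
  obtain ⟨C, hC1, hC⟩ := S14.main (q := q) hq hδ
  refine ⟨C, hC1, ?_⟩
  intro κ hκ P Q t ht
  have hx : 0 ≤ κ + ‖P‖ := by positivity
  have hy : 0 ≤ κ + ‖Q‖ := by positivity
  have hxy : |(κ + ‖P‖) - (κ + ‖Q‖)| ≤ ‖P - Q‖ := by
    rw [show (κ + ‖P‖) - (κ + ‖Q‖) = ‖P‖ - ‖Q‖ by ring]
    exact abs_norm_sub_norm_le P Q
  exact hC (κ + ‖P‖) (κ + ‖Q‖) (‖P - Q‖) t hx hy (norm_nonneg _) ht hxy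
end

section
/- Let q ∈ (1,∞) and κ ≥ 0. There are constants 0 < c ≤ C < ∞ depending only on q such that: (i) for all a ≥ 0 with κ + a > 0 and all λ ∈ [0,1], c λ² ρ(a) ≤ ρ_a(λ a) ≤ C λ² ρ(a) and c λ² ρ(a) ≤ (ρ_a)*(λ ρ'(a)) ≤ C λ² ρ(a), where ρ'(a) = (κ+a)^{q−2} a; and (ii) for all a, t ≥ 0 with κ + a + t > 0, c ρ_a(t) ≤ (ρ_a)*(ρ'_a(t)) ≤ C ρ_a(t). -/
set_option maxHeartbeats 1000000

open MeasureTheory intervalIntegral Set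

namespace Stmt16

noncomputable def g (b q : ℝ) (τ : ℝ) : ℝ := (b + τ) ^ (q - 2) * τ

noncomputable def R (b q t : ℝ) : ℝ := ∫ τ in (0:ℝ)..t, g b q τ

lemma g_nonneg {b : ℝ} (q : ℝ) (hb : 0 ≤ b) {τ : ℝ} (hτ : 0 ≤ τ) : 0 ≤ g b q τ :=
  mul_nonneg (Real.rpow_nonneg (by linarith) _) hτ

lemma g_eq_of_b_zero {q : ℝ} (hq : 1 < q) {τ : ℝ} (hτ : 0 ≤ τ) :
    g 0 q τ = τ ^ (q - 1) := by
  rcases eq_or_lt_of_le hτ with h | h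
  · simp [g, ← h, Real.zero_rpow (by linarith : q - 1 ≠ 0)]
  · unfold g
    rw [zero_add, show q - 1 = (q-2) + 1 by ring, Real.rpow_add h, Real.rpow_one]

lemma contOn_g {q b : ℝ} (hq : 1 < q) (hb : 0 ≤ b) : ContinuousOn (g b q) (Ici 0) := by
  rcases eq_or_lt_of_le hb with h | h
  · subst h
    refine ContinuousOn.congr (f := fun τ : ℝ => τ ^ (q-1)) ?_ ?_
    · exact (Real.continuous_rpow_const (by linarith)).continuousOn
    · exact fun τ hτ => g_eq_of_b_zero hq hτ
  · exact (((continuous_const.add continuous_id).continuousOn).rpow_const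
      (fun τ hτ => Or.inl (by simp only [mem_Ici] at hτ; show b + τ ≠ 0; exact ne_of_gt (by linarith)))).mul continuousOn_id

lemma intble_g {q b x y : ℝ} (hq : 1 < q) (hb : 0 ≤ b) (hx : 0 ≤ x) (hy : 0 ≤ y) :
    IntervalIntegrable (g b q) volume x y :=
  ((contOn_g hq hb).mono (by
    intro τ hτ
    rcases le_total x y with h | h
    · rw [uIcc_of_le h] at hτ; exact le_trans hx hτ.1
    · rw [uIcc_of_ge h] at hτ; exact le_trans hy hτ.1)).intervalIntegrable

end Stmt16

namespace Stmt16
open Real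

lemma R_nonneg {q b t : ℝ} (hb : 0 ≤ b) (ht : 0 ≤ t) : 0 ≤ R b q t :=
  intervalIntegral.integral_nonneg ht (fun τ hτ => g_nonneg q hb hτ.1)

lemma R_zero_b {q : ℝ} (hq : 1 < q) {t : ℝ} (ht : 0 ≤ t) : R 0 q t = t ^ q / q := by
  unfold R
  rw [integral_congr (g := fun τ : ℝ => τ ^ (q - 1))
    (fun τ hτ => g_eq_of_b_zero hq (by rw [uIcc_of_le ht] at hτ; exact hτ.1)),
    integral_rpow (Or.inl (by linarith)), Real.zero_rpow (by linarith : q - 1 + 1 ≠ 0)]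
  rw [show q - 1 + 1 = q by ring, sub_zero]

lemma g_eq_phi {q b z : ℝ} (hz : 0 < z) :
    g b q z = ((b + z) ^ (q - 2) * z ^ (2 - q)) * z ^ (q - 1) := by
  unfold g
  rw [mul_assoc, ← Real.rpow_add hz, show (2 - q) + (q - 1) = 1 by ring, Real.rpow_one]

lemma phi_eq {q b z : ℝ} (hz : 0 < z) (hbz : 0 < b + z) :
    (b + z) ^ (q - 2) * z ^ (2 - q) = (z / (b + z)) ^ (2 - q) := by
  rw [Real.div_rpow hz.le hbz.le, show q - 2 = -(2 - q) by ring, Real.rpow_neg hbz.le,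
    div_eq_mul_inv]
  ring

lemma frac_mono {b x y : ℝ} (hb : 0 ≤ b) (hx : 0 < x) (hy : 0 < y) (hxy : x ≤ y) :
    x / (b + x) ≤ y / (b + y) := by
  rw [div_le_div_iff₀ (by linarith) (by linarith)]
  nlinarith

lemma phi_le_phi {q b x y : ℝ} (h2 : q ≤ 2) (hb : 0 ≤ b) (hx : 0 < x) (hxy : x ≤ y) :
    (b + x) ^ (q - 2) * x ^ (2 - q) ≤ (b + y) ^ (q - 2) * y ^ (2 - q) := by
  have hy : 0 < y := lt_of_lt_of_le hx hxy
  rw [phi_eq hx (by linarith), phi_eq hy (by linarith)]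
  exact Real.rpow_le_rpow (by positivity) (frac_mono hb hx hy hxy) (by linarith)

lemma phi_anti {q b x y : ℝ} (h2 : 2 ≤ q) (hb : 0 ≤ b) (hx : 0 < x) (hxy : x ≤ y) :
    (b + y) ^ (q - 2) * y ^ (2 - q) ≤ (b + x) ^ (q - 2) * x ^ (2 - q) := by
  have hy : 0 < y := lt_of_lt_of_le hx hxy
  rw [phi_eq hx (by linarith), phi_eq hy (by linarith)]
  exact Real.rpow_le_rpow_of_nonpos (by positivity) (frac_mono hb hx hy hxy) (by linarith)

lemma g_mono {q b x y : ℝ} (hq : 1 < q) (hb : 0 ≤ b) (hx : 0 ≤ x) (hxy : x ≤ y) :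
    g b q x ≤ g b q y := by
  rcases eq_or_lt_of_le hx with h | h
  · rw [← h, show g b q 0 = 0 by simp [g]]
    exact g_nonneg q hb (le_trans hx hxy)
  · have hy : 0 < y := lt_of_lt_of_le h hxy
    rcases le_total q 2 with h2 | h2
    · rw [g_eq_phi h, g_eq_phi hy]
      exact mul_le_mul (phi_le_phi h2 hb h hxy)
        (Real.rpow_le_rpow h.le hxy (by linarith)) (by positivity) (by positivity)
    · unfold g
      exact mul_le_mul (Real.rpow_le_rpow (by linarith) (by linarith) (by linarith))
        hxy h.le (by positivity)

end Stmt16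

namespace Stmt16

lemma rpow_mul_sq {q t : ℝ} (ht : 0 < t) : t ^ (q - 2) * t ^ 2 = t ^ q := by
  rw [← Real.rpow_natCast t 2, ← Real.rpow_add ht]
  norm_num

lemma intble_aux1 {t c : ℝ} : IntervalIntegrable (fun τ : ℝ => c * τ) MeasureTheory.volume 0 t :=
  (continuous_const.mul continuous_id).intervalIntegrable 0 t

lemma intble_aux2 {q t c : ℝ} (hq : 1 < q) :
    IntervalIntegrable (fun τ : ℝ => c * τ ^ (q - 1)) MeasureTheory.volume 0 t :=
  (continuous_const.mul (Real.continuous_rpow_const (by linarith))).intervalIntegrable 0 t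

lemma int_aux1 {q b t : ℝ} (ht : 0 ≤ t) :
    ∫ τ in (0:ℝ)..t, (b + t) ^ (q - 2) * τ = (1 / 2) * ((b + t) ^ (q - 2) * t ^ 2) := by
  rw [intervalIntegral.integral_const_mul, integral_id]
  ring

lemma int_aux2 {q b t : ℝ} (hq : 1 < q) (ht : 0 < t) :
    ∫ τ in (0:ℝ)..t, ((b + t) ^ (q - 2) * t ^ (2 - q)) * τ ^ (q - 1)
      = (1 / q) * ((b + t) ^ (q - 2) * t ^ 2) := by
  rw [intervalIntegral.integral_const_mul, integral_rpow (Or.inl (by linarith)),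
    Real.zero_rpow (by linarith : q - 1 + 1 ≠ 0), show q - 1 + 1 = q by ring, sub_zero]
  have h : t ^ (2 - q) * t ^ q = t ^ 2 := by
    rw [← Real.rpow_add ht, ← Real.rpow_natCast t 2]
    norm_num
  calc (b + t) ^ (q - 2) * t ^ (2 - q) * (t ^ q / q)
      = (1 / q) * ((b + t) ^ (q - 2) * (t ^ (2 - q) * t ^ q)) := by ring
    _ = _ := by rw [h]

lemma R_le {q b t : ℝ} (hq : 1 < q) (hb : 0 ≤ b) (ht : 0 ≤ t) :
    R b q t ≤ (1 / min 2 q) * ((b + t) ^ (q - 2) * t ^ 2) := by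
  have hmin : 1 < min 2 q := lt_min one_lt_two hq
  rcases eq_or_lt_of_le ht with h | htpos
  · rw [← h, show R b q 0 = 0 by simp [R]]
    positivity
  rcases eq_or_lt_of_le hb with h | hbpos
  · rw [← h, R_zero_b hq ht, zero_add, rpow_mul_sq htpos]
    calc t ^ q / q = (1 / q) * t ^ q := by ring
      _ ≤ (1 / min 2 q) * t ^ q := by
        apply mul_le_mul_of_nonneg_right _ (Real.rpow_nonneg ht q)
        exact one_div_le_one_div_of_le (by linarith) (min_le_right 2 q)
  rcases le_total q 2 with h2 | h2
  · rw [min_eq_right h2]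
    have key : ∀ τ ∈ Icc (0:ℝ) t, g b q τ ≤ ((b + t) ^ (q - 2) * t ^ (2 - q)) * τ ^ (q - 1) := by
      intro τ hτ
      rcases eq_or_lt_of_le hτ.1 with h | hτpos
      · rw [← h, show g b q 0 = 0 by simp [g], Real.zero_rpow (by linarith : q - 1 ≠ 0), mul_zero]
      · rw [g_eq_phi hτpos]
        exact mul_le_mul_of_nonneg_right (phi_le_phi h2 hb hτpos hτ.2)
          (Real.rpow_nonneg hτpos.le _)
    calc R b q t ≤ ∫ τ in (0:ℝ)..t, ((b + t) ^ (q - 2) * t ^ (2 - q)) * τ ^ (q - 1) :=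
          integral_mono_on ht (intble_g hq hb le_rfl ht) (intble_aux2 hq) key
      _ = _ := int_aux2 hq htpos
  · rw [min_eq_left h2]
    have key : ∀ τ ∈ Icc (0:ℝ) t, g b q τ ≤ (b + t) ^ (q - 2) * τ := fun τ hτ =>
      mul_le_mul_of_nonneg_right
        (Real.rpow_le_rpow (by linarith [hτ.1]) (by linarith [hτ.2]) (by linarith)) hτ.1
    calc R b q t ≤ ∫ τ in (0:ℝ)..t, (b + t) ^ (q - 2) * τ :=
          integral_mono_on ht (intble_g hq hb le_rfl ht) intble_aux1 key
      _ = _ := int_aux1 ht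

lemma le_R {q b t : ℝ} (hq : 1 < q) (hb : 0 ≤ b) (ht : 0 ≤ t) :
    (1 / max 2 q) * ((b + t) ^ (q - 2) * t ^ 2) ≤ R b q t := by
  have hmax : 2 ≤ max 2 q := le_max_left 2 q
  rcases eq_or_lt_of_le ht with h | htpos
  · rw [← h, show R b q 0 = 0 by simp [R]]
    norm_num
  rcases eq_or_lt_of_le hb with h | hbpos
  · rw [← h, R_zero_b hq ht, zero_add, rpow_mul_sq htpos]
    calc (1 / max 2 q) * t ^ q ≤ (1 / q) * t ^ q := by
          apply mul_le_mul_of_nonneg_right _ (Real.rpow_nonneg ht q)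
          exact one_div_le_one_div_of_le (by linarith) (le_max_right 2 q)
      _ = t ^ q / q := by ring
  rcases le_total q 2 with h2 | h2
  · rw [max_eq_left h2]
    have key : ∀ τ ∈ Icc (0:ℝ) t, (b + t) ^ (q - 2) * τ ≤ g b q τ := fun τ hτ =>
      mul_le_mul_of_nonneg_right
        (Real.rpow_le_rpow_of_nonpos (by linarith [hτ.1]) (by linarith [hτ.2]) (by linarith))
        hτ.1
    calc (1 / 2) * ((b + t) ^ (q - 2) * t ^ 2)
        = ∫ τ in (0:ℝ)..t, (b + t) ^ (q - 2) * τ := (int_aux1 ht).symm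
      _ ≤ R b q t := integral_mono_on ht intble_aux1 (intble_g hq hb le_rfl ht) key
  · rw [max_eq_right h2]
    have key : ∀ τ ∈ Icc (0:ℝ) t, ((b + t) ^ (q - 2) * t ^ (2 - q)) * τ ^ (q - 1) ≤ g b q τ := by
      intro τ hτ
      rcases eq_or_lt_of_le hτ.1 with h | hτpos
      · rw [← h, show g b q 0 = 0 by simp [g], Real.zero_rpow (by linarith : q - 1 ≠ 0), mul_zero]
      · rw [g_eq_phi hτpos]
        exact mul_le_mul_of_nonneg_right (phi_anti h2 hb hτpos hτ.2)
          (Real.rpow_nonneg hτpos.le _)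
    calc (1 / q) * ((b + t) ^ (q - 2) * t ^ 2)
        = ∫ τ in (0:ℝ)..t, ((b + t) ^ (q - 2) * t ^ (2 - q)) * τ ^ (q - 1) :=
          (int_aux2 hq htpos).symm
      _ ≤ R b q t := integral_mono_on ht (intble_aux2 hq) (intble_g hq hb le_rfl ht) key

end Stmt16

namespace Stmt16

lemma tangent {q b s t : ℝ} (hq : 1 < q) (hb : 0 ≤ b) (hs : 0 ≤ s) (ht : 0 ≤ t) :
    s * g b q t - R b q s ≤ t * g b q t - R b q t := by
  have hsub : R b q s - R b q t = ∫ τ in t..s, g b q τ :=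
    integral_interval_sub_left (intble_g hq hb le_rfl hs) (intble_g hq hb le_rfl ht)
  rcases le_total t s with h | h
  · have : (s - t) * g b q t ≤ ∫ τ in t..s, g b q τ := by
      calc (s - t) * g b q t = ∫ _ in t..s, g b q t := by rw [intervalIntegral.integral_const, smul_eq_mul]
        _ ≤ _ := integral_mono_on h intervalIntegrable_const (intble_g hq hb ht hs)
              (fun τ hτ => g_mono hq hb ht hτ.1)
    nlinarith [hsub]
  · have : ∫ τ in s..t, g b q τ ≤ (t - s) * g b q t := by
      calc (∫ τ in s..t, g b q τ) ≤ ∫ _ in s..t, g b q t :=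
            integral_mono_on h (intble_g hq hb hs ht) intervalIntegrable_const
              (fun τ hτ => g_mono hq hb (le_trans hs hτ.1) hτ.2)
        _ = (t - s) * g b q t := by rw [intervalIntegral.integral_const, smul_eq_mul]
    have h2 : R b q t - R b q s = ∫ τ in s..t, g b q τ :=
      integral_interval_sub_left (intble_g hq hb le_rfl ht) (intble_g hq hb le_rfl hs)
    nlinarith

end Stmt16


namespace Stmt16

lemma rhoShift_eq (κ q a t : ℝ) : rhoShift κ q a t = R (κ + a) q t := rfl

lemma conj_ub {q κ a u t' : ℝ} (hq : 1 < q) (hb : 0 ≤ κ + a) (ht' : 0 ≤ t')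
    (hu : u ≤ g (κ + a) q t') :
    ∀ v ∈ {v : ℝ | ∃ s : ℝ, 0 ≤ s ∧ v = s * u - rhoShift κ q a s},
      v ≤ t' * g (κ + a) q t' - R (κ + a) q t' := by
  rintro v ⟨s, hs, rfl⟩
  calc s * u - rhoShift κ q a s ≤ s * g (κ + a) q t' - R (κ + a) q s := by
        rw [rhoShift_eq]
        exact sub_le_sub_right (mul_le_mul_of_nonneg_left hu hs) _
    _ ≤ _ := tangent hq hb hs ht'

lemma conj_le {q κ a u t' : ℝ} (hq : 1 < q) (hb : 0 ≤ κ + a) (ht' : 0 ≤ t')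
    (hu : u ≤ g (κ + a) q t') :
    rhoShiftConj κ q a u ≤ t' * g (κ + a) q t' - R (κ + a) q t' :=
  csSup_le ⟨0 * u - rhoShift κ q a 0, 0, le_rfl, rfl⟩ (conj_ub hq hb ht' hu)

lemma conj_ge {q κ a u t' s : ℝ} (hq : 1 < q) (hb : 0 ≤ κ + a) (ht' : 0 ≤ t')
    (hu : u ≤ g (κ + a) q t') (hs : 0 ≤ s) :
    s * u - R (κ + a) q s ≤ rhoShiftConj κ q a u :=
  le_csSup ⟨_, conj_ub hq hb ht' hu⟩ ⟨s, hs, rfl⟩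

end Stmt16

namespace Stmt16

noncomputable def Nq (q : ℝ) : ℝ := max 1 ((2:ℝ) ^ ((2 - q) / (q - 1)))

noncomputable def eps (q : ℝ) : ℝ := min 1 (min 2 q / (2 * ((2:ℝ) ^ (q - 2) + 1)))

lemma key_ii {q κ a t : ℝ} (hq : 1 < q) (hκ : 0 ≤ κ) (ha : 0 ≤ a) (ht : 0 ≤ t) :
    (min 2 q - 1) * R (κ + a) q t ≤ rhoShiftConj κ q a ((κ + a + t) ^ (q - 2) * t) ∧
    rhoShiftConj κ q a ((κ + a + t) ^ (q - 2) * t) ≤ max 2 q * R (κ + a) q t := by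
  have hb : 0 ≤ κ + a := add_nonneg hκ ha
  have hmin1 : 1 < min 2 q := lt_min one_lt_two hq
  have hmax : (2:ℝ) ≤ max 2 q := le_max_left _ _
  have hu : (κ + a + t) ^ (q - 2) * t ≤ g (κ + a) q t := le_rfl
  have hconj_le := conj_le hq hb ht hu
  have hmem := conj_ge (s := t) hq hb ht hu ht
  have hRlo := le_R hq hb ht
  have hRhi := R_le hq hb ht
  have hR0 : 0 ≤ R (κ + a) q t := R_nonneg hb ht
  have s1 : min 2 q * (1 / min 2 q) = 1 := mul_one_div_cancel (by linarith)
  have s2 : max 2 q * (1 / max 2 q) = 1 := mul_one_div_cancel (by linarith)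
  have htg : t * g (κ + a) q t = (κ + a + t) ^ (q - 2) * t ^ 2 := by unfold g; ring
  constructor
  · have h1 : min 2 q * R (κ + a) q t ≤ (κ + a + t) ^ (q - 2) * t ^ 2 := by
      have h := mul_le_mul_of_nonneg_left hRhi (by linarith : (0:ℝ) ≤ min 2 q)
      rw [← mul_assoc, s1, one_mul] at h
      exact h
    have h2 : t * ((κ + a + t) ^ (q - 2) * t) - R (κ + a) q t
        ≤ rhoShiftConj κ q a ((κ + a + t) ^ (q - 2) * t) := hmem
    nlinarith [h1, h2]
  · have h1 : (κ + a + t) ^ (q - 2) * t ^ 2 ≤ max 2 q * R (κ + a) q t := by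
      have h := mul_le_mul_of_nonneg_left hRlo (by linarith : (0:ℝ) ≤ max 2 q)
      rw [← mul_assoc, s2, one_mul] at h
      exact h
    nlinarith [hconj_le, htg, h1, hR0]

end Stmt16

namespace Stmt16

lemma key_ia {q κ a lam : ℝ} (hq : 1 < q) (hκ : 0 ≤ κ) (ha : 0 ≤ a) (hba : 0 < κ + a)
    (hl0 : 0 ≤ lam) (hl1 : lam ≤ 1) :
    (min 2 q * (1 / max 2 q) * min 1 ((2:ℝ) ^ (q - 2))) * lam ^ 2 * R κ q a
        ≤ R (κ + a) q (lam * a) ∧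
    R (κ + a) q (lam * a)
        ≤ (max 2 q * (1 / min 2 q) * ((2:ℝ) ^ (q - 2) + 1)) * lam ^ 2 * R κ q a := by
  have hmin1 : 1 < min 2 q := lt_min one_lt_two hq
  have hmax : (2:ℝ) ≤ max 2 q := le_max_left _ _
  have hP0 : 0 < (κ + a) ^ (q - 2) := Real.rpow_pos_of_pos hba _
  have hk2 : (0:ℝ) < (2:ℝ) ^ (q - 2) := Real.rpow_pos_of_pos two_pos _
  have hA0 : 0 ≤ lam * a := mul_nonneg hl0 ha
  have hAa : lam * a ≤ a := by nlinarith
  have hAb : lam * a ≤ κ + a := by linarith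
  have s1 : min 2 q * (1 / min 2 q) = 1 := mul_one_div_cancel (by linarith)
  have s2 : max 2 q * (1 / max 2 q) = 1 := mul_one_div_cancel (by linarith)
  have hub : (κ + a + lam * a) ^ (q - 2) ≤ ((2:ℝ) ^ (q - 2) + 1) * (κ + a) ^ (q - 2) := by
    rcases le_total q 2 with h2 | h2
    · have h1 : (κ + a + lam * a) ^ (q - 2) ≤ (κ + a) ^ (q - 2) :=
        Real.rpow_le_rpow_of_nonpos hba (by linarith) (by linarith)
      nlinarith
    · have h1 : (κ + a + lam * a) ^ (q - 2) ≤ (2 * (κ + a)) ^ (q - 2) :=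
        Real.rpow_le_rpow (by linarith) (by linarith) (by linarith)
      have h2' : (2 * (κ + a)) ^ (q - 2) = (2:ℝ) ^ (q - 2) * (κ + a) ^ (q - 2) :=
        Real.mul_rpow (by norm_num) hba.le
      nlinarith
  have hlb : min 1 ((2:ℝ) ^ (q - 2)) * (κ + a) ^ (q - 2) ≤ (κ + a + lam * a) ^ (q - 2) := by
    rcases le_total q 2 with h2 | h2
    · have h1 : (2 * (κ + a)) ^ (q - 2) ≤ (κ + a + lam * a) ^ (q - 2) :=
        Real.rpow_le_rpow_of_nonpos (by linarith) (by linarith) (by linarith)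
      have h2' : (2 * (κ + a)) ^ (q - 2) = (2:ℝ) ^ (q - 2) * (κ + a) ^ (q - 2) :=
        Real.mul_rpow (by norm_num) hba.le
      have h3 := min_le_right 1 ((2:ℝ) ^ (q - 2))
      nlinarith
    · have h1 : (κ + a) ^ (q - 2) ≤ (κ + a + lam * a) ^ (q - 2) :=
        Real.rpow_le_rpow hba.le (by linarith) (by linarith)
      have h3 := min_le_left 1 ((2:ℝ) ^ (q - 2))
      nlinarith
  have hX_lo := le_R hq (by linarith : (0:ℝ) ≤ κ + a) hA0
  have hX_hi := R_le hq (by linarith : (0:ℝ) ≤ κ + a) hA0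
  have hρ_lo := le_R hq hκ ha
  have hρ_hi := R_le hq hκ ha
  have hminpos : (0:ℝ) < min 1 ((2:ℝ) ^ (q - 2)) := lt_min one_pos hk2
  constructor
  · calc (min 2 q * (1 / max 2 q) * min 1 ((2:ℝ) ^ (q - 2))) * lam ^ 2 * R κ q a
        ≤ (min 2 q * (1 / max 2 q) * min 1 ((2:ℝ) ^ (q - 2))) * lam ^ 2
            * (1 / min 2 q * ((κ + a) ^ (q - 2) * a ^ 2)) := by
          apply mul_le_mul_of_nonneg_left hρ_hi
          have : (0:ℝ) < min 2 q * (1 / max 2 q) * min 1 ((2:ℝ) ^ (q - 2)) := by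
            apply mul_pos (mul_pos (by linarith) (by positivity)) hminpos
          positivity
      _ = (1 / max 2 q) * ((min 1 ((2:ℝ) ^ (q - 2)) * (κ + a) ^ (q - 2)) * (lam * a) ^ 2)
            * (min 2 q * (1 / min 2 q)) := by ring
      _ = (1 / max 2 q) * ((min 1 ((2:ℝ) ^ (q - 2)) * (κ + a) ^ (q - 2)) * (lam * a) ^ 2) := by
          rw [s1, mul_one]
      _ ≤ (1 / max 2 q) * ((κ + a + lam * a) ^ (q - 2) * (lam * a) ^ 2) := by
          apply mul_le_mul_of_nonneg_left
            (mul_le_mul_of_nonneg_right hlb (sq_nonneg _)) (by positivity)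
      _ ≤ R (κ + a) q (lam * a) := hX_lo
  · calc R (κ + a) q (lam * a)
        ≤ (1 / min 2 q) * ((κ + a + lam * a) ^ (q - 2) * (lam * a) ^ 2) := hX_hi
      _ ≤ (1 / min 2 q) * ((((2:ℝ) ^ (q - 2) + 1) * (κ + a) ^ (q - 2)) * (lam * a) ^ 2) := by
          apply mul_le_mul_of_nonneg_left
            (mul_le_mul_of_nonneg_right hub (sq_nonneg _)) (by positivity)
      _ = (1 / min 2 q) * ((((2:ℝ) ^ (q - 2) + 1) * (κ + a) ^ (q - 2)) * (lam * a) ^ 2)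
            * (max 2 q * (1 / max 2 q)) := by rw [s2, mul_one]
      _ = (max 2 q * (1 / min 2 q) * ((2:ℝ) ^ (q - 2) + 1)) * lam ^ 2
            * (1 / max 2 q * ((κ + a) ^ (q - 2) * a ^ 2)) := by ring
      _ ≤ (max 2 q * (1 / min 2 q) * ((2:ℝ) ^ (q - 2) + 1)) * lam ^ 2 * R κ q a := by
          apply mul_le_mul_of_nonneg_left hρ_lo
          have : (0:ℝ) < max 2 q * (1 / min 2 q) * ((2:ℝ) ^ (q - 2) + 1) := by
            apply mul_pos (mul_pos (by linarith) (by positivity)) (by positivity)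
          positivity

end Stmt16

namespace Stmt16

lemma key_ib {q κ a lam : ℝ} (hq : 1 < q) (hκ : 0 ≤ κ) (ha : 0 ≤ a) (hba : 0 < κ + a)
    (hl0 : 0 ≤ lam) (hl1 : lam ≤ 1) :
    (min 2 q * eps q / 2) * lam ^ 2 * R κ q a
        ≤ rhoShiftConj κ q a (lam * ((κ + a) ^ (q - 2) * a)) ∧
    rhoShiftConj κ q a (lam * ((κ + a) ^ (q - 2) * a))
        ≤ (max 2 q * (((1 + Nq q) ^ (q - 2) + 1) * (Nq q) ^ 2)) * lam ^ 2 * R κ q a := by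
  have hmin1 : 1 < min 2 q := lt_min one_lt_two hq
  have hmax : (2:ℝ) ≤ max 2 q := le_max_left _ _
  have hP0 : 0 < (κ + a) ^ (q - 2) := Real.rpow_pos_of_pos hba _
  have hk2 : (0:ℝ) < (2:ℝ) ^ (q - 2) := Real.rpow_pos_of_pos two_pos _
  have hA0 : 0 ≤ lam * a := mul_nonneg hl0 ha
  have hAa : lam * a ≤ a := by nlinarith
  have hAb : lam * a ≤ κ + a := by linarith
  have s1 : min 2 q * (1 / min 2 q) = 1 := mul_one_div_cancel (by linarith)
  have s2 : max 2 q * (1 / max 2 q) = 1 := mul_one_div_cancel (by linarith)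
  have hN1 : 1 ≤ Nq q := le_max_left _ _
  have hNpos : 0 < Nq q := by linarith
  have ht' : 0 ≤ Nq q * (lam * a) := by positivity
  have hNq2 : 0 < (1 + Nq q) ^ (q - 2) := Real.rpow_pos_of_pos (by linarith) _
  have heps1 : eps q ≤ 1 := min_le_left _ _
  have heps_pos : 0 < eps q := by
    apply lt_min one_pos
    apply div_pos (by linarith) (by positivity)
  have hsA : eps q * (lam * a) ≤ lam * a := mul_le_of_le_one_left hA0 heps1
  have hs0 : 0 ≤ eps q * (lam * a) := mul_nonneg heps_pos.le hA0
  -- u ≤ ρ'_a(N * lam * a)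
  have hu_le : lam * ((κ + a) ^ (q - 2) * a) ≤ g (κ + a) q (Nq q * (lam * a)) := by
    rcases le_total q 2 with h2 | h2
    · have hNq : (2:ℝ) ^ (2 - q) ≤ Nq q ^ (q - 1) := by
        have e : ((2:ℝ) ^ ((2 - q) / (q - 1))) ^ (q - 1) = (2:ℝ) ^ (2 - q) := by
          rw [← Real.rpow_mul (by norm_num : (0:ℝ) ≤ 2),
            div_mul_cancel₀ _ (sub_ne_zero.mpr (ne_of_gt hq))]
        calc (2:ℝ) ^ (2 - q) = ((2:ℝ) ^ ((2 - q) / (q - 1))) ^ (q - 1) := e.symm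
          _ ≤ Nq q ^ (q - 1) :=
            Real.rpow_le_rpow (by positivity) (le_max_right _ _) (by linarith)
      have h1 : (2 * Nq q * (κ + a)) ^ (q - 2) ≤ (κ + a + Nq q * (lam * a)) ^ (q - 2) := by
        apply Real.rpow_le_rpow_of_nonpos (by positivity) ?_ (by linarith)
        have hNA : Nq q * (lam * a) ≤ Nq q * (κ + a) := mul_le_mul_of_nonneg_left hAb hNpos.le
        nlinarith
      have h2' : (2 * Nq q * (κ + a)) ^ (q - 2)
          = (2:ℝ) ^ (q - 2) * Nq q ^ (q - 2) * (κ + a) ^ (q - 2) := by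
        rw [Real.mul_rpow (by positivity) hba.le, Real.mul_rpow (by norm_num) hNpos.le]
      have h3 : Nq q ^ (q - 2) * Nq q = Nq q ^ (q - 1) := by
        rw [show q - 1 = q - 2 + 1 by ring, Real.rpow_add hNpos, Real.rpow_one]
      have h4 : (2:ℝ) ^ (q - 2) * (2:ℝ) ^ (2 - q) = 1 := by
        rw [← Real.rpow_add two_pos]; norm_num
      show lam * ((κ + a) ^ (q - 2) * a)
          ≤ (κ + a + Nq q * (lam * a)) ^ (q - 2) * (Nq q * (lam * a))
      calc lam * ((κ + a) ^ (q - 2) * a)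
          = ((2:ℝ) ^ (q - 2) * (2:ℝ) ^ (2 - q)) * ((κ + a) ^ (q - 2) * (lam * a)) := by
            rw [h4]; ring
        _ ≤ ((2:ℝ) ^ (q - 2) * Nq q ^ (q - 1)) * ((κ + a) ^ (q - 2) * (lam * a)) := by
            apply mul_le_mul_of_nonneg_right
              (mul_le_mul_of_nonneg_left hNq hk2.le) (by positivity)
        _ = ((2:ℝ) ^ (q - 2) * Nq q ^ (q - 2) * (κ + a) ^ (q - 2)) * (Nq q * (lam * a)) := by
            rw [← h3]; ring
        _ = (2 * Nq q * (κ + a)) ^ (q - 2) * (Nq q * (lam * a)) := by rw [h2']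
        _ ≤ _ := mul_le_mul_of_nonneg_right h1 ht'
    · have h1 : (κ + a) ^ (q - 2) ≤ (κ + a + Nq q * (lam * a)) ^ (q - 2) :=
        Real.rpow_le_rpow hba.le (by linarith) (by linarith)
      show lam * ((κ + a) ^ (q - 2) * a)
          ≤ (κ + a + Nq q * (lam * a)) ^ (q - 2) * (Nq q * (lam * a))
      calc lam * ((κ + a) ^ (q - 2) * a) = (κ + a) ^ (q - 2) * (1 * (lam * a)) := by ring
        _ ≤ (κ + a) ^ (q - 2) * (Nq q * (lam * a)) :=
            mul_le_mul_of_nonneg_left (mul_le_mul_of_nonneg_right hN1 hA0) hP0.le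
        _ ≤ _ := mul_le_mul_of_nonneg_right h1 ht'
  have hρ_lo := le_R hq hκ ha
  have hρ_hi := R_le hq hκ ha
  constructor
  · -- lower bound
    have hmem := conj_ge (s := eps q * (lam * a)) hq hba.le ht' hu_le hs0
    have hRe := R_le hq hba.le hs0
    have hub2 : (κ + a + eps q * (lam * a)) ^ (q - 2)
        ≤ ((2:ℝ) ^ (q - 2) + 1) * (κ + a) ^ (q - 2) := by
      rcases le_total q 2 with h2 | h2
      · have h1 : (κ + a + eps q * (lam * a)) ^ (q - 2) ≤ (κ + a) ^ (q - 2) :=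
          Real.rpow_le_rpow_of_nonpos hba (by linarith) (by linarith)
        nlinarith [hP0, hk2]
      · have h1 : (κ + a + eps q * (lam * a)) ^ (q - 2) ≤ (2 * (κ + a)) ^ (q - 2) :=
          Real.rpow_le_rpow (by linarith) (by linarith) (by linarith)
        have h2' : (2 * (κ + a)) ^ (q - 2) = (2:ℝ) ^ (q - 2) * (κ + a) ^ (q - 2) :=
          Real.mul_rpow (by norm_num) hba.le
        nlinarith [hP0]
    have hRe2 : R (κ + a) q (eps q * (lam * a))
        ≤ ((1 / min 2 q) * ((2:ℝ) ^ (q - 2) + 1) * eps q)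
          * (eps q * ((κ + a) ^ (q - 2) * (lam ^ 2 * a ^ 2))) := by
      calc R (κ + a) q (eps q * (lam * a))
          ≤ (1 / min 2 q) * ((κ + a + eps q * (lam * a)) ^ (q - 2) * (eps q * (lam * a)) ^ 2) :=
            hRe
        _ ≤ (1 / min 2 q)
            * ((((2:ℝ) ^ (q - 2) + 1) * (κ + a) ^ (q - 2)) * (eps q * (lam * a)) ^ 2) := by
            apply mul_le_mul_of_nonneg_left
              (mul_le_mul_of_nonneg_right hub2 (sq_nonneg _)) (by positivity)
        _ = _ := by ring
    have hcancel : (1 / min 2 q) * ((2:ℝ) ^ (q - 2) + 1)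
        * (min 2 q / (2 * ((2:ℝ) ^ (q - 2) + 1))) = 1 / 2 := by
      field_simp
    have heps2 : (1 / min 2 q) * ((2:ℝ) ^ (q - 2) + 1) * eps q ≤ 1 / 2 := by
      have h5 := min_le_right 1 (min 2 q / (2 * ((2:ℝ) ^ (q - 2) + 1)))
      have h6 : (0:ℝ) < (1 / min 2 q) * ((2:ℝ) ^ (q - 2) + 1) := by positivity
      calc (1 / min 2 q) * ((2:ℝ) ^ (q - 2) + 1) * eps q
          ≤ (1 / min 2 q) * ((2:ℝ) ^ (q - 2) + 1)
            * (min 2 q / (2 * ((2:ℝ) ^ (q - 2) + 1))) :=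
            mul_le_mul_of_nonneg_left h5 h6.le
        _ = 1 / 2 := hcancel
    have hQ0 : 0 ≤ eps q * ((κ + a) ^ (q - 2) * (lam ^ 2 * a ^ 2)) := by positivity
    have h7 := mul_le_mul_of_nonneg_right heps2 hQ0
    have helem : (eps q / 2) * ((κ + a) ^ (q - 2) * (lam ^ 2 * a ^ 2))
        ≤ eps q * (lam * a) * (lam * ((κ + a) ^ (q - 2) * a))
          - R (κ + a) q (eps q * (lam * a)) := by linarith [hRe2, h7]
    calc (min 2 q * eps q / 2) * lam ^ 2 * R κ q a
        ≤ (min 2 q * eps q / 2) * lam ^ 2 * (1 / min 2 q * ((κ + a) ^ (q - 2) * a ^ 2)) := by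
          apply mul_le_mul_of_nonneg_left hρ_hi
          apply mul_nonneg (div_nonneg (mul_nonneg (by linarith) heps_pos.le) (by norm_num))
            (sq_nonneg lam)
      _ = (eps q / 2) * ((κ + a) ^ (q - 2) * (lam ^ 2 * a ^ 2)) * (min 2 q * (1 / min 2 q)) := by
          ring
      _ = (eps q / 2) * ((κ + a) ^ (q - 2) * (lam ^ 2 * a ^ 2)) := by rw [s1, mul_one]
      _ ≤ eps q * (lam * a) * (lam * ((κ + a) ^ (q - 2) * a))
            - R (κ + a) q (eps q * (lam * a)) := helem
      _ ≤ rhoShiftConj κ q a (lam * ((κ + a) ^ (q - 2) * a)) := hmem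
  · -- upper bound
    have hconj_le := conj_le hq hba.le ht' hu_le
    have hR0' : 0 ≤ R (κ + a) q (Nq q * (lam * a)) := R_nonneg hba.le ht'
    have hgb : (κ + a + Nq q * (lam * a)) ^ (q - 2)
        ≤ ((1 + Nq q) ^ (q - 2) + 1) * (κ + a) ^ (q - 2) := by
      rcases le_total q 2 with h2 | h2
      · have h1 : (κ + a + Nq q * (lam * a)) ^ (q - 2) ≤ (κ + a) ^ (q - 2) :=
          Real.rpow_le_rpow_of_nonpos hba (by linarith) (by linarith)
        nlinarith [hNq2, hP0]
      · have hNA : Nq q * (lam * a) ≤ Nq q * (κ + a) := mul_le_mul_of_nonneg_left hAb hNpos.le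
        have h1 : (κ + a + Nq q * (lam * a)) ^ (q - 2) ≤ ((1 + Nq q) * (κ + a)) ^ (q - 2) :=
          Real.rpow_le_rpow (by linarith) (by nlinarith) (by linarith)
        have h2' : ((1 + Nq q) * (κ + a)) ^ (q - 2) = (1 + Nq q) ^ (q - 2) * (κ + a) ^ (q - 2) :=
          Real.mul_rpow (by linarith) hba.le
        nlinarith [hP0]
    have htg : Nq q * (lam * a) * g (κ + a) q (Nq q * (lam * a))
        = (κ + a + Nq q * (lam * a)) ^ (q - 2) * (Nq q * (lam * a)) ^ 2 := by unfold g; ring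
    have hCpos : (0:ℝ) ≤ max 2 q * (((1 + Nq q) ^ (q - 2) + 1) * Nq q ^ 2) * lam ^ 2 :=
      mul_nonneg (mul_nonneg (by linarith)
        (mul_nonneg (by linarith) (sq_nonneg _))) (sq_nonneg lam)
    calc rhoShiftConj κ q a (lam * ((κ + a) ^ (q - 2) * a))
        ≤ Nq q * (lam * a) * g (κ + a) q (Nq q * (lam * a))
            - R (κ + a) q (Nq q * (lam * a)) := hconj_le
      _ ≤ (κ + a + Nq q * (lam * a)) ^ (q - 2) * (Nq q * (lam * a)) ^ 2 := by
          rw [← htg]; linarith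
      _ ≤ (((1 + Nq q) ^ (q - 2) + 1) * (κ + a) ^ (q - 2)) * (Nq q * (lam * a)) ^ 2 :=
          mul_le_mul_of_nonneg_right hgb (sq_nonneg _)
      _ = (((1 + Nq q) ^ (q - 2) + 1) * (κ + a) ^ (q - 2)) * (Nq q * (lam * a)) ^ 2
            * (max 2 q * (1 / max 2 q)) := by rw [s2, mul_one]
      _ = (max 2 q * (((1 + Nq q) ^ (q - 2) + 1) * Nq q ^ 2)) * lam ^ 2
            * (1 / max 2 q * ((κ + a) ^ (q - 2) * a ^ 2)) := by ring
      _ ≤ (max 2 q * (((1 + Nq q) ^ (q - 2) + 1) * Nq q ^ 2)) * lam ^ 2 * R κ q a :=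
          mul_le_mul_of_nonneg_left hρ_lo hCpos

end Stmt16

open Stmt16 in
/-- (Lemma `lem:shifted2` for constant exponent `q`.)
Let `q ∈ (1,∞)` and `κ ≥ 0`. There are `0 < c ≤ C < ∞` depending only on `q` such that:
(i) for all `a ≥ 0` with `κ + a > 0` and all `λ ∈ [0,1]`,
`ρ_a(λ a) ∼ λ² ρ(a) ∼ (ρ_a)*(λ ρ'(a))` where `ρ'(a) = (κ+a)^{q−2} a`; and
(ii) for all `a, t ≥ 0` with `κ + a + t > 0`, `(ρ_a)*(ρ'_a(t)) ∼ ρ_a(t)` where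
`ρ'_a(t) = (κ+a+t)^{q−2} t`. -/
theorem stmt16 (q : ℝ) (hq : 1 < q) :
    ∃ c C : ℝ, 0 < c ∧ c ≤ C ∧ ∀ κ : ℝ, 0 ≤ κ →
      ((∀ a : ℝ, 0 ≤ a → 0 < κ + a → ∀ lam : ℝ, lam ∈ Set.Icc (0:ℝ) 1 →
        (c * lam ^ 2 * rhoShift κ q 0 a ≤ rhoShift κ q a (lam * a) ∧
          rhoShift κ q a (lam * a) ≤ C * lam ^ 2 * rhoShift κ q 0 a) ∧
        (c * lam ^ 2 * rhoShift κ q 0 a ≤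
            rhoShiftConj κ q a (lam * ((κ + a) ^ (q - 2) * a)) ∧
          rhoShiftConj κ q a (lam * ((κ + a) ^ (q - 2) * a)) ≤
            C * lam ^ 2 * rhoShift κ q 0 a)) ∧
      (∀ a t : ℝ, 0 ≤ a → 0 ≤ t → 0 < κ + a + t →
        c * rhoShift κ q a t ≤ rhoShiftConj κ q a ((κ + a + t) ^ (q - 2) * t) ∧
        rhoShiftConj κ q a ((κ + a + t) ^ (q - 2) * t) ≤ C * rhoShift κ q a t)) := by
  have hmin1 : 1 < min 2 q := lt_min one_lt_two hq
  have hmax : (2:ℝ) ≤ max 2 q := le_max_left _ _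
  have hk2 : (0:ℝ) < (2:ℝ) ^ (q - 2) := Real.rpow_pos_of_pos two_pos _
  have hN1 : 1 ≤ Nq q := le_max_left _ _
  have hNq2 : 0 < (1 + Nq q) ^ (q - 2) := Real.rpow_pos_of_pos (by linarith) _
  have heps_pos : 0 < eps q := by
    apply lt_min one_pos
    apply div_pos (by linarith) (by positivity)
  set c1 : ℝ := min 2 q * (1 / max 2 q) * min 1 ((2:ℝ) ^ (q - 2)) with hc1_def
  set c2 : ℝ := min 2 q * eps q / 2 with hc2_def
  set c3 : ℝ := min 2 q - 1 with hc3_def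
  set C1 : ℝ := max 2 q * (1 / min 2 q) * ((2:ℝ) ^ (q - 2) + 1) with hC1_def
  set C2 : ℝ := max 2 q * (((1 + Nq q) ^ (q - 2) + 1) * Nq q ^ 2) with hC2_def
  have hc1 : 0 < c1 :=
    mul_pos (mul_pos (by linarith) (by positivity)) (lt_min one_pos hk2)
  have hc2 : 0 < c2 := by
    apply div_pos (mul_pos (by linarith) heps_pos) (by norm_num)
  have hc3 : 0 < c3 := by rw [hc3_def]; linarith
  refine ⟨min (min c1 c2) c3, max (max C1 C2) (max 2 q), ?_, ?_, ?_⟩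
  · exact lt_min (lt_min hc1 hc2) hc3
  · calc min (min c1 c2) c3 ≤ c3 := min_le_right _ _
      _ ≤ max 2 q := by rw [hc3_def]; have := min_le_left 2 q; linarith
      _ ≤ max (max C1 C2) (max 2 q) := le_max_right _ _
  intro κ hκ
  have hcle1 : min (min c1 c2) c3 ≤ c1 := le_trans (min_le_left _ _) (min_le_left _ _)
  have hcle2 : min (min c1 c2) c3 ≤ c2 := le_trans (min_le_left _ _) (min_le_right _ _)
  have hcle3 : min (min c1 c2) c3 ≤ c3 := min_le_right _ _
  have hCge1 : C1 ≤ max (max C1 C2) (max 2 q) := le_trans (le_max_left _ _) (le_max_left _ _)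
  have hCge2 : C2 ≤ max (max C1 C2) (max 2 q) := le_trans (le_max_right _ _) (le_max_left _ _)
  have hCge3 : max 2 q ≤ max (max C1 C2) (max 2 q) := le_max_right _ _
  constructor
  · intro a ha hba lam hlam
    obtain ⟨hl0, hl1⟩ := hlam
    have e0 : rhoShift κ q 0 a = R κ q a := by rw [rhoShift_eq, add_zero]
    have e1 : rhoShift κ q a (lam * a) = R (κ + a) q (lam * a) := rhoShift_eq κ q a _
    have hρ0 : 0 ≤ R κ q a := R_nonneg hκ ha
    have hY : 0 ≤ lam ^ 2 * R κ q a := mul_nonneg (sq_nonneg lam) hρ0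
    have hia := key_ia hq hκ ha hba hl0 hl1
    have hib := key_ib hq hκ ha hba hl0 hl1
    refine ⟨⟨?_, ?_⟩, ?_, ?_⟩
    · rw [e0, e1]; nlinarith [hia.1, hcle1, hY]
    · rw [e0, e1]; nlinarith [hia.2, hCge1, hY]
    · rw [e0]; nlinarith [hib.1, hcle2, hY]
    · rw [e0]; nlinarith [hib.2, hCge2, hY]
  · intro a t ha ht hbt
    have e2 : rhoShift κ q a t = R (κ + a) q t := rhoShift_eq κ q a t
    have hρ0 : 0 ≤ R (κ + a) q t := R_nonneg (add_nonneg hκ ha) ht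
    have hii := key_ii hq hκ ha ht
    constructor
    · rw [e2]; nlinarith [hii.1, hcle3, hρ0]
    · rw [e2]; nlinarith [hii.2, hCge3, hρ0]
end
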